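/- arXiv:2203.02362 — 7 statements merged into one kernel-verified Lean document; each statement's English description precedes it below -/
import Mathlib

section
/- Let G be a finite group whose power graph is a cograph, and let x, w ∈ G be commuting elements with |x| = p and |w| = q for distinct primes p and q. Then every element of q-power order in the centralizer C_G(x) lies in the cyclic subgroup ⟨w⟩. -/
/-- The power graph of a group: `g` and `h` are adjacent iff they are distinct and
one is a power (integer power) of the other. -/
def powerGraph (G : Type*) [Group G] : SimpleGraph G where
  Adj g h := g ≠ h ∧ (h ∈ Subgroup.zpowers g ∨ g ∈ Subgroup.zpowers h)
  symm := ⟨fun g h ⟨hne, hor⟩ => ⟨hne.symm, hor.symm⟩⟩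
  loopless := ⟨fun g h => h.1 rfl⟩

/-- `a, b, c, d` induce a path on four vertices in `Γ`. -/
def InducedP4 {V : Type*} (Γ : SimpleGraph V) (a b c d : V) : Prop :=
  a ≠ c ∧ a ≠ d ∧ b ≠ d ∧ Γ.Adj a b ∧ Γ.Adj b c ∧ Γ.Adj c d ∧
    ¬Γ.Adj a c ∧ ¬Γ.Adj a d ∧ ¬Γ.Adj b d

/-- A graph is a cograph iff it has no induced `P4`. -/
def IsCograph {V : Type*} (Γ : SimpleGraph V) : Prop :=
  ∀ a b c d : V, ¬ InducedP4 Γ a b c d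

/-- The prime graph (Gruenberg–Kegel graph) of a group, as a graph on `ℕ`. -/
def primeGraph (G : Type*) [Group G] : SimpleGraph ℕ where
  Adj p q := p ≠ q ∧ p.Prime ∧ q.Prime ∧ ∃ g : G, orderOf g = p * q
  symm := ⟨fun p q ⟨hne, hp, hq, g, hg⟩ => ⟨hne.symm, hq, hp, g, by rwa [Nat.mul_comm]⟩⟩
  loopless := ⟨fun p h => h.1 rfl⟩

/-- If `x` and `v` commute and their orders are coprime, then `x ∈ ⟨x*v⟩`. -/
lemma aux_mem_mul {G : Type*} [Group G] {x v : G} (h : Commute x v)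
    (hc : Nat.Coprime (orderOf v) (orderOf x)) : x ∈ Subgroup.zpowers (x * v) := by
  set a := orderOf v
  set b := orderOf x
  have hb := Nat.gcd_eq_gcd_ab a b
  rw [hc] at hb
  refine Subgroup.mem_zpowers_iff.mpr ⟨(a : ℤ) * Nat.gcdA a b, ?_⟩
  have hx1 : x ^ ((b : ℤ) * Nat.gcdB a b) = 1 := by
    rw [zpow_mul, zpow_natCast, pow_orderOf_eq_one, one_zpow]
  have hv1 : v ^ ((a : ℤ) * Nat.gcdA a b) = 1 := by
    rw [zpow_mul, zpow_natCast, pow_orderOf_eq_one, one_zpow]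
  rw [h.mul_zpow, hv1, mul_one]
  calc x ^ ((a : ℤ) * Nat.gcdA a b)
      = x ^ ((a : ℤ) * Nat.gcdA a b) * x ^ ((b : ℤ) * Nat.gcdB a b) := by rw [hx1, mul_one]
    _ = x ^ ((a : ℤ) * Nat.gcdA a b + (b : ℤ) * Nat.gcdB a b) := by rw [zpow_add]
    _ = x := by rw [← hb]; norm_num

/-- Key cancellation lemma: if `g = x^a * z^b` with `x, z` commuting, `x` of prime
order `p`, `z^q = 1`, `g^q = 1` and `p ∤ q`, then `g ∈ ⟨z⟩`. -/
lemma aux_key {G : Type*} [Group G] {x z g : G} {p q : ℕ} (hp : p.Prime)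
    (hxz : Commute x z) (hx : orderOf x = p) (hzq : z ^ q = 1)
    (hpq : ¬ p ∣ q) {a b : ℤ} (hg : g = x ^ a * z ^ b) (hgq : g ^ q = 1) :
    g ∈ Subgroup.zpowers z := by
  have hcomm : Commute (x ^ a) (z ^ b) := hxz.zpow_zpow a b
  have hz1 : z ^ (b * q) = 1 := by
    rw [mul_comm, zpow_mul, zpow_natCast, hzq, one_zpow]
  have hx1 : x ^ (a * q) = 1 := by
    have : (x ^ a * z ^ b) ^ q = 1 := by rw [← hg]; exact hgq
    rw [hcomm.mul_pow, ← zpow_natCast (x ^ a), ← zpow_natCast (z ^ b), ← zpow_mul, ← zpow_mul,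
      hz1, mul_one] at this
    exact this
  have hdvd : (p : ℤ) ∣ a * q := by
    rw [← hx, orderOf_dvd_iff_zpow_eq_one]; exact hx1
  have hpa : (p : ℤ) ∣ a := by
    rcases (Nat.prime_iff_prime_int.mp hp).dvd_mul.mp hdvd with h' | h'
    · exact h'
    · exact absurd (Int.natCast_dvd_natCast.mp h') hpq
  have hxa : x ^ a = 1 := by
    rw [← orderOf_dvd_iff_zpow_eq_one, hx]; exact hpa
  exact Subgroup.mem_zpowers_iff.mpr ⟨b, by rw [hg, hxa, one_mul]⟩

/-- If `y` has prime order and `w ∈ ⟨y⟩` with `w ≠ 1`, then `y ∈ ⟨w⟩`. -/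
lemma aux_sym {G : Type*} [Group G] {w y : G} (hq : (orderOf y).Prime)
    (h : w ∈ Subgroup.zpowers y) (hw : w ≠ 1) : y ∈ Subgroup.zpowers w := by
  obtain ⟨m, hm⟩ := Subgroup.mem_zpowers_iff.mp h
  have hnd : ¬ ((orderOf y : ℤ) ∣ m) := by
    intro hd
    have h1 : y ^ m = 1 := orderOf_dvd_iff_zpow_eq_one.mp hd
    rw [hm] at h1
    exact hw h1
  have hcop : IsCoprime ((orderOf y : ℤ)) m :=
    ((Nat.prime_iff_prime_int.mp hq).coprime_iff_not_dvd).mpr hnd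
  obtain ⟨u, v, huv⟩ := hcop
  refine Subgroup.mem_zpowers_iff.mpr ⟨v, ?_⟩
  have h1 : y ^ ((orderOf y : ℤ) * u) = 1 := by
    rw [zpow_mul, zpow_natCast, pow_orderOf_eq_one, one_zpow]
  calc w ^ v = (y ^ m) ^ v := by rw [hm]
    _ = y ^ (v * m) := by rw [← zpow_mul, mul_comm]
    _ = y ^ ((orderOf y : ℤ) * u) * y ^ (v * m) := by rw [h1, one_mul]
    _ = y ^ ((orderOf y : ℤ) * u + v * m) := by rw [zpow_add]
    _ = y := by rw [mul_comm (orderOf y : ℤ) u, huv, zpow_one]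

theorem power_of_q_in_centralizer_mem_zpowers
    {G : Type*} [Group G] [Finite G]
    (hco : IsCograph (powerGraph G))
    {p q : ℕ} (hp : p.Prime) (hq : q.Prime) (hpq : p ≠ q)
    {x w : G} (hxw : Commute x w) (hx : orderOf x = p) (hw : orderOf w = q) :
    ∀ y ∈ Subgroup.centralizer ({x} : Set G), (∃ k : ℕ, orderOf y = q ^ k) →
      y ∈ Subgroup.zpowers w := by
  rintro y hy ⟨k, hyk⟩
  have hxy : Commute x y := (Subgroup.mem_centralizer_singleton_iff.mp hy).symm
  have hqp : ¬ q ∣ p := fun h => hpq ((Nat.prime_dvd_prime_iff_eq hq hp).mp h).symm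
  have hpq' : ¬ p ∣ q := fun h => hpq ((Nat.prime_dvd_prime_iff_eq hp hq).mp h)
  have hxne1 : x ≠ 1 := by
    intro h; rw [h, orderOf_one] at hx; exact hp.ne_one hx.symm
  have hwne1 : w ≠ 1 := by
    intro h; rw [h, orderOf_one] at hw; exact hq.ne_one hw.symm
  have hcqp : Nat.Coprime q p := (Nat.coprime_primes hq hp).mpr (Ne.symm hpq)
  have hcpq : Nat.Coprime p q := (Nat.coprime_primes hp hq).mpr hpq
  by_cases hk2 : 2 ≤ k
  · -- no element of order `q ^ k`, `k ≥ 2`, can commute with `x`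
    exfalso
    set v := y ^ (q ^ (k - 1)) with hv
    have hvy : v ∈ Subgroup.zpowers y := Subgroup.npow_mem_zpowers y _
    have hov : orderOf v = q := by
      rw [hv, orderOf_pow, hyk,
        Nat.gcd_eq_right (pow_dvd_pow q (Nat.sub_le k 1)),
        Nat.pow_div (Nat.sub_le k 1) hq.pos]
      have h1 : k - (k - 1) = 1 := by omega
      rw [h1, pow_one]
    have hxv : Commute x v := hxy.pow_right _
    have hvne1 : v ≠ 1 := by
      intro h; rw [h, orderOf_one] at hov; exact hq.ne_one hov.symm
    have hyne1 : y ≠ 1 := by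
      intro h; rw [h, orderOf_one] at hyk
      have h2 : q ∣ 1 := by rw [hyk]; exact dvd_pow_self q (by omega : k ≠ 0)
      exact hq.ne_one (Nat.dvd_one.mp h2)
    have hxmem_y : x ∉ Subgroup.zpowers y := by
      intro h
      have := orderOf_dvd_of_mem_zpowers h
      rw [hx, hyk] at this
      exact hpq' (hp.dvd_of_dvd_pow this)
    have hm1 : x ∈ Subgroup.zpowers (x * v) :=
      aux_mem_mul hxv (by rw [hov, hx]; exact hcqp)
    have hm2 : v ∈ Subgroup.zpowers (x * v) := by
      have := aux_mem_mul hxv.symm (by rw [hov, hx]; exact hcpq)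
      rwa [← hxv.eq] at this
    have hne_xv : x ≠ v := by
      intro h; rw [← h, hx] at hov; exact hpq hov
    have hne_xy : x ≠ y := fun h => hxmem_y (h ▸ Subgroup.mem_zpowers x)
    have hne_xvy : x * v ≠ y := by
      intro h
      apply hxmem_y
      have h2 : x = y * v⁻¹ := by rw [← h, mul_inv_cancel_right]
      rw [h2]
      exact Subgroup.mul_mem _ (Subgroup.mem_zpowers y) (Subgroup.inv_mem _ hvy)
    have hoxy : orderOf (x * v) = p * q := by
      rw [Commute.orderOf_mul_eq_mul_orderOf_of_coprime hxv (by rw [hx, hov]; exact hcpq),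
        hx, hov]
    refine hco x (x * v) v y ⟨hne_xv, hne_xy, hne_xvy, ?_, ?_, ?_, ?_, ?_, ?_⟩
    · exact ⟨fun h => hvne1 (left_eq_mul.mp h), Or.inr hm1⟩
    · exact ⟨fun h => hxne1 (mul_eq_right.mp h), Or.inl hm2⟩
    · refine ⟨?_, Or.inr hvy⟩
      intro h
      have h2 : q ^ 1 = q ^ k := by
        rw [pow_one]
        calc q = orderOf v := hov.symm
          _ = orderOf y := by rw [h]
          _ = q ^ k := hyk
      exact absurd (Nat.pow_right_injective hq.two_le h2) (by omega)
    · rintro ⟨-, h | h⟩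
      · have := orderOf_dvd_of_mem_zpowers h; rw [hov, hx] at this; exact hqp this
      · have := orderOf_dvd_of_mem_zpowers h; rw [hov, hx] at this; exact hpq' this
    · rintro ⟨-, h | h⟩
      · have := orderOf_dvd_of_mem_zpowers h
        rw [hyk, hx] at this
        exact hqp (dvd_trans (dvd_pow_self q (by omega : k ≠ 0)) this)
      · exact hxmem_y h
    · rintro ⟨-, h | h⟩
      · have := orderOf_dvd_of_mem_zpowers h
        rw [hyk, hoxy] at this
        have h2 : q * q ∣ q * p := by
          calc q * q = q ^ 2 := (sq q).symm
            _ ∣ q ^ k := pow_dvd_pow q hk2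
            _ ∣ p * q := this
            _ = q * p := mul_comm p q
        exact hqp ((Nat.mul_dvd_mul_iff_left hq.pos).mp h2)
      · apply hxmem_y
        have h2 := Subgroup.mul_mem _ h (Subgroup.inv_mem _ hvy)
        rwa [mul_inv_cancel_right] at h2
  · -- k = 0 or k = 1
    by_cases hk0 : k = 0
    · rw [hk0, pow_zero] at hyk
      rw [orderOf_eq_one_iff.mp hyk]
      exact Subgroup.one_mem _
    have hk1 : k = 1 := by omega
    rw [hk1, pow_one] at hyk
    by_contra hyw
    have hyne1 : y ≠ 1 := by
      intro h; rw [h, orderOf_one] at hyk; exact hq.ne_one hyk.symm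
    have hwy : w ∉ Subgroup.zpowers y := by
      intro h
      exact hyw (aux_sym (by rw [hyk]; exact hq) h hwne1)
    have hyq1 : y ^ q = 1 := by rw [← hyk]; exact pow_orderOf_eq_one y
    have hwq1 : w ^ q = 1 := by rw [← hw]; exact pow_orderOf_eq_one w
    have hm1 : w ∈ Subgroup.zpowers (x * w) := by
      have := aux_mem_mul hxw.symm (by rw [hx, hw]; exact hcpq)
      rwa [← hxw.eq] at this
    have hm2 : x ∈ Subgroup.zpowers (x * w) :=
      aux_mem_mul hxw (by rw [hw, hx]; exact hcqp)
    have hm3 : x ∈ Subgroup.zpowers (x * y) :=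
      aux_mem_mul hxy (by rw [hyk, hx]; exact hcqp)
    have hkey_w_xy : w ∉ Subgroup.zpowers (x * y) := by
      intro h
      obtain ⟨m, hm⟩ := Subgroup.mem_zpowers_iff.mp h
      refine hwy (aux_key hp hxy hx hyq1 hpq' (a := m) (b := m) ?_ hwq1)
      rw [← hm, hxy.mul_zpow]
    refine hco w (x * w) x (x * y) ⟨?_, ?_, ?_, ?_, ?_, ?_, ?_, ?_, ?_⟩
    · intro h; rw [h, hx] at hw; exact hpq hw
    · intro h
      refine hkey_w_xy (h ▸ Subgroup.mem_zpowers _)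
    · intro h
      have h2 : w = y := mul_left_cancel h
      exact hwy (h2 ▸ Subgroup.mem_zpowers y)
    · exact ⟨fun h => hxne1 (right_eq_mul.mp h), Or.inr hm1⟩
    · exact ⟨fun h => hwne1 (mul_eq_left.mp h), Or.inl hm2⟩
    · exact ⟨fun h => hyne1 (left_eq_mul.mp h), Or.inr hm3⟩
    · rintro ⟨-, h | h⟩
      · have := orderOf_dvd_of_mem_zpowers h; rw [hx, hw] at this; exact hpq' this
      · have := orderOf_dvd_of_mem_zpowers h; rw [hx, hw] at this; exact hqp this
    · rintro ⟨-, h | h⟩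
      · have := orderOf_dvd_of_mem_zpowers h
        rw [Commute.orderOf_mul_eq_mul_orderOf_of_coprime hxy
          (by rw [hx, hyk]; exact hcpq), hx, hyk, hw] at this
        exact hpq' (dvd_trans (dvd_mul_right p q) this)
      · exact hkey_w_xy h
    · rintro ⟨-, h | h⟩
      · -- x * y ∈ zpowers (x * w)
        obtain ⟨m, hm⟩ := Subgroup.mem_zpowers_iff.mp h
        refine hyw (aux_key hp hxw hx hwq1 hpq' (a := m - 1) (b := m) ?_ hyq1)
        have h1 : (x * w) ^ m = x ^ m * w ^ m := hxw.mul_zpow m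
        calc y = x⁻¹ * (x * y) := by group
          _ = x⁻¹ * (x ^ m * w ^ m) := by rw [← hm, h1]
          _ = x ^ (m - 1) * w ^ m := by rw [zpow_sub, zpow_one]; group
      · -- x * w ∈ zpowers (x * y)
        obtain ⟨m, hm⟩ := Subgroup.mem_zpowers_iff.mp h
        refine hwy (aux_key hp hxy hx hyq1 hpq' (a := m - 1) (b := m) ?_ hwq1)
        have h1 : (x * y) ^ m = x ^ m * y ^ m := hxy.mul_zpow m
        calc w = x⁻¹ * (x * w) := by group
          _ = x⁻¹ * (x ^ m * y ^ m) := by rw [← hm, h1]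
          _ = x ^ (m - 1) * y ^ m := by rw [zpow_sub, zpow_one]; group
end

section
/- Let G be a finite group whose power graph is a cograph, and let x ∈ G have prime order p. If the centralizer C_G(x) is not a p-group, then x is not a p-th power in G, i.e., there is no g ∈ G with g^p = x. -/
/-- If `m` is coprime to the order of `x`, then `x` lies in the cyclic group
generated by `x ^ m`. -/
lemma mem_zpowers_pow_of_coprime {G : Type*} [Group G] [Finite G] {x : G} {m : ℕ}
    (h : (orderOf x).Coprime m) : x ∈ Subgroup.zpowers (x ^ m) := by
  have hord : orderOf (x ^ m) = orderOf x := h.orderOf_pow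
  have hle : Subgroup.zpowers (x ^ m) ≤ Subgroup.zpowers x :=
    Subgroup.zpowers_le.mpr (Subgroup.npow_mem_zpowers x m)
  have hcard : Nat.card (Subgroup.zpowers x) ≤ Nat.card (Subgroup.zpowers (x ^ m)) := by
    rw [Nat.card_zpowers, Nat.card_zpowers, hord]
  have : Subgroup.zpowers (x ^ m) = Subgroup.zpowers x :=
    Subgroup.eq_of_le_of_card_ge hle hcard
  rw [this]
  exact Subgroup.mem_zpowers x

theorem not_pth_power_of_centralizer_not_pGroup
    {G : Type*} [Group G] [Finite G]
    (hco : IsCograph (powerGraph G))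
    {p : ℕ} (hp : p.Prime) {x : G} (hx : orderOf x = p)
    (hcent : ¬ IsPGroup p (Subgroup.centralizer ({x} : Set G))) :
    ¬ ∃ g : G, g ^ p = x := by
  haveI := Fact.mk hp
  rintro ⟨g, hg⟩
  -- the order of g is p ^ 2
  have hx1 : x ≠ 1 := by
    intro h; rw [h, orderOf_one] at hx; exact hp.one_lt.ne' hx.symm
  have hdvd : orderOf g ∣ p ^ 2 :=
    orderOf_dvd_of_pow_eq_one (by rw [pow_two, pow_mul, hg, ← hx, pow_orderOf_eq_one])
  have hpdvd : p ∣ orderOf g := by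
    rw [← hx]
    exact hg ▸ orderOf_dvd_of_mem_zpowers (Subgroup.npow_mem_zpowers g p)
  have hog : orderOf g = p ^ 2 := by
    obtain ⟨i, hi2, hi⟩ := (Nat.dvd_prime_pow hp).mp hdvd
    interval_cases i
    · rw [pow_zero] at hi
      rw [hi] at hpdvd
      exact absurd (Nat.eq_one_of_dvd_one hpdvd) hp.one_lt.ne'
    · rw [pow_one] at hi
      exfalso
      apply hx1
      rw [← hg, ← hi, pow_orderOf_eq_one]
    · exact hi
  -- find an element c of prime order q ≠ p in the centralizer of x
  rw [IsPGroup.iff_orderOf] at hcent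
  push_neg at hcent
  obtain ⟨h0, hh0⟩ := hcent
  have hh0' : ∀ k, orderOf (h0 : G) ≠ p ^ k := fun k hk =>
    hh0 k ((orderOf_submonoid h0).symm.trans hk)
  set n := orderOf (h0 : G) with hn
  have hn0 : 0 < n := orderOf_pos _
  have hm1 : ordCompl[p] n ≠ 1 := by
    intro h1
    apply hh0' (n.factorization p)
    have h2 := Nat.ordProj_mul_ordCompl_eq_self n p
    rw [h1, mul_one] at h2
    exact h2.symm
  obtain ⟨q, hq, hqn, hqp⟩ : ∃ q : ℕ, q.Prime ∧ q ∣ n ∧ q ≠ p := by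
    refine ⟨(ordCompl[p] n).minFac, Nat.minFac_prime hm1,
      (Nat.minFac_dvd _).trans (Nat.ordCompl_dvd n p), fun h => ?_⟩
    have hd := Nat.minFac_dvd (ordCompl[p] n)
    rw [h] at hd
    exact Nat.not_dvd_ordCompl hp hn0.ne' hd
  set c : G := (h0 : G) ^ (n / q) with hcdef
  have hc : orderOf c = q := by
    rw [hcdef, orderOf_pow, ← hn,
      Nat.gcd_eq_right (Nat.div_dvd_of_dvd hqn), Nat.div_div_self hqn hn0.ne']
  -- x and c commute
  have hcomm0 : Commute x (h0 : G) :=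
    Subgroup.mem_centralizer_iff.mp h0.2 x rfl
  have hcomm : Commute x c := hcomm0.pow_right _
  have hpq : Nat.Coprime p q := (Nat.coprime_primes hp hq).mpr (Ne.symm hqp)
  set z : G := x * c with hzdef
  have hz : orderOf z = p * q := by
    rw [hzdef, hcomm.orderOf_mul_eq_mul_orderOf_of_coprime (by rw [hx, hc]; exact hpq),
      hx, hc]
  -- membership facts
  have hzq : z ^ q = x ^ q := by
    rw [hzdef, hcomm.mul_pow, ← hc, pow_orderOf_eq_one, mul_one]
  have hzp : z ^ p = c ^ p := by
    rw [hzdef, hcomm.mul_pow, ← hx, pow_orderOf_eq_one, one_mul]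
  have hxz : x ∈ Subgroup.zpowers z := by
    have : x ∈ Subgroup.zpowers (z ^ q) := by
      rw [hzq]; exact mem_zpowers_pow_of_coprime (by rw [hx]; exact hpq)
    exact Subgroup.zpowers_le.mpr (Subgroup.npow_mem_zpowers z q) this
  have hcz : c ∈ Subgroup.zpowers z := by
    have : c ∈ Subgroup.zpowers (z ^ p) := by
      rw [hzp]; exact mem_zpowers_pow_of_coprime (by rw [hc]; exact hpq.symm)
    exact Subgroup.zpowers_le.mpr (Subgroup.npow_mem_zpowers z p) this
  -- distinctness from distinct orders
  have hp1 : 1 < p := hp.one_lt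
  have hq1 : 1 < q := hq.one_lt
  have ne_of_ord : ∀ a b : G, orderOf a ≠ orderOf b → a ≠ b := by
    rintro a b hne rfl; exact hne rfl
  have hgx : g ≠ x := by
    apply ne_of_ord; rw [hog, hx]; intro h; nlinarith
  have hgz : g ≠ z := by
    apply ne_of_ord; rw [hog, hz]; intro h
    have h' : p * p = p * q := by rw [← pow_two]; exact h
    exact hqp (Nat.eq_of_mul_eq_mul_left hp.pos h').symm
  have hgc : g ≠ c := by
    apply ne_of_ord; rw [hog, hc]; intro h
    have hd : p ∣ q := ⟨p, by rw [← h, pow_two]⟩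
    have := (Nat.prime_dvd_prime_iff_eq hp hq).mp hd
    exact hqp this.symm
  have hxz' : x ≠ z := by
    apply ne_of_ord; rw [hx, hz]; intro h; nlinarith
  have hxc : x ≠ c := by
    apply ne_of_ord; rw [hx, hc]; intro h; exact hqp h.symm
  have hzc : z ≠ c := by
    apply ne_of_ord; rw [hz, hc]; intro h; nlinarith
  -- non-adjacency helper
  have not_adj : ∀ a b : G, ¬ orderOf b ∣ orderOf a → ¬ orderOf a ∣ orderOf b →
      ¬ (powerGraph G).Adj a b := by
    rintro a b h1 h2 ⟨-, hab | hba⟩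
    · exact h1 (orderOf_dvd_of_mem_zpowers hab)
    · exact h2 (orderOf_dvd_of_mem_zpowers hba)
  -- the induced P4: g - x - z - c
  apply hco g x z c
  refine ⟨hgz, hgc, hxc, ⟨hgx, Or.inl (hg ▸ Subgroup.npow_mem_zpowers g p)⟩,
    ⟨hxz', Or.inr hxz⟩, ⟨hzc, Or.inl hcz⟩, ?_, ?_, ?_⟩
  · -- g not adjacent to z
    apply not_adj
    · rw [hog, hz, pow_two]
      intro h
      exact hqp (Nat.prime_dvd_prime_iff_eq hq hp |>.mp
        ((Nat.mul_dvd_mul_iff_left (by omega : 0 < p)).mp h))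
    · rw [hog, hz, pow_two]
      intro h
      exact hqp ((Nat.prime_dvd_prime_iff_eq hp hq).mp
        ((Nat.mul_dvd_mul_iff_left (by omega : 0 < p)).mp h)).symm
  · -- g not adjacent to c
    apply not_adj
    · rw [hog, hc]
      intro h
      exact hqp ((Nat.prime_dvd_prime_iff_eq hq hp).mp (hq.dvd_of_dvd_pow h))
    · rw [hog, hc]
      intro h
      exact hqp ((Nat.prime_dvd_prime_iff_eq hp hq).mp
        ((dvd_pow_self p two_ne_zero).trans h)).symm
  · -- x not adjacent to c
    apply not_adj
    · rw [hx, hc]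
      intro h
      exact hqp ((Nat.prime_dvd_prime_iff_eq hq hp).mp h)
    · rw [hx, hc]
      intro h
      exact hqp ((Nat.prime_dvd_prime_iff_eq hp hq).mp h).symm
end

section
/- Let G be a finite group whose power graph is a cograph, and let x, w ∈ G be commuting elements with |x| = p, |w| = q for primes q < p. Then C_G(x) = ⟨x, w⟩ and C_G(x) is isomorphic to C_p × C_q. -/
section Helpers
variable {G : Type*} [Group G] [Finite G]

lemma self_mem_zpowers_pow {a : G} {k : ℕ} (h : Nat.Coprime k (orderOf a)) :
    a ∈ Subgroup.zpowers (a ^ k) := by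
  rcases Nat.lt_or_ge 1 (orderOf a) with hlt | hle
  · obtain ⟨t, -, ht⟩ := Nat.exists_mul_mod_eq_one_of_coprime h hlt
    have ha : ((a ^ k) ^ t : G) = a := by
      rw [← pow_mul, ← pow_mod_orderOf, ht, pow_one]
    have hm := Subgroup.pow_mem (Subgroup.zpowers (a ^ k)) (Subgroup.mem_zpowers (a ^ k)) t
    rwa [ha] at hm
  · have h1 : orderOf a = 1 := by
      have := orderOf_pos a; omega
    have : a = 1 := orderOf_eq_one_iff.mp h1
    rw [this]; exact Subgroup.one_mem _

lemma rev_mem_zpowers {a b : G} (hab : a ∈ Subgroup.zpowers b) (h : orderOf a = orderOf b) :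
    b ∈ Subgroup.zpowers a := by
  obtain ⟨k, hk0⟩ := mem_powers_iff_mem_zpowers.mpr hab
  have hk : b ^ k = a := hk0
  have hord : orderOf b / Nat.gcd (orderOf b) k = orderOf b := by
    rw [← orderOf_pow, hk, h]
  have hg : Nat.gcd (orderOf b) k ∣ orderOf b := Nat.gcd_dvd_left _ _
  have hbpos : 0 < orderOf b := orderOf_pos b
  have hgone : Nat.gcd (orderOf b) k = 1 := by
    by_contra hne
    have h2 : 2 ≤ Nat.gcd (orderOf b) k := by
      have := Nat.pos_of_dvd_of_pos hg hbpos; omega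
    have := Nat.div_lt_self hbpos h2
    omega
  have : b ∈ Subgroup.zpowers (b ^ k) :=
    self_mem_zpowers_pow (Nat.coprime_comm.mp hgone)
  rwa [hk] at this

lemma mem_zpowers_mul_left {a b : G} (hc : Commute a b)
    (hcop : Nat.Coprime (orderOf a) (orderOf b)) : a ∈ Subgroup.zpowers (a * b) := by
  have h1 : (a * b) ^ orderOf b = a ^ orderOf b := by
    rw [hc.mul_pow, pow_orderOf_eq_one, mul_one]
  have h2 : a ∈ Subgroup.zpowers (a ^ orderOf b) := self_mem_zpowers_pow hcop.symm
  have h3 : Subgroup.zpowers (a ^ orderOf b) ≤ Subgroup.zpowers (a * b) := by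
    rw [Subgroup.zpowers_le, ← h1]
    exact Subgroup.pow_mem _ (Subgroup.mem_zpowers _) _
  exact h3 h2

lemma mem_zpowers_mul_right {a b : G} (hc : Commute a b)
    (hcop : Nat.Coprime (orderOf a) (orderOf b)) : b ∈ Subgroup.zpowers (a * b) := by
  have := mem_zpowers_mul_left hc.symm hcop.symm
  rwa [← hc.eq] at this

lemma pow_orderOf_left_mem {a b h : G} (hc : Commute a b)
    (hm : h ∈ Subgroup.zpowers (a * b)) : h ^ orderOf a ∈ Subgroup.zpowers b := by
  obtain ⟨k, hk0⟩ := mem_powers_iff_mem_zpowers.mpr hm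
  have hk : (a * b) ^ k = h := hk0
  subst hk
  rw [← pow_mul, mul_comm k (orderOf a), pow_mul, hc.mul_pow, pow_orderOf_eq_one, one_mul]
  exact Subgroup.pow_mem _ (Subgroup.pow_mem _ (Subgroup.mem_zpowers _) _) _

lemma not_adj_of_not_dvd {a b : G} (h1 : ¬ orderOf a ∣ orderOf b) (h2 : ¬ orderOf b ∣ orderOf a) :
    ¬ (powerGraph G).Adj a b := by
  rintro ⟨hne, h | h⟩
  · exact h2 (orderOf_dvd_of_mem_zpowers h)
  · exact h1 (orderOf_dvd_of_mem_zpowers h)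

lemma ne_of_orderOf_ne' {a b : G} (h : orderOf a ≠ orderOf b) : a ≠ b := fun e => h (by rw [e])

lemma orderOf_pow_eq {a : G} {m r : ℕ} (h : orderOf a = m * r) (hm : 0 < m) (hr : 0 < r) :
    orderOf (a ^ m) = r := by
  rw [orderOf_pow, h, Nat.gcd_comm, Nat.gcd_eq_left ⟨r, rfl⟩]
  exact Nat.mul_div_cancel_left r hm

lemma orderOf_pow_div {a : G} {r : ℕ} (hr : 0 < r) (hd : r ∣ orderOf a) :
    orderOf (a ^ (orderOf a / r)) = r := by
  have hn : 0 < orderOf a := orderOf_pos a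
  obtain ⟨c, hc⟩ := hd
  have hcpos : 0 < c := by
    rcases Nat.eq_zero_or_pos c with rfl | hcpos
    · rw [hc, Nat.mul_zero] at hn; omega
    · exact hcpos
  have hdiv : orderOf a / r = c := by rw [hc, Nat.mul_div_cancel_left c hr]
  rw [hdiv]
  exact orderOf_pow_eq (by rw [hc, mul_comm]) hcpos hr


end Helpers

set_option maxHeartbeats 2000000 in
theorem centralizer_eq_closure_and_iso
    {G : Type*} [Group G] [Finite G]
    (hco : IsCograph (powerGraph G))
    {p q : ℕ} (hp : p.Prime) (hq : q.Prime) (hqp : q < p)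
    {x w : G} (hxw : Commute x w) (hx : orderOf x = p) (hw : orderOf w = q) :
    Subgroup.centralizer ({x} : Set G) = Subgroup.closure {x, w} ∧
      Nonempty ((Subgroup.centralizer ({x} : Set G)) ≃*
        Multiplicative (ZMod p) × Multiplicative (ZMod q)) := by
  classical
  have hp1 : 1 < p := hp.one_lt
  have hq1 : 1 < q := hq.one_lt
  have hppos : 0 < p := hp.pos
  have hqpos : 0 < q := hq.pos
  have hpq : p ≠ q := Nat.ne_of_gt hqp
  have hcop : Nat.Coprime p q := (Nat.coprime_primes hp hq).mpr hpq
  have hcopxw : Nat.Coprime (orderOf x) (orderOf w) := by rw [hx, hw]; exact hcop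
  have hz : orderOf (x * w) = p * q := by
    rw [hxw.orderOf_mul_eq_mul_orderOf_of_coprime hcopxw, hx, hw]
  have hx1 : x ≠ 1 := by intro h; rw [h, orderOf_one] at hx; omega
  have hw1 : w ≠ 1 := by intro h; rw [h, orderOf_one] at hw; omega
  have hxz : x ∈ Subgroup.zpowers (x * w) := mem_zpowers_mul_left hxw hcopxw
  have hwz : w ∈ Subgroup.zpowers (x * w) := mem_zpowers_mul_right hxw hcopxw
  have hqltpq : q < p * q := by nlinarith
  have hpltpq : p < p * q := by nlinarith
  have adj_x_z : (powerGraph G).Adj x (x * w) :=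
    ⟨fun h => hw1 (left_eq_mul.mp h), Or.inr hxz⟩
  have adj_w_z : (powerGraph G).Adj w (x * w) :=
    ⟨fun h => hx1 (right_eq_mul.mp h), Or.inr hwz⟩
  have ndvd_qp : ¬ q ∣ p := fun hd => hpq ((Nat.prime_dvd_prime_iff_eq hq hp).mp hd).symm
  have ndvd_pq : ¬ p ∣ q := fun hd => hpq ((Nat.prime_dvd_prime_iff_eq hp hq).mp hd)
  have nadj_wx : ¬ (powerGraph G).Adj w x :=
    not_adj_of_not_dvd (by rw [hw, hx]; exact ndvd_qp) (by rw [hw, hx]; exact ndvd_pq)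
  have nadj_xw : ¬ (powerGraph G).Adj x w := fun h => nadj_wx h.symm
  -- Step 1: every element of order q commuting with x lies in ⟨w⟩
  have Hq : ∀ y : G, Commute x y → orderOf y = q → y ∈ Subgroup.zpowers w := by
    intro y hcxy hyq
    by_contra hny
    have hy1 : y ≠ 1 := by intro h; rw [h, orderOf_one] at hyq; omega
    have hcopxy : Nat.Coprime (orderOf x) (orderOf y) := by rw [hx, hyq]; exact hcop
    have hxyord : orderOf (x * y) = p * q := by
      rw [hcxy.orderOf_mul_eq_mul_orderOf_of_coprime hcopxy, hx, hyq]
    have hkey : w ∉ Subgroup.zpowers y := by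
      intro hwy
      exact hny (rev_mem_zpowers hwy (by rw [hw, hyq]))
    apply hco w (x * w) x (x * y)
    refine ⟨?_, ?_, ?_, adj_w_z, adj_x_z.symm, ?_, nadj_wx, ?_, ?_⟩
    · exact ne_of_orderOf_ne' (by rw [hw, hx]; omega)
    · exact ne_of_orderOf_ne' (by rw [hw, hxyord]; exact Nat.ne_of_lt hqltpq)
    · intro h
      have h2 : w = y := mul_left_cancel h
      exact hkey (by rw [h2]; exact Subgroup.mem_zpowers y)
    · exact ⟨fun h => hy1 (left_eq_mul.mp h), Or.inr (mem_zpowers_mul_left hcxy hcopxy)⟩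
    · rintro ⟨hne', h | h⟩
      · have hd := orderOf_dvd_of_mem_zpowers h
        rw [hxyord, hw] at hd
        have := Nat.le_of_dvd hqpos hd; omega
      · have h1 : w ^ p ∈ Subgroup.zpowers y := by
          have := pow_orderOf_left_mem hcxy h
          rwa [hx] at this
        have h2 : w ∈ Subgroup.zpowers (w ^ p) :=
          self_mem_zpowers_pow (by rw [hw]; exact hcop)
        exact hkey (Subgroup.zpowers_le.mpr h1 h2)
    · rintro ⟨hne', h | h⟩
      · have h1 : (x * y) ^ p ∈ Subgroup.zpowers w := by
          have := pow_orderOf_left_mem hxw h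
          rwa [hx] at this
        have h2 : (x * y) ^ p = y ^ p := by
          rw [hcxy.mul_pow, ← hx, pow_orderOf_eq_one, one_mul]
        rw [h2] at h1
        have h3 : y ∈ Subgroup.zpowers (y ^ p) :=
          self_mem_zpowers_pow (by rw [hyq]; exact hcop)
        exact hny (Subgroup.zpowers_le.mpr h1 h3)
      · have h1 : (x * w) ^ p ∈ Subgroup.zpowers y := by
          have := pow_orderOf_left_mem hcxy h
          rwa [hx] at this
        have h2 : (x * w) ^ p = w ^ p := by
          rw [hxw.mul_pow, ← hx, pow_orderOf_eq_one, one_mul]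
        rw [h2] at h1
        have h3 : w ∈ Subgroup.zpowers (w ^ p) :=
          self_mem_zpowers_pow (by rw [hw]; exact hcop)
        exact hkey (Subgroup.zpowers_le.mpr h1 h3)
  -- Step 2: every element of order p commuting with x lies in ⟨x⟩
  have Hp : ∀ y : G, Commute x y → orderOf y = p → y ∈ Subgroup.zpowers x := by
    intro y hcxy hyp
    by_contra hny
    have hy1 : y ≠ 1 := by intro h; rw [h, orderOf_one] at hyp; omega
    -- y commutes with w
    have hconj : orderOf (y * w * y⁻¹) = q := by
      have h0 := orderOf_injective (MulAut.conj y).toMonoidHom (MulEquiv.injective _) w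
      simpa [MulAut.conj_apply, hw] using h0
    have hcxc : Commute x (y * w * y⁻¹) := (hcxy.mul_right hxw).mul_right hcxy.inv_right
    have hmem := Hq (y * w * y⁻¹) hcxc hconj
    obtain ⟨k, hk0⟩ := mem_powers_iff_mem_zpowers.mpr hmem
    have hk : w ^ k = y * w * y⁻¹ := hk0
    have cpow : ∀ (g u : G) (m : ℕ), (g * u * g⁻¹) ^ m = g * u ^ m * g⁻¹ := by
      intro g u m
      induction m with
      | zero => simp
      | succ n ih => rw [pow_succ, ih, pow_succ]; group
    have hiter : ∀ j : ℕ, y ^ j * w * (y ^ j)⁻¹ = w ^ (k ^ j) := by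
      intro j
      induction j with
      | zero => simp
      | succ n ih =>
        have hstep : y ^ (n+1) * w * (y ^ (n+1))⁻¹
            = y ^ n * (y * w * y⁻¹) * (y ^ n)⁻¹ := by
          rw [pow_succ]; group
        rw [hstep, ← hk, ← cpow (y ^ n) w k, ih, ← pow_mul, ← pow_succ]
    have hyp1 : y ^ p = 1 := by rw [← hyp]; exact pow_orderOf_eq_one y
    have h1 := hiter p
    rw [hyp1, one_mul, inv_one, mul_one] at h1
    have hmod : k ^ p ≡ 1 [MOD q] := by
      have h2 : w ^ (k ^ p) = w ^ 1 := by rw [pow_one]; exact h1.symm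
      have h3 := pow_eq_pow_iff_modEq.mp h2
      rwa [hw] at h3
    haveI : Fact q.Prime := ⟨hq⟩
    have hu1 : ((k : ZMod q)) ^ p = 1 := by
      have h4 := (ZMod.natCast_eq_natCast_iff (k ^ p) 1 q).mpr hmod
      push_cast at h4
      exact h4
    have hu0 : (k : ZMod q) ≠ 0 := by
      intro h0
      have hqk : q ∣ k := (ZMod.natCast_eq_zero_iff k q).mp h0
      have hwk : w ^ k = 1 := orderOf_dvd_iff_pow_eq_one.mp (by rw [hw]; exact hqk)
      have h5 : y * w * y⁻¹ = 1 := by rw [← hk]; exact hwk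
      rw [h5, orderOf_one] at hconj; omega
    have hu2 : ((k : ZMod q)) ^ (q - 1) = 1 := ZMod.pow_card_sub_one_eq_one hu0
    have hcop2 : Nat.Coprime p (q - 1) := by
      refine hp.coprime_iff_not_dvd.mpr (fun hd => ?_)
      have := Nat.le_of_dvd (by omega) hd
      omega
    have hd1 : orderOf ((k : ZMod q)) ∣ p := orderOf_dvd_of_pow_eq_one hu1
    have hd2 : orderOf ((k : ZMod q)) ∣ q - 1 := orderOf_dvd_of_pow_eq_one hu2
    have hdvd1 : orderOf ((k : ZMod q)) ∣ 1 := hcop2 ▸ Nat.dvd_gcd hd1 hd2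
    have hk1 : (k : ZMod q) = 1 := orderOf_eq_one_iff.mp (Nat.dvd_one.mp hdvd1)
    have hkm : k ≡ 1 [MOD q] :=
      (ZMod.natCast_eq_natCast_iff k 1 q).mp (by rw [Nat.cast_one]; exact hk1)
    have hwkw : w ^ k = w := by
      have h6 : w ^ k = w ^ 1 := by rw [pow_eq_pow_iff_modEq, hw]; exact hkm
      rwa [pow_one] at h6
    have hconjw : y * w * y⁻¹ = w := by rw [← hk, hwkw]
    have hcyw : Commute y w := by
      have h7 := congrArg (· * y) hconjw
      exact (by simpa [mul_assoc] using h7 : y * w = w * y)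
    -- now the P4
    have hcopwy : Nat.Coprime (orderOf w) (orderOf y) := by rw [hw, hyp]; exact hcop.symm
    have hwyord : orderOf (w * y) = q * p := by
      rw [(hcyw.symm).orderOf_mul_eq_mul_orderOf_of_coprime hcopwy, hw, hyp]
    apply hco x (x * w) w (w * y)
    refine ⟨?_, ?_, ?_, adj_x_z, adj_w_z.symm, ?_, nadj_xw, ?_, ?_⟩
    · exact ne_of_orderOf_ne' (by rw [hx, hw]; omega)
    · exact ne_of_orderOf_ne' (by rw [hx, hwyord]; exact Nat.ne_of_lt (by nlinarith))
    · intro hEq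
      have h8 : x * w = y * w := by rw [hEq, ← hcyw.eq]
      have h9 : x = y := (mul_left_inj w).mp h8
      exact hny (by rw [← h9]; exact Subgroup.mem_zpowers x)
    · exact ⟨fun h => hy1 (left_eq_mul.mp h),
        Or.inr (mem_zpowers_mul_left hcyw.symm hcopwy)⟩
    · rintro ⟨_, h | h⟩
      · have hd := orderOf_dvd_of_mem_zpowers h
        rw [hwyord, hx] at hd
        have := Nat.le_of_dvd hppos hd; nlinarith
      · have h1' : x ^ q ∈ Subgroup.zpowers y := by
          have := pow_orderOf_left_mem hcyw.symm h
          rwa [hw] at this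
        have h2' : x ∈ Subgroup.zpowers (x ^ q) :=
          self_mem_zpowers_pow (by rw [hx]; exact hcop.symm)
        have h3' : x ∈ Subgroup.zpowers y := Subgroup.zpowers_le.mpr h1' h2'
        exact hny (rev_mem_zpowers h3' (by rw [hx, hyp]))
    · rintro ⟨_, h | h⟩
      · rw [hxw.eq] at h
        have h1' : (w * y) ^ q ∈ Subgroup.zpowers x := by
          have := pow_orderOf_left_mem hxw.symm h
          rwa [hw] at this
        have h2' : (w * y) ^ q = y ^ q := by
          rw [(hcyw.symm).mul_pow, ← hw, pow_orderOf_eq_one, one_mul]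
        rw [h2'] at h1'
        have h3' : y ∈ Subgroup.zpowers (y ^ q) :=
          self_mem_zpowers_pow (by rw [hyp]; exact hcop.symm)
        exact hny (Subgroup.zpowers_le.mpr h1' h3')
      · have h1' : (x * w) ^ q ∈ Subgroup.zpowers y := by
          have := pow_orderOf_left_mem hcyw.symm h
          rwa [hw] at this
        have h2' : (x * w) ^ q = x ^ q := by
          rw [hxw.mul_pow, ← hw, pow_orderOf_eq_one, mul_one]
        rw [h2'] at h1'
        have h2'' : x ∈ Subgroup.zpowers (x ^ q) :=
          self_mem_zpowers_pow (by rw [hx]; exact hcop.symm)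
        have h3' : x ∈ Subgroup.zpowers y := Subgroup.zpowers_le.mpr h1' h2''
        exact hny (rev_mem_zpowers h3' (by rw [hx, hyp]))
  -- Step 3: prime divisors of orders in the centralizer are p or q
  have HR : ∀ y : G, Commute x y → ∀ r : ℕ, r.Prime → r ∣ orderOf y → r = p ∨ r = q := by
    intro y hcxy r hr hrdvd
    by_contra hcon
    push_neg at hcon
    obtain ⟨hrp, hrq⟩ := hcon
    have hyord : orderOf (y ^ (orderOf y / r)) = r := orderOf_pow_div hr.pos hrdvd
    set y' := y ^ (orderOf y / r) with hy'
    have hcxy' : Commute x y' := hcxy.pow_right _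
    have hy'1 : y' ≠ 1 := by
      intro h; rw [h, orderOf_one] at hyord; have := hr.one_lt; omega
    have hcopxy' : Nat.Coprime (orderOf x) (orderOf y') := by
      rw [hx, hyord]; exact (Nat.coprime_primes hp hr).mpr (fun h => hrp h.symm)
    have hordxy' : orderOf (x * y') = p * r := by
      rw [hcxy'.orderOf_mul_eq_mul_orderOf_of_coprime hcopxy', hx, hyord]
    have adjx : (powerGraph G).Adj x (x * y') :=
      ⟨fun h => hy'1 (left_eq_mul.mp h), Or.inr (mem_zpowers_mul_left hcxy' hcopxy')⟩
    apply hco y' (x * y') x (x * w)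
    refine ⟨?_, ?_, ?_, ?_, adjx.symm, adj_x_z, ?_, ?_, ?_⟩
    · exact ne_of_orderOf_ne' (by rw [hyord, hx]; exact hrp)
    · refine ne_of_orderOf_ne' ?_
      rw [hyord, hz]; intro h
      have hdp : p ∣ r := by rw [h]; exact dvd_mul_right p q
      exact hrp (((Nat.prime_dvd_prime_iff_eq hp hr).mp hdp).symm)
    · refine ne_of_orderOf_ne' ?_
      rw [hordxy', hz]; intro h
      exact hrq (Nat.eq_of_mul_eq_mul_left hppos h)
    · exact ⟨fun h => hx1 (right_eq_mul.mp h),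
        Or.inr (mem_zpowers_mul_right hcxy' hcopxy')⟩
    · apply not_adj_of_not_dvd
      · rw [hyord, hx]
        exact fun h => hrp ((Nat.prime_dvd_prime_iff_eq hr hp).mp h)
      · rw [hyord, hx]
        exact fun h => hrp (((Nat.prime_dvd_prime_iff_eq hp hr).mp h).symm)
    · apply not_adj_of_not_dvd
      · rw [hyord, hz]
        intro h
        rcases (Nat.Prime.dvd_mul hr).mp h with h' | h'
        · exact hrp ((Nat.prime_dvd_prime_iff_eq hr hp).mp h')
        · exact hrq ((Nat.prime_dvd_prime_iff_eq hr hq).mp h')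
      · rw [hyord, hz]
        intro h
        have hdp : p ∣ r := dvd_trans (dvd_mul_right p q) h
        exact hrp (((Nat.prime_dvd_prime_iff_eq hp hr).mp hdp).symm)
    · apply not_adj_of_not_dvd
      · rw [hordxy', hz]
        intro h
        have hdq : r ∣ q := (mul_dvd_mul_iff_left hp.pos.ne').mp h
        exact hrq ((Nat.prime_dvd_prime_iff_eq hr hq).mp hdq)
      · rw [hordxy', hz]
        intro h
        have hdq : q ∣ r := (mul_dvd_mul_iff_left hp.pos.ne').mp h
        exact hrq (((Nat.prime_dvd_prime_iff_eq hq hr).mp hdq).symm)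
  -- Step 4: no p^2
  have HP2 : ∀ y : G, Commute x y → ¬ (p * p ∣ orderOf y) := by
    intro y hcxy hdvd
    have hy1ord : orderOf (y ^ (orderOf y / (p * p))) = p * p :=
      orderOf_pow_div (by positivity) hdvd
    set y1 := y ^ (orderOf y / (p * p)) with hy1def
    have hcxy1 : Commute x y1 := hcxy.pow_right _
    have hexp : orderOf y1 / p = p := by rw [hy1ord, Nat.mul_div_cancel _ hppos]
    have hy2ord : orderOf (y1 ^ (orderOf y1 / p)) = p :=
      orderOf_pow_div hppos (by rw [hy1ord]; exact dvd_mul_left p p)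
    set y2 := y1 ^ (orderOf y1 / p) with hy2def
    have hy2x : y2 ∈ Subgroup.zpowers x := Hp y2 (hcxy1.pow_right _) hy2ord
    have hxy2 : x ∈ Subgroup.zpowers y2 := rev_mem_zpowers hy2x (by rw [hy2ord, hx])
    have hxy1 : x ∈ Subgroup.zpowers y1 := by
      have hle : Subgroup.zpowers y2 ≤ Subgroup.zpowers y1 :=
        Subgroup.zpowers_le.mpr (by rw [hy2def]; exact Subgroup.pow_mem _ (Subgroup.mem_zpowers _) _)
      exact hle hxy2
    apply hco w (x * w) x y1
    refine ⟨?_, ?_, ?_, adj_w_z, adj_x_z.symm, ?_, nadj_wx, ?_, ?_⟩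
    · exact ne_of_orderOf_ne' (by rw [hw, hx]; omega)
    · refine ne_of_orderOf_ne' ?_
      rw [hw, hy1ord]; intro h
      have hdp : p ∣ q := by rw [h]; exact dvd_mul_left p p
      exact hpq ((Nat.prime_dvd_prime_iff_eq hp hq).mp hdp)
    · refine ne_of_orderOf_ne' ?_
      rw [hz, hy1ord]; intro h
      exact hpq (Nat.eq_of_mul_eq_mul_left hppos h).symm
    · refine ⟨ne_of_orderOf_ne' (by rw [hx, hy1ord]; intro h; nlinarith), Or.inr hxy1⟩
    · apply not_adj_of_not_dvd
      · rw [hw, hy1ord]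
        intro h
        rcases (Nat.Prime.dvd_mul hq).mp h with h' | h' <;>
          exact hpq ((Nat.prime_dvd_prime_iff_eq hq hp).mp h').symm
      · rw [hw, hy1ord]
        intro h
        have hdp : p ∣ q := dvd_trans (dvd_mul_left p p) h
        exact hpq ((Nat.prime_dvd_prime_iff_eq hp hq).mp hdp)
    · apply not_adj_of_not_dvd
      · rw [hz, hy1ord]
        intro h
        have hdq : q ∣ p := (mul_dvd_mul_iff_left hp.pos.ne').mp h
        exact hpq ((Nat.prime_dvd_prime_iff_eq hq hp).mp hdq).symm
      · rw [hz, hy1ord]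
        intro h
        have hdp : p ∣ q := (mul_dvd_mul_iff_left hp.pos.ne').mp h
        exact hpq ((Nat.prime_dvd_prime_iff_eq hp hq).mp hdp)
  -- Step 5: no q^2
  have HQ2 : ∀ y : G, Commute x y → ¬ (q * q ∣ orderOf y) := by
    intro y hcxy hdvd
    have hy1ord : orderOf (y ^ (orderOf y / (q * q))) = q * q :=
      orderOf_pow_div (by positivity) hdvd
    set y1 := y ^ (orderOf y / (q * q)) with hy1def
    have hcxy1 : Commute x y1 := hcxy.pow_right _
    have hy2ord : orderOf (y1 ^ (orderOf y1 / q)) = q :=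
      orderOf_pow_div hqpos (by rw [hy1ord]; exact dvd_mul_left q q)
    set y2 := y1 ^ (orderOf y1 / q) with hy2def
    have hy2w : y2 ∈ Subgroup.zpowers w := Hq y2 (hcxy1.pow_right _) hy2ord
    have hwy2 : w ∈ Subgroup.zpowers y2 := rev_mem_zpowers hy2w (by rw [hy2ord, hw])
    have hwy1 : w ∈ Subgroup.zpowers y1 := by
      have hle : Subgroup.zpowers y2 ≤ Subgroup.zpowers y1 :=
        Subgroup.zpowers_le.mpr (by rw [hy2def]; exact Subgroup.pow_mem _ (Subgroup.mem_zpowers _) _)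
      exact hle hwy2
    apply hco x (x * w) w y1
    refine ⟨?_, ?_, ?_, adj_x_z, adj_w_z.symm, ?_, nadj_xw, ?_, ?_⟩
    · exact ne_of_orderOf_ne' (by rw [hx, hw]; omega)
    · refine ne_of_orderOf_ne' ?_
      rw [hx, hy1ord]; intro h
      have hdq : q ∣ p := by rw [h]; exact dvd_mul_left q q
      exact hpq ((Nat.prime_dvd_prime_iff_eq hq hp).mp hdq).symm
    · refine ne_of_orderOf_ne' ?_
      rw [hz, hy1ord]; intro h
      exact hpq (Nat.eq_of_mul_eq_mul_right hqpos h)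
    · refine ⟨ne_of_orderOf_ne' (by rw [hw, hy1ord]; intro h; nlinarith), Or.inr hwy1⟩
    · apply not_adj_of_not_dvd
      · rw [hx, hy1ord]
        intro h
        rcases (Nat.Prime.dvd_mul hp).mp h with h' | h' <;>
          exact hpq ((Nat.prime_dvd_prime_iff_eq hp hq).mp h')
      · rw [hx, hy1ord]
        intro h
        have hdq : q ∣ p := dvd_trans (dvd_mul_left q q) h
        exact hpq ((Nat.prime_dvd_prime_iff_eq hq hp).mp hdq).symm
    · apply not_adj_of_not_dvd
      · rw [hz, hy1ord]
        intro h
        have h0 : p ∣ q * q := dvd_trans (dvd_mul_right p q) h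
        rcases (Nat.Prime.dvd_mul hp).mp h0 with h' | h' <;>
          exact hpq ((Nat.prime_dvd_prime_iff_eq hp hq).mp h')
      · rw [hz, hy1ord]
        intro h
        rw [mul_comm p q] at h
        have hdq : q ∣ p := (mul_dvd_mul_iff_left hq.pos.ne').mp h
        exact hpq ((Nat.prime_dvd_prime_iff_eq hq hp).mp hdq).symm
  -- Main claim
  have main : ∀ y : G, Commute x y → y ∈ Subgroup.zpowers (x * w) := by
    intro y hcxy
    have hnpos : 0 < orderOf y := orderOf_pos y
    set n := orderOf y with hn
    have hnd : n ∣ p * q := by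
      set d := Nat.gcd n (p * q) with hd
      have hdn : d ∣ n := Nat.gcd_dvd_left _ _
      have hdpq : d ∣ p * q := Nat.gcd_dvd_right _ _
      by_cases hnd2 : n = d
      · rw [hnd2]; exact hdpq
      · exfalso
        have hm : d * (n / d) = n := Nat.mul_div_cancel' hdn
        have hm1 : n / d ≠ 1 := by intro h; rw [h, mul_one] at hm; exact hnd2 hm.symm
        obtain ⟨r, hr, hrm⟩ := Nat.exists_prime_and_dvd hm1
        have hrn : r ∣ n := dvd_trans hrm (Nat.div_dvd_of_dvd hdn)
        rcases HR y hcxy r hr hrn with h' | h'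
        · subst h'
          have hpd : r ∣ d := Nat.dvd_gcd hrn (dvd_mul_right r q)
          have hppn : r * r ∣ n := by
            have h9 := mul_dvd_mul hpd hrm
            rwa [hm] at h9
          exact HP2 y hcxy hppn
        · subst h'
          have hpd : r ∣ d := Nat.dvd_gcd hrn (dvd_mul_left r p)
          have hppn : r * r ∣ n := by
            have h9 := mul_dvd_mul hpd hrm
            rwa [hm] at h9
          exact HQ2 y hcxy hppn
    by_cases hpn : p ∣ n <;> by_cases hqn : q ∣ n
    · -- n = p * q
      have hpq_n : p * q ∣ n := Nat.Coprime.mul_dvd_of_dvd_of_dvd hcop hpn hqn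
      have hneq : orderOf y = p * q := hn ▸ Nat.dvd_antisymm hnd hpq_n
      have h1 : orderOf (y ^ p) = q := orderOf_pow_eq hneq hppos hqpos
      have h2 : orderOf (y ^ q) = p := orderOf_pow_eq (by rw [hneq, mul_comm]) hqpos hppos
      have m1 : (y ^ p : G) ∈ Subgroup.zpowers (x * w) :=
        Subgroup.zpowers_le.mpr hwz (Hq (y ^ p) (hcxy.pow_right p) h1)
      have m2 : (y ^ q : G) ∈ Subgroup.zpowers (x * w) :=
        Subgroup.zpowers_le.mpr hxz (Hp (y ^ q) (hcxy.pow_right q) h2)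
      have hIC : IsCoprime (p : ℤ) (q : ℤ) := by
        rw [Int.isCoprime_iff_gcd_eq_one]
        simpa using hcop
      obtain ⟨a, b, hab⟩ := hIC
      have key : ((y ^ p) ^ a) * ((y ^ q) ^ b) = y := by
        rw [← zpow_natCast y p, ← zpow_natCast y q, ← zpow_mul, ← zpow_mul, ← zpow_add]
        rw [show (p : ℤ) * a + (q : ℤ) * b = a * p + b * q by ring, hab, zpow_one]
      rw [← key]
      exact Subgroup.mul_mem _ (Subgroup.zpow_mem _ m1 a) (Subgroup.zpow_mem _ m2 b)
    · have hcq : Nat.Coprime n q := Nat.coprime_comm.mp (hq.coprime_iff_not_dvd.mpr hqn)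
      have hdp : n ∣ p := hcq.dvd_of_dvd_mul_right hnd
      have hneq : orderOf y = p := hn ▸ Nat.dvd_antisymm hdp hpn
      exact Subgroup.zpowers_le.mpr hxz (Hp y hcxy hneq)
    · have hcp : Nat.Coprime n p := Nat.coprime_comm.mp (hp.coprime_iff_not_dvd.mpr hpn)
      have hdq : n ∣ q := hcp.dvd_of_dvd_mul_left hnd
      have hneq : orderOf y = q := hn ▸ Nat.dvd_antisymm hdq hqn
      exact Subgroup.zpowers_le.mpr hwz (Hq y hcxy hneq)
    · have hcq : Nat.Coprime n q := Nat.coprime_comm.mp (hq.coprime_iff_not_dvd.mpr hqn)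
      have hdp : n ∣ p := hcq.dvd_of_dvd_mul_right hnd
      rcases hp.eq_one_or_self_of_dvd _ hdp with h2 | h2
      · have hy1 : y = 1 := orderOf_eq_one_iff.mp (hn ▸ h2)
        rw [hy1]; exact Subgroup.one_mem _
      · exact absurd (by rw [h2] : p ∣ n) hpn
  -- Assemble
  have hCeq : Subgroup.centralizer ({x} : Set G) = Subgroup.zpowers (x * w) := by
    apply le_antisymm
    · intro y hy
      exact main y (show Commute y x from Subgroup.mem_centralizer_singleton_iff.mp hy).symm
    · rw [Subgroup.zpowers_le]
      exact Subgroup.mem_centralizer_singleton_iff.mpr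
        (((Commute.refl x).mul_right hxw).symm).eq
  have hCl : Subgroup.closure ({x, w} : Set G) = Subgroup.centralizer ({x} : Set G) := by
    apply le_antisymm
    · rw [Subgroup.closure_le]
      rintro g hg
      rcases hg with rfl | hg
      · exact Subgroup.mem_centralizer_singleton_iff.mpr rfl
      · rw [Set.mem_singleton_iff] at hg; subst hg
        exact Subgroup.mem_centralizer_singleton_iff.mpr hxw.symm.eq
    · rw [hCeq, Subgroup.zpowers_le]
      exact Subgroup.mul_mem _ (Subgroup.subset_closure (by simp))
        (Subgroup.subset_closure (by simp))
  refine ⟨hCl.symm, ?_⟩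
  have hcyc : IsCyclic (Subgroup.zpowers (x * w)) := by
    refine ⟨⟨⟨x * w, Subgroup.mem_zpowers _⟩, ?_⟩⟩
    rintro ⟨g, hg⟩
    obtain ⟨k, hk⟩ := Subgroup.mem_zpowers_iff.mp hg
    refine Subgroup.mem_zpowers_iff.mpr ⟨k, ?_⟩
    apply Subtype.ext
    rw [SubgroupClass.coe_zpow]
    exact hk
  have hcard : Nat.card (Subgroup.zpowers (x * w)) = p * q := by
    rw [Nat.card_zpowers, hz]
  have e2 : Multiplicative (ZMod (p * q)) ≃* (Subgroup.zpowers (x * w)) := by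
    have e := zmodCyclicMulEquiv hcyc
    rwa [hcard] at e
  have e3 : Multiplicative (ZMod (p * q)) ≃* Multiplicative (ZMod p) × Multiplicative (ZMod q) :=
    (AddEquiv.toMultiplicative (ZMod.chineseRemainder hcop).toAddEquiv).trans
      (MulEquiv.prodMultiplicative (G := ZMod p) (H := ZMod q))
  exact ⟨(MulEquiv.subgroupCongr hCeq).trans (e2.symm.trans e3)⟩
end

section
/- Let G be a finite group whose power graph is a cograph, and let x, w ∈ G be commuting elements of prime orders p and q with q < p. Then C_G(w) is a semidirect product ⟨x⟩ ⋊ Q where ⟨x⟩ ≅ C_p and Q is an abelian q-group isomorphic to a subgroup of ⟨w⟩ × C_{q^n} for some n ≥ 0 containing ⟨w⟩, with Q/⟨w⟩ acting without nontrivial fixed points on ⟨x⟩; in particular the order of Q/⟨w⟩ divides p − 1. -/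
open Subgroup Pointwise

section AuxPG

variable {G : Type*} [Group G] [Finite G]

lemma pg_adj {a b : G} :
    (powerGraph G).Adj a b ↔ a ≠ b ∧ (b ∈ zpowers a ∨ a ∈ zpowers b) := Iff.rfl

lemma pg_not_adj {a b : G} (h1 : ¬ orderOf b ∣ orderOf a) (h2 : ¬ orderOf a ∣ orderOf b) :
    ¬ (powerGraph G).Adj a b := fun h =>
  h.2.elim (fun hm => h1 (orderOf_dvd_of_mem_zpowers hm))
    (fun hm => h2 (orderOf_dvd_of_mem_zpowers hm))

lemma aux_mem_zpowers_mul {u v : G} (h : Commute u v)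
    (hco : Nat.Coprime (orderOf v) (orderOf u)) : u ∈ zpowers (u * v) := by
  rcases eq_or_ne (orderOf u) 1 with hu | hu
  · rw [orderOf_eq_one_iff] at hu
    exact hu ▸ one_mem _
  · set m := orderOf u with hm
    set n := orderOf v with hn
    have hmpos : 0 < m := Nat.pos_of_ne_zero fun h0 => (hm ▸ h0 ▸ orderOf_pos u).false
    have htpos : 0 < Nat.totient m := Nat.totient_pos.2 hmpos
    set e := n ^ Nat.totient m with he
    have hve : v ^ e = 1 := by
      have : n ∣ e := dvd_pow_self n htpos.ne'
      exact orderOf_dvd_iff_pow_eq_one.1 this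
    have hue : u ^ e = u := by
      have : e ≡ 1 [MOD m] := Nat.ModEq.pow_totient hco
      calc u ^ e = u ^ 1 := (pow_eq_pow_iff_modEq).2 this
        _ = u := pow_one u
    refine mem_zpowers_iff.2 ⟨(e : ℤ), ?_⟩
    rw [zpow_natCast, h.mul_pow, hve, mul_one, hue]

lemma aux_mem_zpowers_factor {g v a : G} (h : Commute g v) (ha : a ∈ zpowers (g * v))
    (hco : Nat.Coprime (orderOf v) (orderOf a)) : a ∈ zpowers g := by
  rcases eq_or_ne (orderOf a) 1 with hu | hu
  · rw [orderOf_eq_one_iff] at hu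
    exact hu ▸ one_mem _
  · set m := orderOf a with hm
    set n := orderOf v with hn
    obtain ⟨k, hk⟩ := mem_zpowers_iff.1 ha
    have hmpos : 0 < m := Nat.pos_of_ne_zero fun h0 => (hm ▸ h0 ▸ orderOf_pos a).false
    have htpos : 0 < Nat.totient m := Nat.totient_pos.2 hmpos
    set e := n ^ Nat.totient m with he
    have hve : v ^ (e : ℤ) = 1 := by
      have : n ∣ e := dvd_pow_self n htpos.ne'
      rw [zpow_natCast]
      exact orderOf_dvd_iff_pow_eq_one.1 this
    have hae : a ^ e = a := by
      have : e ≡ 1 [MOD m] := Nat.ModEq.pow_totient hco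
      calc a ^ e = a ^ 1 := (pow_eq_pow_iff_modEq).2 this
        _ = a := pow_one a
    refine mem_zpowers_iff.2 ⟨k * (e : ℤ), ?_⟩
    have h1 : (g * v) ^ (k * (e : ℤ)) = a := by
      calc (g * v) ^ (k * (e : ℤ)) = ((g * v) ^ k) ^ (e : ℤ) := zpow_mul _ _ _
        _ = a ^ (e : ℤ) := by rw [hk]
        _ = a ^ e := zpow_natCast a e
        _ = a := hae
    have h2 : (g * v) ^ (k * (e : ℤ)) = g ^ (k * (e : ℤ)) * v ^ (k * (e : ℤ)) := h.mul_zpow _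
    have h3 : v ^ (k * (e : ℤ)) = 1 := by rw [mul_comm, zpow_mul, hve, one_zpow]
    rw [← h1, h2, h3, mul_one]

variable (hcog : IsCograph (powerGraph G)) {p q : ℕ} (hp : p.Prime) (hq : q.Prime)
  (hpq : p ≠ q) {x w : G} (hxw : Commute x w) (hx : orderOf x = p) (hw : orderOf w = q)

section Key
include hcog hp hq hpq hxw hx hw

lemma keyA {g : G} (hgw : Commute g w) {k : ℕ} (hg : orderOf g = p ^ (k + 1)) :
    x ∈ zpowers g ∨ g ∈ zpowers x := by
  have hpq' : Nat.Coprime p q := (Nat.coprime_primes hp hq).2 hpq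
  have hx1 : x ≠ 1 := fun h => hp.ne_one (by rw [← hx, h, orderOf_one])
  have hw1 : w ≠ 1 := fun h => hq.ne_one (by rw [← hw, h, orderOf_one])
  have hg1 : g ≠ 1 := by
    intro h
    rw [h, orderOf_one] at hg
    have : 1 < p ^ (k + 1) := Nat.one_lt_pow (Nat.succ_ne_zero k) hp.one_lt
    omega
  have hxwo : orderOf (x * w) = p * q := by
    rw [hxw.orderOf_mul_eq_mul_orderOf_of_coprime (by rw [hx, hw]; exact hpq'), hx, hw]
  have hgwo : orderOf (g * w) = p ^ (k + 1) * q := by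
    rw [hgw.orderOf_mul_eq_mul_orderOf_of_coprime (by rw [hg, hw]; exact hpq'.pow_left _), hg, hw]
  have hx_xw : x ∈ zpowers (x * w) :=
    aux_mem_zpowers_mul hxw (by rw [hx, hw]; exact hpq'.symm)
  have hw_xw : w ∈ zpowers (x * w) := by
    rw [hxw.eq]
    exact aux_mem_zpowers_mul hxw.symm (by rw [hx, hw]; exact hpq')
  have hw_gw : w ∈ zpowers (g * w) := by
    rw [hgw.eq]
    exact aux_mem_zpowers_mul hgw.symm (by rw [hg, hw]; exact hpq'.pow_left _)
  have hnqp : ¬ q ∣ p := fun hd => hpq ((Nat.prime_dvd_prime_iff_eq hq hp).1 hd).symm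
  have hnpq : ¬ p ∣ q := fun hd => hpq ((Nat.prime_dvd_prime_iff_eq hp hq).1 hd)
  by_contra hcon
  push_neg at hcon
  obtain ⟨h1, h2⟩ := hcon
  refine hcog x (x * w) w (g * w) ⟨?_, ?_, ?_, ?_, ?_, ?_, ?_, ?_, ?_⟩
  · intro h; exact hpq (by rw [← hx, h, hw])
  · intro h
    apply hnqp
    rw [← hx, h, hgwo]
    exact dvd_mul_left q _
  · intro h
    exact h2 (mul_right_cancel h ▸ mem_zpowers x)
  · exact ⟨fun h => hw1 (mul_eq_left.1 h.symm), Or.inr hx_xw⟩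
  · exact ⟨fun h => hx1 (mul_eq_right.1 h), Or.inl hw_xw⟩
  · exact ⟨fun h => hg1 (mul_eq_right.1 h.symm), Or.inr hw_gw⟩
  · exact pg_not_adj (by rw [hx, hw]; exact hnqp) (by rw [hx, hw]; exact hnpq)
  · rintro ⟨-, hor | hor⟩
    · have := orderOf_dvd_of_mem_zpowers hor
      rw [hgwo, hx] at this
      exact hnqp (dvd_trans (dvd_mul_left q _) this)
    · exact h1 (aux_mem_zpowers_factor hgw hor (by rw [hx, hw]; exact hpq'.symm))
  · rintro ⟨-, hor | hor⟩
    · -- g * w ∈ zpowers (x * w)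
      have hgmem : g ∈ zpowers (x * w) :=
        zpowers_le.2 hor (aux_mem_zpowers_mul hgw (by rw [hg, hw]; exact (hpq'.pow_left _).symm))
      have hdvd : orderOf g ∣ p * q := hxwo ▸ orderOf_dvd_of_mem_zpowers hgmem
      have hk0 : k = 0 := by
        by_contra hk
        have h2d : p * p ∣ p ^ (k + 1) := by
          rw [← pow_two]
          exact pow_dvd_pow p (by omega)
        have : p ∣ q := (Nat.mul_dvd_mul_iff_left hp.pos).1 (dvd_trans h2d (hg ▸ hdvd))
        exact hnpq this
      subst hk0
      rw [pow_one] at hg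
      exact h2 (aux_mem_zpowers_factor hxw hgmem (by rw [hg, hw]; exact hpq'.symm))
    · have hxmem : x ∈ zpowers (g * w) := zpowers_le.2 hor hx_xw
      exact h1 (aux_mem_zpowers_factor hgw hxmem (by rw [hx, hw]; exact hpq'.symm))

lemma keyB {g : G} (hgw : Commute g w) (hg : orderOf g = p) : g ∈ zpowers x := by
  rcases keyA hcog hp hq hpq hxw hx hw hgw (k := 0) (by rwa [pow_one]) with h | h
  · have hle : zpowers x ≤ zpowers g := zpowers_le.2 h
    have heq : zpowers x = zpowers g := Subgroup.eq_of_le_of_card_ge hle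
      (by rw [Nat.card_zpowers, Nat.card_zpowers, hx, hg])
    rw [heq]
    exact mem_zpowers g
  · exact h

lemma keyC {g : G} (hgw : Commute g w) (hg : orderOf g = p * p) : False := by
  have hpq' : Nat.Coprime p q := (Nat.coprime_primes hp hq).2 hpq
  have hx1 : x ≠ 1 := fun h => hp.ne_one (by rw [← hx, h, orderOf_one])
  have hw1 : w ≠ 1 := fun h => hq.ne_one (by rw [← hw, h, orderOf_one])
  have hnqp : ¬ q ∣ p := fun hd => hpq ((Nat.prime_dvd_prime_iff_eq hq hp).1 hd).symm
  have hnpq : ¬ p ∣ q := fun hd => hpq ((Nat.prime_dvd_prime_iff_eq hp hq).1 hd)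
  have hxwo : orderOf (x * w) = p * q := by
    rw [hxw.orderOf_mul_eq_mul_orderOf_of_coprime (by rw [hx, hw]; exact hpq'), hx, hw]
  have hx_xw : x ∈ zpowers (x * w) :=
    aux_mem_zpowers_mul hxw (by rw [hx, hw]; exact hpq'.symm)
  have hw_xw : w ∈ zpowers (x * w) := by
    rw [hxw.eq]
    exact aux_mem_zpowers_mul hxw.symm (by rw [hx, hw]; exact hpq')
  have hxg : x ∈ zpowers g := by
    rcases keyA hcog hp hq hpq hxw hx hw hgw (k := 1)
      (by rw [hg, pow_succ, pow_one]) with h | h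
    · exact h
    · exfalso
      have := orderOf_dvd_of_mem_zpowers h
      rw [hx, hg] at this
      have := Nat.le_of_dvd hp.pos this
      nlinarith [hp.one_lt]
  refine hcog w (x * w) x g ⟨?_, ?_, ?_, ?_, ?_, ?_, ?_, ?_, ?_⟩
  · intro h; exact hpq (by rw [← hx, ← h, hw])
  · intro h
    apply hnpq
    rw [← hw, h, hg]
    exact Dvd.intro _ rfl
  · intro h
    apply hnqp
    have : p * q = p * p := by rw [← hxwo, h, hg]
    rw [Nat.eq_of_mul_eq_mul_left hp.pos this]
  · exact ⟨fun h => hx1 (mul_eq_right.1 h.symm), Or.inr hw_xw⟩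
  · exact ⟨fun h => hw1 (mul_eq_left.1 h), Or.inl hx_xw⟩
  · refine ⟨fun h => ?_, Or.inr hxg⟩
    rw [← h] at hg
    rw [hx] at hg
    nlinarith [hp.one_lt]
  · exact pg_not_adj (by rw [hx, hw]; exact hnpq) (by rw [hx, hw]; exact hnqp)
  · refine pg_not_adj ?_ ?_
    · rw [hw, hg]
      intro hd
      exact hnpq (dvd_trans (dvd_mul_right p p) hd)
    · rw [hw, hg]
      intro hd
      rcases (Nat.Prime.dvd_mul hq).1 hd with h | h
      · exact hnqp h
      · exact hnqp h
  · refine pg_not_adj ?_ ?_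
    · rw [hg, hxwo]
      intro hd
      exact hnpq ((Nat.mul_dvd_mul_iff_left hp.pos).1 hd)
    · rw [hg, hxwo]
      intro hd
      exact hnqp ((Nat.mul_dvd_mul_iff_left hp.pos).1 hd)

lemma keyD {g : G} (hgw : Commute g w) {k : ℕ} (hg : orderOf g = p ^ k) :
    g ∈ zpowers x := by
  induction k using Nat.strong_induction_on generalizing g with
  | _ k ih =>
    match k with
    | 0 =>
      rw [pow_zero, orderOf_eq_one_iff] at hg
      exact hg ▸ one_mem _
    | 1 =>
      rw [pow_one] at hg
      exact keyB hcog hp hq hpq hxw hx hw hgw hg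
    | (k + 2) =>
      exfalso
      refine keyC hcog hp hq hpq hxw hx hw (g := g ^ (p ^ k)) (hgw.pow_left _) ?_
      rw [orderOf_pow, hg]
      rw [Nat.gcd_eq_right (pow_dvd_pow p (by omega)), Nat.pow_div (by omega) hp.pos]
      rw [show k + 2 - k = 2 by omega, pow_two]

/-- no elements of prime order other than `p`,`q` commuting with `w`. -/
lemma keyR {g : G} (hgw : Commute g w) {r : ℕ} (hr : r.Prime) (hg : orderOf g = r)
    (hrp : r ≠ p) (hrq : r ≠ q) : False := by
  have hpq' : Nat.Coprime p q := (Nat.coprime_primes hp hq).2 hpq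
  have hrq' : Nat.Coprime r q := (Nat.coprime_primes hr hq).2 hrq
  have hx1 : x ≠ 1 := fun h => hp.ne_one (by rw [← hx, h, orderOf_one])
  have hw1 : w ≠ 1 := fun h => hq.ne_one (by rw [← hw, h, orderOf_one])
  have hg1 : g ≠ 1 := fun h => hr.ne_one (by rw [← hg, h, orderOf_one])
  have hnqp : ¬ q ∣ p := fun hd => hpq ((Nat.prime_dvd_prime_iff_eq hq hp).1 hd).symm
  have hnpq : ¬ p ∣ q := fun hd => hpq ((Nat.prime_dvd_prime_iff_eq hp hq).1 hd)
  have hnpr : ¬ p ∣ r := fun hd => hrp ((Nat.prime_dvd_prime_iff_eq hp hr).1 hd).symm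
  have hnrp : ¬ r ∣ p := fun hd => hrp ((Nat.prime_dvd_prime_iff_eq hr hp).1 hd)
  have hxwo : orderOf (x * w) = p * q := by
    rw [hxw.orderOf_mul_eq_mul_orderOf_of_coprime (by rw [hx, hw]; exact hpq'), hx, hw]
  have hgwo : orderOf (g * w) = r * q := by
    rw [hgw.orderOf_mul_eq_mul_orderOf_of_coprime (by rw [hg, hw]; exact hrq'), hg, hw]
  have hx_xw : x ∈ zpowers (x * w) :=
    aux_mem_zpowers_mul hxw (by rw [hx, hw]; exact hpq'.symm)
  have hw_xw : w ∈ zpowers (x * w) := by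
    rw [hxw.eq]
    exact aux_mem_zpowers_mul hxw.symm (by rw [hx, hw]; exact hpq')
  have hw_gw : w ∈ zpowers (g * w) := by
    rw [hgw.eq]
    exact aux_mem_zpowers_mul hgw.symm (by rw [hg, hw]; exact hrq')
  refine hcog x (x * w) w (g * w) ⟨?_, ?_, ?_, ?_, ?_, ?_, ?_, ?_, ?_⟩
  · intro h; exact hpq (by rw [← hx, h, hw])
  · intro h
    apply hnqp
    rw [← hx, h, hgwo]
    exact dvd_mul_left q _
  · intro h
    have hxg : x = g := mul_right_cancel h
    exact hrp (by rw [← hg, ← hxg, hx])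
  · exact ⟨fun h => hw1 (mul_eq_left.1 h.symm), Or.inr hx_xw⟩
  · exact ⟨fun h => hx1 (mul_eq_right.1 h), Or.inl hw_xw⟩
  · exact ⟨fun h => hg1 (mul_eq_right.1 h.symm), Or.inr hw_gw⟩
  · exact pg_not_adj (by rw [hx, hw]; exact hnqp) (by rw [hx, hw]; exact hnpq)
  · refine pg_not_adj ?_ ?_
    · rw [hx, hgwo]
      intro hd
      exact hnqp (dvd_trans (dvd_mul_left q _) hd)
    · rw [hx, hgwo]
      intro hd
      rcases (Nat.Prime.dvd_mul hp).1 hd with h | h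
      · exact hnpr h
      · exact hnpq h
  · refine pg_not_adj ?_ ?_
    · rw [hxwo, hgwo]
      intro hd
      exact hnrp ((Nat.mul_dvd_mul_iff_right hq.pos).1 hd)
    · rw [hxwo, hgwo]
      intro hd
      exact hnpr ((Nat.mul_dvd_mul_iff_right hq.pos).1 hd)

end Key

end AuxPG

/-- `MulAut (Multiplicative M)` is the same as `AddAut M`. -/
def mulAutMultiplicative (M : Type*) [AddGroup M] :
    MulAut (Multiplicative M) ≃* Multiplicative (AddAut M) :=
  MulAutMultiplicative M

theorem centralizer_of_smaller_prime_structure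
    {G : Type*} [Group G] [Finite G]
    (hco : IsCograph (powerGraph G))
    {p q : ℕ} (hp : p.Prime) (hq : q.Prime) (hqp : q < p)
    {x w : G} (hxw : Commute x w) (hx : orderOf x = p) (hw : orderOf w = q) :
    ∃ (n : ℕ) (Q : Subgroup G),
      -- Q is an abelian q-group containing ⟨w⟩
      Subgroup.zpowers w ≤ Q ∧ IsPGroup q Q ∧
      (∀ a ∈ Q, ∀ b ∈ Q, Commute a b) ∧
      -- Q is isomorphic to a subgroup of ⟨w⟩ × C_{q^n}
      (∃ f : Q →* (Subgroup.zpowers w) × Multiplicative (ZMod (q ^ n)),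
        Function.Injective f) ∧
      -- C_G(w) is the internal semidirect product ⟨x⟩ ⋊ Q
      Q ≤ Subgroup.centralizer ({w} : Set G) ∧
      (∀ g ∈ Subgroup.centralizer ({w} : Set G), ∀ y ∈ Subgroup.zpowers x,
        g * y * g⁻¹ ∈ Subgroup.zpowers x) ∧
      Subgroup.zpowers x ⊓ Q = ⊥ ∧
      (∀ g ∈ Subgroup.centralizer ({w} : Set G),
        ∃ y ∈ Subgroup.zpowers x, ∃ u ∈ Q, g = y * u) ∧
      -- Q/⟨w⟩ acts without nontrivial fixed points on ⟨x⟩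
      (∀ u ∈ Q, u ∉ Subgroup.zpowers w →
        ∀ y ∈ Subgroup.zpowers x, y ≠ 1 → u * y * u⁻¹ ≠ y) ∧
      -- in particular |Q/⟨w⟩| divides p - 1
      (Nat.card Q / q) ∣ (p - 1) := by
  classical
  haveI : Fact p.Prime := ⟨hp⟩
  haveI : Fact q.Prime := ⟨hq⟩
  have hpq : p ≠ q := hqp.ne'
  have hmemC : ∀ g : G, g ∈ Subgroup.centralizer ({w} : Set G) ↔ Commute g w := fun g =>
    ⟨fun h => (Subgroup.mem_centralizer_singleton_iff).1 h,
     fun h => (Subgroup.mem_centralizer_singleton_iff).2 h⟩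
  set C : Subgroup G := Subgroup.centralizer ({w} : Set G) with hCdef
  have hxC : x ∈ C := (hmemC x).2 hxw
  have hwC : w ∈ C := (hmemC w).2 (Commute.refl w)
  have hPel : ∀ g : G, g ∈ C → ∀ k : ℕ, orderOf g = p ^ k → g ∈ zpowers x :=
    fun g hg k hk => keyD hco hp hq hpq hxw hx hw ((hmemC g).1 hg) hk
  have hQel : ∀ g : G, Commute g x → ∀ k : ℕ, orderOf g = q ^ k → g ∈ zpowers w :=
    fun g hg k hk => keyD hco hq hp hpq.symm hxw.symm hw hx hg hk
  have hRel : ∀ g : G, g ∈ C → ∀ r : ℕ, r.Prime → orderOf g = r → r = p ∨ r = q := by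
    intro g hg r hr ho
    by_contra hcon
    push_neg at hcon
    exact keyR hco hp hq hpq hxw hx hw ((hmemC g).1 hg) hr ho hcon.1 hcon.2
  -- condition 6 : conjugation stability
  have hconjx : ∀ g ∈ C, g * x * g⁻¹ ∈ zpowers x := by
    intro g hg
    have hmem : g * x * g⁻¹ ∈ C := mul_mem (mul_mem hg hxC) (inv_mem hg)
    have hord : orderOf (g * x * g⁻¹) = p ^ 1 := by
      rw [pow_one, ← hx]
      have := orderOf_injective (MulAut.conj g).toMonoidHom (MulAut.conj g).injective x
      simpa using this
    exact hPel _ hmem 1 hord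
  have hconj : ∀ g ∈ C, ∀ y ∈ zpowers x, g * y * g⁻¹ ∈ zpowers x := by
    intro g hg y hy
    obtain ⟨j, rfl⟩ := mem_zpowers_iff.1 hy
    have : g * x ^ j * g⁻¹ = (g * x * g⁻¹) ^ j := (conj_zpow).symm
    rw [this]
    exact zpow_mem (hconjx g hg) j
  -- inside C
  set xC : C := ⟨x, hxC⟩ with hxCdef
  set wC : C := ⟨w, hwC⟩ with hwCdef
  have hxCo : orderOf xC = p := by rw [hxCdef, Subgroup.orderOf_mk, hx]
  have hwCo : orderOf wC = q := by rw [hwCdef, Subgroup.orderOf_mk, hw]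
  set X' : Subgroup C := zpowers xC with hX'def
  have hmemX' : ∀ t : C, t ∈ X' ↔ (t : G) ∈ zpowers x := by
    intro t
    constructor
    · intro ht
      obtain ⟨k, hk⟩ := mem_zpowers_iff.1 ht
      exact mem_zpowers_iff.2 ⟨k, by rw [← hk]; simp [hxCdef]⟩
    · intro ht
      obtain ⟨k, hk⟩ := mem_zpowers_iff.1 ht
      exact mem_zpowers_iff.2 ⟨k, Subtype.ext (by simpa [hxCdef] using hk)⟩
  have hcardX' : Nat.card X' = p := by rw [hX'def, Nat.card_zpowers, hxCo]
  haveI hX'norm : X'.Normal := by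
    constructor
    intro n hn g
    refine (hmemX' _).2 ?_
    have := hconj (↑g) g.2 (↑n) ((hmemX' n).1 hn)
    push_cast
    exact this
  -- Sylow q-subgroup of C containing w
  have hWpgrp : IsPGroup q (zpowers wC) :=
    IsPGroup.of_card (by rw [Nat.card_zpowers, hwCo, pow_one])
  obtain ⟨S, hWS⟩ := hWpgrp.exists_le_sylow
  set Q : Subgroup G := (S : Subgroup C).map C.subtype with hQdef
  have hmemQ : ∀ g : G, g ∈ Q ↔ ∃ t : C, t ∈ (S : Subgroup C) ∧ (t : G) = g := by
    intro g
    rw [hQdef, Subgroup.mem_map]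
    simp
  have hQle : Q ≤ C := Subgroup.map_subtype_le _
  have hwS : wC ∈ (S : Subgroup C) := hWS (mem_zpowers wC)
  have hwQ : w ∈ Q := (hmemQ w).2 ⟨wC, hwS, rfl⟩
  have hQpgrp : IsPGroup q Q := S.isPGroup'.map _
  have hQord : ∀ g : G, g ∈ Q → ∃ k, orderOf g = q ^ k := by
    intro g hg
    exact (IsPGroup.iff_orderOf.1 hQpgrp) ⟨g, hg⟩ |>.imp fun k hk => by
      rwa [Subgroup.orderOf_mk] at hk
  -- condition 1
  have cond1 : zpowers w ≤ Q := zpowers_le.2 hwQ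
  -- condition 7
  have cond7 : zpowers x ⊓ Q = ⊥ := by
    rw [Subgroup.eq_bot_iff_forall]
    intro g hg
    obtain ⟨hg1, hg2⟩ := Subgroup.mem_inf.1 hg
    obtain ⟨k, hk⟩ := hQord g hg2
    have h1 : orderOf g ∣ p := hx ▸ orderOf_dvd_of_mem_zpowers hg1
    have h2 : Nat.Coprime p (q ^ k) := ((Nat.coprime_primes hp hq).2 hpq).pow_right _
    have : orderOf g = 1 := Nat.eq_one_of_dvd_coprimes h2 h1 (hk ▸ dvd_rfl)
    rwa [orderOf_eq_one_iff] at this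
  -- condition 9 : fixed point freeness
  have cond9 : ∀ u ∈ Q, u ∉ zpowers w → ∀ y ∈ zpowers x, y ≠ 1 → u * y * u⁻¹ ≠ y := by
    intro u hu hunw y hy hy1 heq
    apply hunw
    have hcuy : Commute u y := by
      have : u * y = y * u := by
        conv_rhs => rw [← heq]
        group
      exact this
    have hyo : orderOf y = p := by
      have h1 : orderOf y ∣ p := hx ▸ orderOf_dvd_of_mem_zpowers hy
      rcases (Nat.dvd_prime hp).1 h1 with h | h
      · exact absurd (orderOf_eq_one_iff.1 h) hy1
      · exact h
    have hxy : x ∈ zpowers y := by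
      have hle : zpowers y ≤ zpowers x := zpowers_le.2 hy
      have heq2 : zpowers y = zpowers x := Subgroup.eq_of_le_of_card_ge hle
        (by rw [Nat.card_zpowers, Nat.card_zpowers, hx, hyo])
      rw [heq2]
      exact mem_zpowers x
    have hcux : Commute u x := by
      obtain ⟨k, hk⟩ := mem_zpowers_iff.1 hxy
      rw [← hk]
      exact hcuy.zpow_right k
    obtain ⟨k, hk⟩ := hQord u hu
    exact hQel u hcux k hk
  -- counting : H = X' ⊔ S is everything
  set SC : Subgroup C := (S : Subgroup C) with hSCdef
  set H : Subgroup C := X' ⊔ SC with hHdef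
  have hCprime : ∀ r : ℕ, r.Prime → r ∣ Nat.card C → r = p ∨ r = q := by
    intro r hr hd
    haveI : Fact r.Prime := ⟨hr⟩
    obtain ⟨c, hc⟩ := exists_prime_orderOf_dvd_card' (G := C) r hd
    refine hRel ↑c c.2 r hr ?_
    rw [Subgroup.orderOf_coe, hc]
  have hp2 : ¬ (p * p ∣ Nat.card C) := by
    intro hdvd
    obtain ⟨T⟩ : Nonempty (Sylow p C) := inferInstance
    have hTle : (T : Subgroup C) ≤ X' := by
      intro t ht
      obtain ⟨k, hk⟩ := IsPGroup.iff_orderOf.1 T.isPGroup' ⟨t, ht⟩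
      rw [Subgroup.orderOf_mk] at hk
      refine (hmemX' t).2 (hPel ↑t t.2 k ?_)
      rw [Subgroup.orderOf_coe, hk]
    have hcardT : Nat.card T ∣ p := by
      have h := Subgroup.card_dvd_of_le hTle
      rwa [hcardX'] at h
    have hTidx : ¬ p ∣ (T : Subgroup C).index := T.not_dvd_index
    have hcardC : Nat.card T * (T : Subgroup C).index = Nat.card C :=
      Subgroup.card_mul_index _
    have hcop : Nat.Coprime (p * p) (T : Subgroup C).index :=
      Nat.Coprime.mul (hp.coprime_iff_not_dvd.2 hTidx) (hp.coprime_iff_not_dvd.2 hTidx)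
    have hppT : p * p ∣ Nat.card T :=
      hcop.dvd_of_dvd_mul_right (hcardC ▸ hdvd)
    have := Nat.le_of_dvd hp.pos (hppT.trans hcardT)
    nlinarith [hp.one_lt]
  have hHtop : H = ⊤ := by
    rw [← Subgroup.index_eq_one]
    by_contra hne
    obtain ⟨r, hr, hrd⟩ := Nat.exists_prime_and_dvd hne
    rcases hCprime r hr (hrd.trans (Subgroup.index_dvd_card H)) with rfl | rfl
    · have hpH : r ∣ Nat.card H :=
        hcardX' ▸ Subgroup.card_dvd_of_le (le_sup_left : X' ≤ H)
      exact hp2 (Subgroup.card_mul_index H ▸ mul_dvd_mul hpH hrd)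
    · exact S.not_dvd_index (hrd.trans (Subgroup.index_dvd_of_le (le_sup_right : SC ≤ H)))
  have cond8 : ∀ g ∈ C, ∃ y ∈ zpowers x, ∃ u ∈ Q, g = y * u := by
    intro g hg
    have hgH : (⟨g, hg⟩ : C) ∈ H := hHtop ▸ Subgroup.mem_top _
    have hgmul : (⟨g, hg⟩ : C) ∈ (X' : Set C) * (SC : Set C) := by
      rw [← Subgroup.normal_mul]
      exact hgH
    obtain ⟨y', hy', u', hu', hprod⟩ := hgmul
    refine ⟨↑y', (hmemX' y').1 hy', ↑u', (hmemQ _).2 ⟨u', hu', rfl⟩, ?_⟩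
    have := congrArg (fun t : C => (t : G)) hprod
    simpa using this.symm
  -- the conjugation homomorphism
  haveI hXcyc : IsCyclic X' := isCyclic_of_prime_card hcardX'
  haveI : Fact (Nat.card X').Prime := ⟨hcardX' ▸ hp⟩
  let e1 : Multiplicative (ZMod (Nat.card X')) ≃* X' := zmodCyclicMulEquiv hXcyc
  let e2 : MulAut X' ≃* (ZMod (Nat.card X'))ˣ :=
    (MulAut.congr e1.symm).trans ((mulAutMultiplicative _).trans (ZMod.AddAutEquivUnits _).toMultiplicative)
  haveI hAutCyc : IsCyclic (MulAut X') :=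
    isCyclic_of_surjective e2.symm.toMonoidHom e2.symm.surjective
  have hAutCard : Nat.card (MulAut X') = p - 1 := by
    rw [IsCyclic.card_mulAut, hcardX', Nat.totient_prime hp]
  set wS : SC := ⟨wC, hwS⟩ with hwSdef
  have hwSo : orderOf wS = q := by rw [hwSdef, Subgroup.orderOf_mk, hwCo]
  let χ : C →* MulAut X' := MulAut.conjNormal
  let χQ : SC →* MulAut X' := χ.comp SC.subtype
  have hχQ_apply : ∀ (u : SC) (n : X'), ((χQ u n : C) : G) = ↑↑u * ↑↑n * (↑↑u)⁻¹ := by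
    intro u n
    have : (χQ u n : C) = ↑u * ↑n * (↑u)⁻¹ := MulAut.conjNormal_apply _ _
    rw [this]
    push_cast
    rfl
  have hxX' : xC ∈ X' := mem_zpowers xC
  have hker_iff : ∀ u : SC, u ∈ χQ.ker ↔ Commute ((u : C) : G) x := by
    intro u
    rw [MonoidHom.mem_ker]
    constructor
    · intro h
      have h1 : ((χQ u ⟨xC, hxX'⟩ : C) : G) = x := by rw [h]; rfl
      rw [hχQ_apply] at h1
      have h2 : (↑↑u : G) * x * (↑↑u)⁻¹ = x := h1
      exact mul_inv_eq_iff_eq_mul.1 h2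
    · intro h
      refine DFunLike.ext _ _ fun n => ?_
      refine Subtype.ext (Subtype.ext ?_)
      have hn : ((n : C) : G) ∈ zpowers x := (hmemX' ↑n).1 n.2
      obtain ⟨k, hk⟩ := mem_zpowers_iff.1 hn
      have hcomm : Commute ((u : C) : G) ((n : C) : G) := by
        rw [← hk]; exact h.zpow_right k
      show ((χQ u n : C) : G) = ((n : C) : G)
      rw [hχQ_apply, hcomm.eq, mul_inv_cancel_right]
  have hkerQ : χQ.ker = zpowers wS := by
    ext u
    rw [hker_iff]
    constructor
    · intro hcm
      obtain ⟨k, hk⟩ := hQord ↑↑u ((hmemQ _).2 ⟨↑u, u.2, rfl⟩)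
      obtain ⟨j, hj⟩ := mem_zpowers_iff.1 (hQel ↑↑u hcm k hk)
      refine mem_zpowers_iff.2 ⟨j, ?_⟩
      refine Subtype.ext (Subtype.ext ?_)
      have : (((wS ^ j : SC) : C) : G) = w ^ j := by
        push_cast
        rfl
      rw [this]
      exact hj
    · intro hu
      obtain ⟨j, hj⟩ := mem_zpowers_iff.1 hu
      have : ((u : C) : G) = w ^ j := by
        rw [← hj]
        push_cast
        rfl
      rw [this]
      exact (hxw.symm.zpow_left j)
  have hkercentral : χQ.ker ≤ Subgroup.center SC := by
    intro u hu
    rw [Subgroup.mem_center_iff]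
    intro v
    rw [hkerQ] at hu
    obtain ⟨j, hj⟩ := mem_zpowers_iff.1 hu
    have hucoe : ((u : C) : G) = w ^ j := by
      rw [← hj]; push_cast; rfl
    have hcvw : Commute ((v : C) : G) w := (hmemC _).1 (↑v : C).2
    have hcvu : Commute ((v : C) : G) ((u : C) : G) := by
      rw [hucoe]; exact hcvw.zpow_right j
    refine Subtype.ext (Subtype.ext ?_)
    have : ((((v * u) : SC) : C) : G) = ((v:C):G) * ((u:C):G) := by push_cast; rfl
    rw [this, hcvu.eq]
    push_cast
    rfl
  have habel : ∀ a b : SC, a * b = b * a :=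
    fun a b => commutative_of_cyclic_center_quotient χQ hkercentral a b
  have cond3 : ∀ a ∈ Q, ∀ b ∈ Q, Commute a b := by
    intro a ha b hb
    obtain ⟨a', ha', rfl⟩ := (hmemQ a).1 ha
    obtain ⟨b', hb', rfl⟩ := (hmemQ b).1 hb
    have h1 := habel ⟨a', ha'⟩ ⟨b', hb'⟩
    have h2 := congrArg (fun t : SC => ((t : C) : G)) h1
    simp at h2
    exact h2
  -- cardinalities
  have hcardker : Nat.card χQ.ker = q := by rw [hkerQ, Nat.card_zpowers, hwSo]
  have hcardQS : Nat.card Q = Nat.card SC :=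
    (Nat.card_congr (Subgroup.equivMapOfInjective SC C.subtype C.subtype_injective).toEquiv).symm
  have hSCrange : Nat.card SC = Nat.card χQ.range * q := by
    rw [← hcardker, Subgroup.card_eq_card_quotient_mul_card_subgroup χQ.ker]
    congr 1
    exact Nat.card_congr (QuotientGroup.quotientKerEquivRange χQ).toEquiv
  have hdivQ : Nat.card Q / q = Nat.card χQ.range := by
    rw [hcardQS, hSCrange, Nat.mul_div_cancel _ hq.pos]
  have cond10 : (Nat.card Q / q) ∣ (p - 1) := by
    rw [hdivQ, ← hAutCard]
    exact Subgroup.card_subgroup_dvd_card _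
  -- the embedding
  have cond4 : ∃ n : ℕ, ∃ f : Q →* (zpowers w) × Multiplicative (ZMod (q ^ n)),
      Function.Injective f := by
    haveI hRcyc : IsCyclic χQ.range := Subgroup.isCyclic _
    obtain ⟨m, hm⟩ := (S.isPGroup' : IsPGroup q SC).exists_card_eq
    have eQS : Q ≃* SC := (Subgroup.equivMapOfInjective SC C.subtype C.subtype_injective).symm
    obtain ⟨r0, hr0⟩ := IsCyclic.exists_generator (α := χQ.range)
    obtain ⟨t, ht⟩ := r0.2
    have hdecomp : ∀ a : SC, ∃ c, c ∈ zpowers wS ∧ ∃ j : ℤ, a = c * t ^ j := by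
      intro a
      obtain ⟨j, hj⟩ := mem_zpowers_iff.1 (hr0 ⟨χQ a, ⟨a, rfl⟩⟩)
      have hj' : χQ (t ^ j) = χQ a := by
        have hco2 := congrArg (fun z : χQ.range => (z : MulAut X')) hj
        simp only at hco2
        rw [map_zpow, ht]
        rw [← hco2]
        push_cast
        rfl
      have hmemk : a * (t ^ j)⁻¹ ∈ χQ.ker := by
        rw [MonoidHom.mem_ker, map_mul, map_inv, hj']
        simp
      rw [hkerQ] at hmemk
      exact ⟨a * (t ^ j)⁻¹, hmemk, j, by group⟩
    by_cases hcyc : wS ∈ zpowers t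
    · haveI hScyc : IsCyclic SC := ⟨⟨t, fun a => by
        obtain ⟨c, hc, j, rfl⟩ := hdecomp a
        exact mul_mem (zpowers_le.2 hcyc hc) (zpow_mem (mem_zpowers t) j)⟩⟩
      haveI hQcyc : IsCyclic Q := isCyclic_of_surjective eQS.symm.toMonoidHom eQS.symm.surjective
      have hcq : Nat.card Q = q ^ m := by rw [hcardQS]; exact hm
      refine ⟨m, ?_⟩
      rw [← hcq]
      exact ⟨MonoidHom.prod 1 (zmodCyclicMulEquiv hQcyc).symm.toMonoidHom,
        fun a b hab => (zmodCyclicMulEquiv hQcyc).symm.injective (congrArg Prod.snd hab)⟩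
    · -- non-cyclic case : S = ⟨w⟩ × ⟨t⟩
      have hdisj : ∀ a : SC, a ∈ zpowers wS → a ∈ zpowers t → a = 1 := by
        intro a ha hat
        by_contra h1
        have hao : orderOf a = q := by
          have hd : orderOf a ∣ q := by rw [← hwSo]; exact orderOf_dvd_of_mem_zpowers ha
          rcases (Nat.dvd_prime hq).1 hd with h | h
          · exact absurd (orderOf_eq_one_iff.1 h) h1
          · exact h
        have heqz : zpowers a = zpowers wS := Subgroup.eq_of_le_of_card_ge (zpowers_le.2 ha)
          (by rw [Nat.card_zpowers, Nat.card_zpowers, hao, hwSo])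
        have hwSa : wS ∈ zpowers a := by rw [heqz]; exact mem_zpowers wS
        exact hcyc (zpowers_le.2 hat hwSa)
      choose cfun cmem jfun hdec using hdecomp
      have huniq : ∀ (a c : SC), c ∈ zpowers wS → ∀ j : ℤ, a = c * t ^ j → c = cfun a := by
        intro a c hc j hj
        have h1 : c * t ^ j = cfun a * t ^ (jfun a) := by rw [← hj, ← hdec a]
        have h2 : (cfun a)⁻¹ * c = t ^ (jfun a - j) := by
          have hc1 : (cfun a)⁻¹ * (cfun a * t ^ (jfun a)) * (t ^ j)⁻¹ = t ^ (jfun a - j) := by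
            rw [zpow_sub]
            group
          calc (cfun a)⁻¹ * c = (cfun a)⁻¹ * (c * t ^ j) * (t ^ j)⁻¹ := by group
            _ = (cfun a)⁻¹ * (cfun a * t ^ (jfun a)) * (t ^ j)⁻¹ := by rw [h1]
            _ = t ^ (jfun a - j) := hc1
        have hm1 : (cfun a)⁻¹ * c ∈ zpowers wS := mul_mem (inv_mem (cmem a)) hc
        have hm2 : (cfun a)⁻¹ * c ∈ zpowers t := by
          rw [h2]
          exact zpow_mem (mem_zpowers t) _
        have h9 := hdisj ((cfun a)⁻¹ * c) hm1 hm2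
        exact (inv_mul_eq_one.1 h9).symm
      have hcfun_one : cfun 1 = 1 := (huniq 1 1 (one_mem _) 0 (by group)).symm
      have hcfun_mul : ∀ a b : SC, cfun (a * b) = cfun a * cfun b := by
        intro a b
        refine (huniq (a * b) (cfun a * cfun b) (mul_mem (cmem a) (cmem b))
          (jfun a + jfun b) ?_).symm
        conv_lhs => rw [hdec a, hdec b]
        rw [zpow_add]
        have hcm : t ^ (jfun a) * cfun b = cfun b * t ^ (jfun a) := habel _ _
        calc cfun a * t ^ (jfun a) * (cfun b * t ^ (jfun b))
            = cfun a * (t ^ (jfun a) * cfun b) * t ^ (jfun b) := by group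
          _ = cfun a * (cfun b * t ^ (jfun a)) * t ^ (jfun b) := by rw [hcm]
          _ = cfun a * cfun b * (t ^ (jfun a) * t ^ (jfun b)) := by group
      have hcoe_w : ∀ a : SC, a ∈ zpowers wS → ((a : C) : G) ∈ zpowers w := by
        intro a ha
        obtain ⟨j, hj⟩ := mem_zpowers_iff.1 ha
        refine mem_zpowers_iff.2 ⟨j, ?_⟩
        rw [← hj]
        push_cast
        rfl
      let η : SC →* ↥(zpowers w) :=
        { toFun := fun a => ⟨((cfun a : C) : G), hcoe_w _ (cmem a)⟩
          map_one' := by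
            refine Subtype.ext ?_
            show ((cfun 1 : C) : G) = 1
            rw [hcfun_one]
            rfl
          map_mul' := fun a b => by
            refine Subtype.ext ?_
            show ((cfun (a * b) : C) : G) = ((cfun a : C) : G) * ((cfun b : C) : G)
            rw [hcfun_mul]
            push_cast
            rfl }
      let eR : Multiplicative (ZMod (Nat.card χQ.range)) ≃* χQ.range := zmodCyclicMulEquiv hRcyc
      let ζ : SC →* Multiplicative (ZMod (Nat.card χQ.range)) :=
        (eR.symm.toMonoidHom).comp χQ.rangeRestrict
      have hm1le : 1 ≤ m := by
        by_contra hm0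
        have hmz : Nat.card SC = 1 := by
          rw [hm, Nat.lt_one_iff.1 (by omega : m < 1), pow_zero]
        have hq1 : q ∣ 1 := by
          rw [← hmz, ← hwSo]
          exact orderOf_dvd_natCard wS
        exact hq.one_lt.ne' (Nat.dvd_one.1 hq1)
      have hcR : Nat.card χQ.range = q ^ (m - 1) := by
        have hcalc : Nat.card χQ.range * q = q ^ (m - 1) * q := by
          rw [← hSCrange, hm, ← pow_succ, Nat.sub_add_cancel hm1le]
        exact Nat.eq_of_mul_eq_mul_right hq.pos hcalc
      have hinj : Function.Injective (η.prod ζ) := by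
        intro a b hab2
        have h2 : χQ.rangeRestrict a = χQ.rangeRestrict b :=
          eR.symm.injective (congrArg Prod.snd hab2)
        have h3 : χQ a = χQ b := Subtype.ext_iff.1 h2
        have h4 : a * b⁻¹ ∈ χQ.ker := by
          rw [MonoidHom.mem_ker, map_mul, map_inv, h3]
          simp
        rw [hkerQ] at h4
        have h5 : cfun (a * b⁻¹) = a * b⁻¹ := (huniq _ _ h4 0 (by group)).symm
        have h6 : η (a * b⁻¹) = 1 := by
          have hfst : η a = η b := by
            have := congrArg Prod.fst hab2
            simpa [MonoidHom.prod_apply] using this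
          rw [map_mul, map_inv, hfst]
          simp
        have h7 : ((cfun (a * b⁻¹) : C) : G) = 1 := by
          have := congrArg Subtype.val h6
          simpa [η] using this
        rw [h5] at h7
        have h8 : a * b⁻¹ = 1 := by
          refine Subtype.ext (Subtype.ext ?_)
          push_cast
          simpa using h7
        exact mul_inv_eq_one.1 h8
      refine ⟨m - 1, ?_⟩
      rw [← hcR]
      exact ⟨(η.prod ζ).comp eQS.toMonoidHom, fun a b hab => eQS.injective (hinj hab)⟩
  obtain ⟨n, f, hf⟩ := cond4
  exact ⟨n, Q, cond1, hQpgrp, cond3, ⟨f, hf⟩, hQle, hconj, cond7, cond8, cond9, cond10⟩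
end

section
/- Let G be a finite group whose power graph is a cograph. If {q, p} with q < p is an edge of the prime graph of G (i.e., G contains an element of order pq), then the Sylow p-subgroups of G are cyclic of order p. -/
section Aux

open Subgroup

variable {G : Type*} [Group G] [Finite G]

/-- projection onto the second factor of a commuting product. -/
private lemma proj_mul {a b : G} {n : ℕ} (hc : Commute a b) (ha : orderOf a ∣ n)
    (hb : n ≡ 1 [MOD orderOf b]) : (a * b) ^ n = b := by
  rw [hc.mul_pow, orderOf_dvd_iff_pow_eq_one.mp ha, one_mul]
  conv_rhs => rw [← pow_one b]
  exact pow_eq_pow_iff_modEq.mpr hb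

private lemma pow_fix {b : G} {n : ℕ} (hb : n ≡ 1 [MOD orderOf b]) : b ^ n = b := by
  conv_rhs => rw [← pow_one b]
  exact pow_eq_pow_iff_modEq.mpr hb

/-- If `a` has prime order and `b` is a nontrivial power of `a`, then `a` is a power of `b`. -/
private lemma gen_symm {r : ℕ} (hr : r.Prime) {a b : G} (ha : orderOf a = r)
    (hb : b ∈ zpowers a) (hb1 : b ≠ 1) : a ∈ zpowers b := by
  obtain ⟨k, hk0⟩ := mem_powers_iff_mem_zpowers.mpr hb
  have hk : a ^ k = b := hk0
  have hrk : ¬ r ∣ k := by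
    rintro ⟨j, rfl⟩
    apply hb1
    rw [← hk, pow_mul, ← ha, pow_orderOf_eq_one, one_pow]
  have hco : Nat.Coprime k r := Nat.coprime_comm.mp (hr.coprime_iff_not_dvd.mpr hrk)
  have hferm : k ^ (r - 1) ≡ 1 [MOD r] := by
    have := Nat.ModEq.pow_totient hco
    rwa [Nat.totient_prime hr] at this
  rw [← hk, ← mem_powers_iff_mem_zpowers]
  refine ⟨k ^ (r - 2), ?_⟩
  show (a ^ k) ^ k ^ (r - 2) = a
  have hkk : k * k ^ (r - 2) = k ^ (r - 1) := by
    have h2 : r - 2 + 1 = r - 1 := by have := hr.two_le; omega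
    rw [← h2, pow_succ']
  rw [← pow_mul, hkk]
  exact pow_fix (by rwa [ha])

private lemma not_mem_of_not_dvd {a b : G} (h : ¬ orderOf a ∣ orderOf b) :
    a ∉ zpowers b := fun hm => h (orderOf_dvd_of_mem_zpowers hm)

/-- Extracting one factor from membership in the cyclic group generated by a
commuting product. -/
private lemma mem_proj {x v c : G} {n : ℕ} (hxv : Commute x v) (hxn : orderOf x ∣ n)
    (hvn : n ≡ 1 [MOD orderOf v]) (hc : c ∈ zpowers (x * v)) : c ^ n ∈ zpowers v := by
  obtain ⟨k, hk0⟩ := mem_powers_iff_mem_zpowers.mpr hc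
  have hk : (x * v) ^ k = c := hk0
  have h1 : (x * v) ^ n = v := proj_mul hxv hxn hvn
  rw [← mem_powers_iff_mem_zpowers]
  refine ⟨k, ?_⟩
  calc v ^ k = ((x * v) ^ n) ^ k := by rw [h1]
    _ = ((x * v) ^ k) ^ n := by rw [← pow_mul, mul_comm n k, pow_mul]
    _ = c ^ n := by rw [hk]


private lemma ord_part {p q : ℕ} (hp : p.Prime) (hq : q.Prime) {g : G}
    (hg : orderOf g = p * q) : orderOf (g ^ q) = p := by
  rw [orderOf_pow, hg, Nat.gcd_eq_right (dvd_mul_left q p), Nat.mul_div_cancel _ hq.pos]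

/-- P4 lemma 1 : if the power graph is a cograph, `g` has order `pq` and the `p`-part
`g ^ q` lies in the cyclic group generated by a `p`-element `z`, then `z ∈ ⟨g ^ q⟩`. -/
private lemma lemL1 {p q : ℕ} (hco : IsCograph (powerGraph G)) (hp : p.Prime) (hq : q.Prime)
    (hne : p ≠ q) {g z : G} (hg : orderOf g = p * q) {m : ℕ} (hzo : orderOf z = p ^ m)
    (hxz : g ^ q ∈ Subgroup.zpowers z) : z ∈ Subgroup.zpowers (g ^ q) := by
  by_contra hcon
  have hx : orderOf (g ^ q) = p := ord_part hp hq hg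
  have hy : orderOf (g ^ p) = q := by
    rw [mul_comm] at hg; exact ord_part hq hp hg
  have hx1 : (g ^ q) ≠ 1 := by
    intro h; rw [h, orderOf_one] at hx; exact hp.one_lt.ne' hx.symm
  have hpz : p ∣ orderOf z := hx ▸ orderOf_dvd_of_mem_zpowers hxz
  have hqpm : ¬ q ∣ p ^ m := by
    intro h
    exact hne.symm ((Nat.prime_dvd_prime_iff_eq hq hp).mp (hq.dvd_of_dvd_pow h))
  have hqz : ¬ orderOf z ∣ q := by
    intro h
    exact hne ((Nat.prime_dvd_prime_iff_eq hp hq).mp (hpz.trans h))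
  apply hco z (g ^ q) g (g ^ p)
  refine ⟨?_, ?_, ?_, ?_, ?_, ?_, ?_, ?_, ?_⟩
  · -- z ≠ g
    intro e
    rw [e, hg] at hzo
    exact hqpm (hzo ▸ Dvd.intro_left p rfl)
  · -- z ≠ g ^ p
    intro e
    rw [e, hy] at hzo
    exact hqpm (hzo ▸ dvd_refl _)
  · -- g ^ q ≠ g ^ p
    intro e
    have h2 := hx; rw [e, hy] at h2; exact hne h2.symm
  · -- Adj z (g^q)
    exact ⟨fun e => hcon (e ▸ Subgroup.mem_zpowers _), Or.inl hxz⟩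
  · -- Adj (g^q) g
    refine ⟨?_, Or.inr (Subgroup.mem_zpowers_iff.mpr ⟨(q : ℤ), by simp⟩)⟩
    intro e
    have h2 := hx; rw [e] at h2; rw [hg] at h2
    have hlt : p < p * q := (Nat.lt_mul_iff_one_lt_right hp.pos).mpr hq.one_lt
    omega
  · -- Adj g (g^p)
    refine ⟨?_, Or.inl (Subgroup.mem_zpowers_iff.mpr ⟨(p : ℤ), by simp⟩)⟩
    intro e
    have h2 := hy; rw [← e] at h2; rw [hg] at h2
    have hlt : q < p * q := (Nat.lt_mul_iff_one_lt_left hq.pos).mpr hp.one_lt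
    omega
  · -- ¬ Adj z g
    rintro ⟨-, h | h⟩
    · have := orderOf_dvd_of_mem_zpowers h
      rw [hg, hzo] at this
      exact hqpm ((dvd_mul_left q p).trans this)
    · have hd := orderOf_dvd_of_mem_zpowers h
      rw [hg, hzo] at hd
      have hcop : Nat.Coprime (p ^ m) q := Nat.coprime_comm.mp (hq.coprime_iff_not_dvd.mpr hqpm)
      have hdp : orderOf z ∣ p := hzo ▸ hcop.dvd_of_dvd_mul_right hd
      apply hcon
      obtain ⟨k, hk0⟩ := mem_powers_iff_mem_zpowers.mpr h
      have hk : g ^ k = z := hk0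
      have hzp : z ^ p = 1 := orderOf_dvd_iff_pow_eq_one.mp hdp
      have hdg : orderOf g ∣ k * p := orderOf_dvd_iff_pow_eq_one.mpr (by rw [pow_mul, hk, hzp])
      rw [hg] at hdg
      have hqk : q ∣ k := by
        have h3 : q * p ∣ k * p := by rwa [mul_comm p q] at hdg
        exact (Nat.mul_dvd_mul_iff_right hp.pos).mp h3
      obtain ⟨t, rfl⟩ := hqk
      rw [← hk, pow_mul]
      exact Subgroup.mem_zpowers_iff.mpr ⟨(t : ℤ), by simp⟩
  · -- ¬ Adj z (g^p)
    rintro ⟨-, h | h⟩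
    · have := orderOf_dvd_of_mem_zpowers h
      rw [hy, hzo] at this
      exact hqpm this
    · exact hqz (hy ▸ orderOf_dvd_of_mem_zpowers h)
  · -- ¬ Adj (g^q) (g^p)
    rintro ⟨-, h | h⟩
    · have := orderOf_dvd_of_mem_zpowers h
      rw [hy, hx] at this
      exact hne ((Nat.prime_dvd_prime_iff_eq hq hp).mp this).symm
    · have := orderOf_dvd_of_mem_zpowers h
      rw [hy, hx] at this
      exact hne ((Nat.prime_dvd_prime_iff_eq hp hq).mp this)


private lemma fermat_mod {r : ℕ} (hr : r.Prime) {a : ℕ} (h : Nat.Coprime a r) :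
    a ^ (r - 1) ≡ 1 [MOD r] := by
  have := Nat.ModEq.pow_totient h
  rwa [Nat.totient_prime hr] at this

private lemma ord_ne_one {r : ℕ} (hr : r.Prime) {a : G} (ha : orderOf a = r) : a ≠ 1 :=
  fun e => hr.one_lt.ne' (by rw [← ha, e, orderOf_one])

/-- P4 lemma 2 : two elements of order `q` commuting with a common element of order `p`
generate the same cyclic subgroup. -/
private lemma lemL2 {p q : ℕ} (hco : IsCograph (powerGraph G)) (hp : p.Prime) (hq : q.Prime)
    (hne : p ≠ q) {x u w : G} (hx : orderOf x = p) (hu : orderOf u = q) (hw : orderOf w = q)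
    (hxu : Commute x u) (hxw : Commute x w) : u ∈ Subgroup.zpowers w := by
  by_contra hcon
  have hpq : Nat.Coprime p q := (Nat.coprime_primes hp hq).mpr hne
  have hp1 : p - 1 ≠ 0 := by have := hp.two_le; omega
  have hq1 : q - 1 ≠ 0 := by have := hq.two_le; omega
  -- the two projection exponents
  set n₁ := q ^ (p - 1) with hn₁
  set n₂ := p ^ (q - 1) with hn₂
  have hn₁q : orderOf u ∣ n₁ := by rw [hu]; exact dvd_pow_self q hp1
  have hn₁w : orderOf w ∣ n₁ := by rw [hw]; exact dvd_pow_self q hp1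
  have hn₁p : n₁ ≡ 1 [MOD orderOf x] := by rw [hx]; exact fermat_mod hp hpq.symm
  have hn₂p : orderOf x ∣ n₂ := by rw [hx]; exact dvd_pow_self p hq1
  have hn₂u : n₂ ≡ 1 [MOD orderOf u] := by rw [hu]; exact fermat_mod hq hpq
  have hn₂w : n₂ ≡ 1 [MOD orderOf w] := by rw [hw]; exact fermat_mod hq hpq
  have hx1 : x ≠ 1 := ord_ne_one hp hx
  have hu1 : u ≠ 1 := ord_ne_one hq hu
  have hw1 : w ≠ 1 := ord_ne_one hq hw
  have hoxu : orderOf (x * u) = p * q := by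
    rw [hxu.orderOf_mul_eq_mul_orderOf_of_coprime (by rw [hx, hu]; exact hpq), hx, hu]
  have howx : orderOf (w * x) = p * q := by
    rw [← hxw.eq, hxw.orderOf_mul_eq_mul_orderOf_of_coprime (by rw [hx, hw]; exact hpq),
      hx, hw]
  have hlt : q < p * q := (Nat.lt_mul_iff_one_lt_left hq.pos).mpr hp.one_lt
  have hltp : p < p * q := (Nat.lt_mul_iff_one_lt_right hp.pos).mpr hq.one_lt
  -- projections
  have hproj_wx : (w * x) ^ n₂ = w := by rw [← hxw.eq]; exact proj_mul hxw hn₂p hn₂w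
  have hproj_wx' : x ∈ Subgroup.zpowers (w * x) := by
    rw [← mem_powers_iff_mem_zpowers]
    refine ⟨n₁, ?_⟩
    show (w * x) ^ n₁ = x
    exact proj_mul hxw.symm hn₁w hn₁p
  have hproj_xu : (x * u) ^ n₂ = u := proj_mul hxu hn₂p hn₂u
  -- from membership in zpowers (w*x) we can project to w:
  have hWmem : ∀ c : G, c ∈ Subgroup.zpowers (w * x) → c ^ n₂ ∈ Subgroup.zpowers w := by
    intro c hc
    rw [← hxw.eq] at hc
    exact mem_proj hxw hn₂p hn₂w hc
  have hUmem : ∀ c : G, c ∈ Subgroup.zpowers (x * u) → c ^ n₂ ∈ Subgroup.zpowers u := fun c hc =>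
    mem_proj hxu hn₂p hn₂u hc
  apply hco w (w * x) x (x * u)
  refine ⟨?_, ?_, ?_, ?_, ?_, ?_, ?_, ?_, ?_⟩
  · -- w ≠ x
    intro e; exact hne (by rw [← hx, ← e, hw])
  · -- w ≠ x * u
    intro e
    have h2 := hw; rw [e, hoxu] at h2
    omega
  · -- w * x ≠ x * u
    intro e
    apply hcon
    have h2 : (w * x) ^ n₂ = (x * u) ^ n₂ := by rw [e]
    rw [hproj_wx, hproj_xu] at h2
    exact h2 ▸ Subgroup.mem_zpowers _
  · -- Adj w (w*x)
    refine ⟨fun e => hx1 (left_eq_mul.mp e), Or.inr ?_⟩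
    rw [← mem_powers_iff_mem_zpowers]
    exact ⟨n₂, hproj_wx⟩
  · -- Adj (w*x) x
    exact ⟨fun e => hw1 (mul_eq_right.mp e), Or.inl hproj_wx'⟩
  · -- Adj x (x*u)
    refine ⟨fun e => hu1 (left_eq_mul.mp e), Or.inr ?_⟩
    rw [← mem_powers_iff_mem_zpowers]
    refine ⟨n₁, ?_⟩
    show (x * u) ^ n₁ = x
    rw [hxu.eq]
    exact proj_mul hxu.symm hn₁q hn₁p
  · -- ¬ Adj w x
    rintro ⟨-, h | h⟩
    · have := orderOf_dvd_of_mem_zpowers h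
      rw [hx, hw] at this
      exact hne ((Nat.prime_dvd_prime_iff_eq hp hq).mp this)
    · have := orderOf_dvd_of_mem_zpowers h
      rw [hx, hw] at this
      exact hne ((Nat.prime_dvd_prime_iff_eq hq hp).mp this).symm
  · -- ¬ Adj w (x*u)
    rintro ⟨-, h | h⟩
    · have := orderOf_dvd_of_mem_zpowers h
      rw [hoxu, hw] at this
      have := Nat.le_of_dvd hq.pos this
      omega
    · have h2 := hUmem w h
      rw [pow_fix hn₂w] at h2
      exact hcon (gen_symm hq hu h2 hw1)
  · -- ¬ Adj (w*x) (x*u)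
    rintro ⟨-, h | h⟩
    · have h2 := hWmem (x * u) h
      rw [hproj_xu] at h2
      exact hcon h2
    · have h2 := hUmem (w * x) h
      rw [hproj_wx] at h2
      exact hcon (gen_symm hq hu h2 hw1)

/-- P4 lemma 4 : an element of order `q` commuting with `x` (order `p`) and with an
order-`p` element `z` outside `⟨x⟩` yields an induced P4. -/
private lemma lemL4 {p q : ℕ} (hco : IsCograph (powerGraph G)) (hp : p.Prime) (hq : q.Prime)
    (hne : p ≠ q) {x y z : G} (hx : orderOf x = p) (hy : orderOf y = q) (hz : orderOf z = p)
    (hxy : Commute x y) (hyz : Commute y z) (hznx : z ∉ Subgroup.zpowers x) : False := by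
  have hpq : Nat.Coprime p q := (Nat.coprime_primes hp hq).mpr hne
  have hp1 : p - 1 ≠ 0 := by have := hp.two_le; omega
  have hq1 : q - 1 ≠ 0 := by have := hq.two_le; omega
  set n₁ := q ^ (p - 1) with hn₁
  set n₂ := p ^ (q - 1) with hn₂
  have hn₁y : orderOf y ∣ n₁ := by rw [hy]; exact dvd_pow_self q hp1
  have hn₁x : n₁ ≡ 1 [MOD orderOf x] := by rw [hx]; exact fermat_mod hp hpq.symm
  have hn₁z : n₁ ≡ 1 [MOD orderOf z] := by rw [hz]; exact fermat_mod hp hpq.symm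
  have hn₂x : orderOf x ∣ n₂ := by rw [hx]; exact dvd_pow_self p hq1
  have hn₂z : orderOf z ∣ n₂ := by rw [hz]; exact dvd_pow_self p hq1
  have hn₂y : n₂ ≡ 1 [MOD orderOf y] := by rw [hy]; exact fermat_mod hq hpq
  have hx1 : x ≠ 1 := ord_ne_one hp hx
  have hy1 : y ≠ 1 := ord_ne_one hq hy
  have hz1 : z ≠ 1 := ord_ne_one hp hz
  have hxnz : x ∉ Subgroup.zpowers z := fun h => hznx (gen_symm hp hz h hx1)
  have hoxy : orderOf (x * y) = p * q := by
    rw [hxy.orderOf_mul_eq_mul_orderOf_of_coprime (by rw [hx, hy]; exact hpq), hx, hy]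
  have hoyz : orderOf (y * z) = q * p := by
    rw [hyz.orderOf_mul_eq_mul_orderOf_of_coprime (by rw [hy, hz]; exact hpq.symm), hy, hz]
  -- projections
  have hproj_xy_x : (x * y) ^ n₁ = x := by rw [hxy.eq]; exact proj_mul hxy.symm hn₁y hn₁x
  have hproj_xy_y : (x * y) ^ n₂ = y := proj_mul hxy hn₂x hn₂y
  have hproj_yz_z : (y * z) ^ n₁ = z := proj_mul hyz hn₁y hn₁z
  have hproj_yz_y : (y * z) ^ n₂ = y := by rw [hyz.eq]; exact proj_mul hyz.symm hn₂z hn₂y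
  have hXmem : ∀ c : G, c ∈ Subgroup.zpowers (x * y) → c ^ n₁ ∈ Subgroup.zpowers x := by
    intro c hc
    rw [hxy.eq] at hc
    exact mem_proj hxy.symm hn₁y hn₁x hc
  have hZmem : ∀ c : G, c ∈ Subgroup.zpowers (y * z) → c ^ n₁ ∈ Subgroup.zpowers z := fun c hc =>
    mem_proj hyz hn₁y hn₁z hc
  apply hco x (x * y) y (y * z)
  refine ⟨?_, ?_, ?_, ?_, ?_, ?_, ?_, ?_, ?_⟩
  · -- x ≠ y
    intro e; exact hne (by rw [← hx, e, hy])
  · -- x ≠ y * z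
    intro e
    have h2 := hx; rw [e, hoyz] at h2
    have hlt : p < q * p := (Nat.lt_mul_iff_one_lt_left hp.pos).mpr hq.one_lt
    omega
  · -- x * y ≠ y * z
    intro e
    apply hznx
    have h2 : (x * y) ^ n₁ = (y * z) ^ n₁ := by rw [e]
    rw [hproj_xy_x, hproj_yz_z] at h2
    exact h2 ▸ Subgroup.mem_zpowers _
  · -- Adj x (x*y)
    refine ⟨fun e => hy1 (left_eq_mul.mp e), Or.inr ?_⟩
    rw [← mem_powers_iff_mem_zpowers]
    exact ⟨n₁, hproj_xy_x⟩
  · -- Adj (x*y) y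
    refine ⟨fun e => hx1 (mul_eq_right.mp e), Or.inl ?_⟩
    rw [← mem_powers_iff_mem_zpowers]
    exact ⟨n₂, hproj_xy_y⟩
  · -- Adj y (y*z)
    refine ⟨fun e => hz1 (left_eq_mul.mp e), Or.inr ?_⟩
    rw [← mem_powers_iff_mem_zpowers]
    exact ⟨n₂, hproj_yz_y⟩
  · -- ¬ Adj x y
    rintro ⟨-, h | h⟩
    · have := orderOf_dvd_of_mem_zpowers h
      rw [hx, hy] at this
      exact hne ((Nat.prime_dvd_prime_iff_eq hq hp).mp this).symm
    · have := orderOf_dvd_of_mem_zpowers h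
      rw [hx, hy] at this
      exact hne ((Nat.prime_dvd_prime_iff_eq hp hq).mp this)
  · -- ¬ Adj x (y*z)
    rintro ⟨-, h | h⟩
    · have := orderOf_dvd_of_mem_zpowers h
      rw [hoyz, hx] at this
      have := Nat.le_of_dvd hp.pos this
      have hlt : p < q * p := (Nat.lt_mul_iff_one_lt_left hp.pos).mpr hq.one_lt
      omega
    · have h2 := hZmem x h
      rw [pow_fix hn₁x] at h2
      exact hxnz h2
  · -- ¬ Adj (x*y) (y*z)
    rintro ⟨-, h | h⟩
    · have h2 := hXmem (y * z) h
      rw [hproj_yz_z] at h2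
      exact hznx h2
    · have h2 := hZmem (x * y) h
      rw [hproj_xy_x] at h2
      exact hxnz h2


private lemma conj_pow'' (a b : G) (t : ℕ) : (a * b * a⁻¹) ^ t = a * b ^ t * a⁻¹ := by
  induction t with
  | zero => simp
  | succ t ih => rw [pow_succ, ih, pow_succ]; group

end Aux

theorem sylow_p_cyclic_of_prime_graph_edge
    {G : Type*} [Group G] [Finite G]
    (hco : IsCograph (powerGraph G))
    {p q : ℕ} (hp : p.Prime) (hq : q.Prime) (hqp : q < p)
    (hedge : ∃ g : G, orderOf g = p * q) :
    ∀ P : Sylow p G, Nat.card (P : Subgroup G) = p := by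
  intro P
  haveI : Fact p.Prime := ⟨hp⟩
  haveI : Fact q.Prime := ⟨hq⟩
  obtain ⟨g, hg⟩ := hedge
  have hne : p ≠ q := (Nat.ne_of_lt hqp).symm
  have hx : orderOf (g ^ q) = p := ord_part hp hq hg
  have hy : orderOf (g ^ p) = q := by rw [mul_comm] at hg; exact ord_part hq hp hg
  set x := g ^ q with hxdef
  set y := g ^ p with hydef
  have hxy : Commute x y := Commute.pow_pow_self g q p
  have hcardP : Nat.card (P : Subgroup G) = p ^ (Nat.card G).factorization p :=
    P.card_eq_multiplicity
  set ν := (Nat.card G).factorization p with hνdef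
  have hν1 : 1 ≤ ν := by
    refine hp.factorization_pos_of_dvd Nat.card_pos.ne' ?_
    exact hx ▸ orderOf_dvd_natCard x
  rcases eq_or_lt_of_le hν1 with h1 | hν2
  · rw [hcardP, ← h1, pow_one]
  exfalso
  -- a Sylow p-subgroup containing x
  have hxgrp : IsPGroup p (Subgroup.zpowers x) :=
    IsPGroup.of_card (by rw [Nat.card_zpowers, hx, pow_one])
  obtain ⟨P', hle⟩ := hxgrp.exists_le_sylow
  have hxP' : x ∈ (P' : Subgroup G) := hle (Subgroup.mem_zpowers x)
  have hcard' : Nat.card (P' : Subgroup G) = p ^ ν := P'.card_eq_multiplicity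
  have hA : ∀ z : G, (∃ m, orderOf z = p ^ m) → x ∈ Subgroup.zpowers z →
      z ∈ Subgroup.zpowers x := fun z hzm hxz => by
    obtain ⟨m, hm⟩ := hzm
    exact lemL1 hco hp hq hne hg hm hxz
  -- order-reduction: any nontrivial p-element has a power of order exactly p
  have reduce : ∀ v : G, v ≠ 1 → (∃ c, orderOf v = p ^ c) →
      ∃ j : ℕ, orderOf (v ^ j) = p ∧ v ^ j ∈ Subgroup.zpowers v := by
    rintro v hv1 ⟨c, hc⟩
    have hc0 : c ≠ 0 := by
      rintro rfl
      rw [pow_zero, orderOf_eq_one_iff] at hc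
      exact hv1 hc
    refine ⟨p ^ (c - 1), ?_, ?_⟩
    · rw [orderOf_pow, hc, Nat.gcd_eq_right (pow_dvd_pow p (by omega)),
        Nat.pow_div (by omega) hp.pos, (by omega : c - (c - 1) = 1), pow_one]
    · exact Subgroup.mem_zpowers_iff.mpr ⟨(p ^ (c - 1) : ℕ), by rw [zpow_natCast]⟩
  -- every element of P' has p-power order (in G)
  have pord : ∀ v : G, v ∈ (P' : Subgroup G) → ∃ c, orderOf v = p ^ c := by
    intro v hv
    obtain ⟨c, hc⟩ := P'.isPGroup' ⟨v, hv⟩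
    have hcG : v ^ p ^ c = 1 := by simpa using congrArg Subtype.val hc
    obtain ⟨m, -, hmeq⟩ := (Nat.dvd_prime_pow hp).mp (orderOf_dvd_iff_pow_eq_one.mpr hcG)
    exact ⟨m, hmeq⟩
  -- E-step
  obtain ⟨z, hzord, hzx, hznx⟩ :
      ∃ z : G, orderOf z = p ∧ Commute z x ∧ z ∉ Subgroup.zpowers x := by
    haveI : Nontrivial (P' : Subgroup G) := by
      rw [← Finite.one_lt_card_iff_nontrivial, hcard']
      exact Nat.one_lt_pow (by omega) hp.one_lt
    haveI := P'.isPGroup'.center_nontrivial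
    obtain ⟨wc, hwc⟩ := exists_ne (1 : Subgroup.center (P' : Subgroup G))
    set w : (P' : Subgroup G) := (wc : (P' : Subgroup G)) with hwdef
    have hwG1 : (w : G) ≠ 1 := by
      intro e
      apply hwc
      ext
      exact e
    have hwcomm : ∀ u : G, u ∈ (P' : Subgroup G) → Commute (w : G) u := by
      intro u hu
      have h1 := Subgroup.mem_center_iff.mp wc.2 ⟨u, hu⟩
      exact (congrArg Subtype.val h1).symm
    obtain ⟨j, hjord, hjmem⟩ := reduce (w : G) hwG1 (pord (w : G) w.2)
    set w1 := (w : G) ^ j with hw1def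
    have hw1x : Commute w1 x := ((hwcomm x hxP').pow_left j)
    by_cases hcase : w1 ∈ Subgroup.zpowers x
    · -- x is central in P'
      have hw1ne : w1 ≠ 1 := ord_ne_one hp hjord
      have hxw1 : x ∈ Subgroup.zpowers w1 := gen_symm hp hx hcase hw1ne
      have hxcomm : ∀ u : G, u ∈ (P' : Subgroup G) → Commute x u := by
        intro u hu
        obtain ⟨kk, hkk⟩ := Subgroup.mem_zpowers_iff.mp hxw1
        have h2 : Commute w1 u := (hwcomm u hu).pow_left j
        exact hkk ▸ h2.zpow_left kk
      have hexu : ∃ u : G, u ∈ (P' : Subgroup G) ∧ u ∉ Subgroup.zpowers x := by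
        by_contra hcontra
        push_neg at hcontra
        have hle2 : (P' : Subgroup G) ≤ Subgroup.zpowers x := fun u hu => hcontra u hu
        have hcardle := Subgroup.card_le_of_le hle2
        rw [hcard', Nat.card_zpowers, hx] at hcardle
        have hle3 : p ^ 2 ≤ p ^ ν := Nat.pow_le_pow_right hp.pos hν2
        have hlt4 : p < p ^ 2 := by nlinarith [hp.two_le]
        omega
      obtain ⟨u, huP, hunx⟩ := hexu
      have hu1 : u ≠ 1 := fun e => hunx (e ▸ Subgroup.one_mem _)
      obtain ⟨j', hj'ord, hj'mem⟩ := reduce u hu1 (pord u huP)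
      by_cases hcase2 : u ^ j' ∈ Subgroup.zpowers x
      · exfalso
        have hne1 : u ^ j' ≠ 1 := ord_ne_one hp hj'ord
        have hxu' : x ∈ Subgroup.zpowers (u ^ j') := gen_symm hp hx hcase2 hne1
        have hxu : x ∈ Subgroup.zpowers u := Subgroup.zpowers_le.mpr hj'mem hxu'
        exact hunx (hA u (pord u huP) hxu)
      · exact ⟨u ^ j', hj'ord, ((hxcomm u huP).pow_right j').symm, hcase2⟩
    · exact ⟨w1, hjord, hw1x, hcase⟩
  -- Q-step : z commutes with y
  have hyc : Commute x (z * y * z⁻¹) := by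
    have h1 : Commute x z := hzx.symm
    exact (h1.mul_right hxy).mul_right h1.inv_right
  have hocon : orderOf (z * y * z⁻¹) = q := by
    rw [← hy]
    refine (SemiconjBy.orderOf_eq z ?_).symm
    show z * y = z * y * z⁻¹ * z
    group
  have hmem : z * y * z⁻¹ ∈ Subgroup.zpowers y := lemL2 hco hp hq hne hx hocon hy hyc hxy
  obtain ⟨k, hk0⟩ := mem_powers_iff_mem_zpowers.mpr hmem
  have hk : y ^ k = z * y * z⁻¹ := hk0
  have iter : ∀ n : ℕ, z ^ n * y * (z ^ n)⁻¹ = y ^ k ^ n := by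
    intro n
    induction n with
    | zero => simp
    | succ n ih =>
      have hstep : z ^ (n + 1) * y * (z ^ (n + 1))⁻¹ = z ^ n * (z * y * z⁻¹) * (z ^ n)⁻¹ := by
        rw [pow_succ]
        group
      rw [hstep, ← hk, ← conj_pow'', ih, ← pow_mul, ← pow_succ]
  have hzp : z ^ p = 1 := by rw [← hzord]; exact pow_orderOf_eq_one z
  have hyp1 : y = y ^ k ^ p := by
    have h1 := iter p
    rw [hzp] at h1
    simpa using h1
  have hkp : k ^ p ≡ 1 [MOD q] := by
    have h2 : y ^ k ^ p = y ^ 1 := by rw [pow_one]; exact hyp1.symm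
    have h3 := pow_eq_pow_iff_modEq.mp h2
    rwa [hy] at h3
  have hkco : ¬ q ∣ k := by
    intro hdvd
    have h1 : y ^ k = 1 := orderOf_dvd_iff_pow_eq_one.mp (hy ▸ hdvd)
    rw [hk] at h1
    have h2 : y = 1 := by
      have h3 := congrArg (fun t => z⁻¹ * t * z) h1
      simpa [mul_assoc] using h3
    exact ord_ne_one hq hy h2
  have hk1 : k ≡ 1 [MOD q] := by
    have hkz : ((k : ZMod q)) ≠ 0 := by
      rw [Ne, ZMod.natCast_eq_zero_iff]
      exact hkco
    have h1 : (k : ZMod q) ^ p = 1 := by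
      have h4 := (ZMod.natCast_eq_natCast_iff (k ^ p) 1 q).mpr hkp
      push_cast at h4
      exact h4
    have h2 : (k : ZMod q) ^ (q - 1) = 1 := ZMod.pow_card_sub_one_eq_one hkz
    have hd1 : orderOf ((k : ZMod q)) ∣ p := orderOf_dvd_iff_pow_eq_one.mpr h1
    have hd2 : orderOf ((k : ZMod q)) ∣ q - 1 := orderOf_dvd_iff_pow_eq_one.mpr h2
    have hcop : Nat.Coprime p (q - 1) := by
      refine hp.coprime_iff_not_dvd.mpr fun hdvd => ?_
      have h5 : q - 1 ≠ 0 := by have := hq.two_le; omega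
      have h6 := Nat.le_of_dvd (by omega) hdvd
      omega
    have h7 := Nat.dvd_gcd hd1 hd2
    rw [Nat.Coprime.gcd_eq_one hcop] at h7
    have h8 : (k : ZMod q) = 1 := orderOf_eq_one_iff.mp (Nat.dvd_one.mp h7)
    exact (ZMod.natCast_eq_natCast_iff k 1 q).mp (by exact_mod_cast h8)
  have hyk : y ^ k = y := pow_fix (by rwa [hy])
  have hcomm_zy : Commute y z := by
    have h1 : z * y * z⁻¹ = y := by rw [← hk, hyk]
    have h2 : z * y = y * z := by
      have h3 := congrArg (fun t => t * z) h1
      simpa [mul_assoc] using h3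
    exact h2.symm
  exact lemL4 hco hp hq hne hx hy hzord hxy hcomm_zy hznx
end

section
/- Let G be a finite group isomorphic to a semidirect product Q ⋊ C_p, where Q is a q-group for a prime q ≠ p. If the power graph of G is a cograph and G contains an element of order pq, then G ≅ C_q × C_p. -/
section Aux

variable {G : Type*} [Group G] [Finite G]

/-- In a finite group, membership in `zpowers` gives a natural-number exponent. -/
lemma aux_mem_powers {x y : G} (h : y ∈ Subgroup.zpowers x) : ∃ k : ℕ, x ^ k = y :=
  ((isOfFinOrder_of_finite x).mem_powers_iff_mem_zpowers).mpr h

/-- A nontrivial power of an element of prime order generates it back. -/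
lemma aux_gen {r : ℕ} (hr : r.Prime) {a b : G} (ha : orderOf a = r)
    (hb : b ∈ Subgroup.zpowers a) (hb1 : b ≠ 1) : a ∈ Subgroup.zpowers b := by
  obtain ⟨k, hk⟩ := aux_mem_powers hb
  have hrk : ¬ r ∣ k := by
    intro hd
    apply hb1
    rw [← hk]
    exact orderOf_dvd_iff_pow_eq_one.mp (ha ▸ hd)
  have hco : k.Coprime (orderOf a) := by
    rw [ha]
    exact (Nat.Prime.coprime_iff_not_dvd hr).mpr hrk |>.symm
  obtain ⟨m, hm⟩ := exists_pow_eq_self_of_coprime hco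
  exact Subgroup.mem_zpowers_iff.mpr ⟨(m : ℤ), by rw [zpow_natCast, ← hk]; exact hm⟩

lemma aux_p4 {m n : ℕ} (hm : m.Prime) (hn : n.Prime) (hmn : m ≠ n) (g x : G)
    (hg : orderOf g = m * n)
    (hBx : g ^ n ∈ Subgroup.zpowers x) (hAx : g ^ m ∉ Subgroup.zpowers x)
    (hxg : x ∉ Subgroup.zpowers g) (hgx : g ∉ Subgroup.zpowers x) :
    InducedP4 (powerGraph G) (g ^ m) g (g ^ n) x := by
  have hm0 : m ≠ 0 := hm.ne_zero
  have hn0 : n ≠ 0 := hn.ne_zero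
  have oA : orderOf (g ^ m) = n := by
    rw [orderOf_pow' g hm0, hg, Nat.gcd_comm, Nat.gcd_eq_left (dvd_mul_right m n),
      Nat.mul_div_cancel_left n hm.pos]
  have oB : orderOf (g ^ n) = m := by
    rw [orderOf_pow' g hn0, hg, Nat.gcd_comm, Nat.gcd_eq_left (dvd_mul_left n m),
      Nat.mul_div_cancel m hn.pos]
  have hmemA : g ^ m ∈ Subgroup.zpowers g :=
    Subgroup.mem_zpowers_iff.mpr ⟨(m : ℤ), by rw [zpow_natCast]⟩
  have hmemB : g ^ n ∈ Subgroup.zpowers g :=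
    Subgroup.mem_zpowers_iff.mpr ⟨(n : ℤ), by rw [zpow_natCast]⟩
  have hAB : g ^ n ∉ Subgroup.zpowers (g ^ m) := by
    intro hmem
    have : orderOf (g ^ n) ∣ orderOf (g ^ m) := orderOf_dvd_of_mem_zpowers hmem
    rw [oA, oB] at this
    exact hmn ((Nat.prime_dvd_prime_iff_eq hm hn).mp this)
  have hBA : g ^ m ∉ Subgroup.zpowers (g ^ n) := by
    intro hmem
    have : orderOf (g ^ m) ∣ orderOf (g ^ n) := orderOf_dvd_of_mem_zpowers hmem
    rw [oA, oB] at this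
    exact hmn ((Nat.prime_dvd_prime_iff_eq hn hm).mp this).symm
  have hAne : g ^ m ≠ g ^ n := fun he => hAB (he ▸ Subgroup.mem_zpowers _)
  have hAg : g ^ m ≠ g := by
    intro he
    have h1 : orderOf (g ^ m) = orderOf g := by rw [he]
    rw [oA, hg] at h1
    have h2 : 2 * n ≤ m * n := Nat.mul_le_mul_right n hm.two_le
    have h3 : 2 ≤ n := hn.two_le
    omega
  have hBg : g ^ n ≠ g := by
    intro he
    have h1 : orderOf (g ^ n) = orderOf g := by rw [he]
    rw [oB, hg] at h1
    have h2 : m * 2 ≤ m * n := Nat.mul_le_mul_left m hn.two_le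
    have h3 : 2 ≤ m := hm.two_le
    omega
  refine ⟨hAne, ?_, ?_, ⟨hAg, Or.inr hmemA⟩, ⟨hBg.symm, Or.inl hmemB⟩,
    ⟨?_, Or.inr hBx⟩, ?_, ?_, ?_⟩
  · intro he; exact hAx (he ▸ Subgroup.mem_zpowers _)
  · intro he; exact hgx (he ▸ Subgroup.mem_zpowers _)
  · intro he; exact hxg (he ▸ hmemB)
  · rintro ⟨hne, hor | hor⟩
    · exact hAB hor
    · exact hBA hor
  · rintro ⟨hne, hor | hor⟩
    · exact hAB ((Subgroup.zpowers_le.mpr hor) hBx)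
    · exact hAx hor
  · rintro ⟨hne, hor | hor⟩
    · exact hxg hor
    · exact hgx hor

end Aux

theorem semidirect_qgroup_cp_is_cq_times_cp
    {G : Type*} [Group G] [Finite G]
    {p q : ℕ} (hp : p.Prime) (hq : q.Prime) (hpq : p ≠ q)
    (Q H : Subgroup G) (hQn : Q.Normal) (hQq : IsPGroup q Q)
    (hH : Nat.card H = p) (hcompl : Subgroup.IsComplement' Q H)
    (hco : IsCograph (powerGraph G))
    (hel : ∃ g : G, orderOf g = p * q) :
    Nonempty (G ≃* Multiplicative (ZMod q) × Multiplicative (ZMod p)) := by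
  haveI : Fact (Nat.Prime q) := ⟨hq⟩
  haveI : Fact (Nat.Prime p) := ⟨hp⟩
  obtain ⟨g, hg⟩ := hel
  set c := g ^ p with hc
  set h := g ^ q with hh
  have hp0 : p ≠ 0 := hp.ne_zero
  have hq0 : q ≠ 0 := hq.ne_zero
  have oc : orderOf c = q := by
    rw [hc, orderOf_pow' g hp0, hg, Nat.gcd_comm, Nat.gcd_eq_left (dvd_mul_right p q),
      Nat.mul_div_cancel_left q hp.pos]
  have oh : orderOf h = p := by
    rw [hh, orderOf_pow' g hq0, hg, Nat.gcd_comm, Nat.gcd_eq_left (dvd_mul_left q p),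
      Nat.mul_div_cancel p hq.pos]
  have hc1 : c ≠ 1 := by
    intro he; rw [he, orderOf_one] at oc; exact hq.one_lt.ne' oc.symm
  have hh1 : h ≠ 1 := by
    intro he; rw [he, orderOf_one] at oh; exact hp.one_lt.ne' oh.symm
  -- elements of Q have q-power order
  have memQ_pow : ∀ y ∈ Q, ∃ n : ℕ, y ^ q ^ n = 1 := by
    intro y hy
    obtain ⟨n, hn⟩ := hQq ⟨y, hy⟩
    exact ⟨n, by simpa [← Subgroup.coe_pow, Subtype.ext_iff] using hn⟩
  have orderQ : ∀ y ∈ Q, ∀ r : ℕ, r.Prime → r ∣ orderOf y → r = q := by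
    intro y hy r hr hdvd
    obtain ⟨n, hn⟩ := memQ_pow y hy
    have h1 : orderOf y ∣ q ^ n := orderOf_dvd_iff_pow_eq_one.mpr hn
    exact (Nat.prime_dvd_prime_iff_eq hr hq).mp (hr.dvd_of_dvd_pow (hdvd.trans h1))
  have hhQ : h ∉ Q := by
    intro hy
    exact hpq (orderQ h hy p hp (by rw [oh]))
  have hgQ : g ∉ Q := by
    intro hy
    exact hpq (orderQ g hy p hp (by rw [hg]; exact dvd_mul_right p q))
  -- c ∈ Q via the quotient
  have hcQ : c ∈ Q := by
    have hcard : Nat.card G = Nat.card Q * p := by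
      rw [← hcompl.card_mul, hH]
    have hq_card : Nat.card (G ⧸ Q) = p := by
      have h1 : Nat.card G = Nat.card (G ⧸ Q) * Nat.card Q :=
        Subgroup.card_eq_card_quotient_mul_card_subgroup Q
      have h2 : Nat.card Q ≠ 0 := Nat.card_pos.ne'
      rw [hcard] at h1
      exact Nat.eq_of_mul_eq_mul_right (Nat.pos_of_ne_zero h2)
        (by rw [← h1, Nat.mul_comm])
    have hd1 : orderOf ((QuotientGroup.mk' Q) c) ∣ q := by
      rw [← oc]; exact orderOf_map_dvd _ _
    have hd2 : orderOf ((QuotientGroup.mk' Q) c) ∣ p := by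
      rw [← hq_card]; exact orderOf_dvd_natCard _
    have hcop : Nat.Coprime q p := (Nat.coprime_primes hq hp).mpr (Ne.symm hpq)
    have : orderOf ((QuotientGroup.mk' Q) c) = 1 :=
      Nat.dvd_one.mp (hcop ▸ Nat.dvd_gcd hd1 hd2)
    have := orderOf_eq_one_iff.mp this
    exact (QuotientGroup.eq_one_iff c).mp this
  -- elements of ⟨g⟩ lying in Q lie in ⟨c⟩
  have L1 : ∀ y, y ∈ Subgroup.zpowers g → y ∈ Q → y ∈ Subgroup.zpowers c := by
    intro y hyg hyQ
    obtain ⟨k, hk⟩ := aux_mem_powers hyg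
    have hdq : orderOf y ∣ q := by
      obtain ⟨n, hn⟩ := memQ_pow y hyQ
      have h1 : orderOf y ∣ q ^ n := orderOf_dvd_iff_pow_eq_one.mpr hn
      have h2 : orderOf y ∣ p * q := by rw [← hg]; exact orderOf_dvd_of_mem_zpowers hyg
      obtain ⟨j, hjle, hj⟩ := (Nat.dvd_prime_pow hq).mp h1
      rcases Nat.lt_or_ge j 2 with hj2 | hj2
      · interval_cases j
        · rw [hj]; simp
        · rw [hj, pow_one]
      · exfalso
        have hqq : q * q ∣ p * q := by
          have h4 : q ^ 2 ∣ q ^ j := pow_dvd_pow q hj2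
          have h5 : q ^ j ∣ p * q := hj ▸ h2
          calc q * q = q ^ 2 := (pow_two q).symm
            _ ∣ q ^ j := h4
            _ ∣ p * q := h5
        have : q ∣ p := (Nat.mul_dvd_mul_iff_right hq.pos).mp hqq
        exact hpq ((Nat.prime_dvd_prime_iff_eq hq hp).mp this).symm
    have hyq1 : y ^ q = 1 := orderOf_dvd_iff_pow_eq_one.mp hdq
    rw [← hk, ← pow_mul] at hyq1
    have hdvd : p * q ∣ k * q := by rw [← hg]; exact orderOf_dvd_iff_pow_eq_one.mpr hyq1
    have hpk : p ∣ k := (Nat.mul_dvd_mul_iff_right hq.pos).mp hdvd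
    obtain ⟨k', rfl⟩ := hpk
    exact Subgroup.mem_zpowers_iff.mpr ⟨(k' : ℤ), by rw [zpow_natCast, hc, ← pow_mul, hk]⟩
  by_cases hQall : ∀ y ∈ Q, y ∈ Subgroup.zpowers c
  · -- Q = ⟨c⟩, G is cyclic of order q*p
    have hQeq : Q = Subgroup.zpowers c :=
      le_antisymm (fun y hy => hQall y hy) (Subgroup.zpowers_le.mpr hcQ)
    have hcardQ : Nat.card Q = q := by rw [hQeq, Nat.card_zpowers, oc]
    have hcard : Nat.card G = q * p := by rw [← hcompl.card_mul, hH, hcardQ]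
    have hcyc : IsCyclic G := isCyclic_of_orderOf_eq_card g (by rw [hg, hcard, Nat.mul_comm])
    have hcop : Nat.Coprime q p := (Nat.coprime_primes hq hp).mpr (Ne.symm hpq)
    have e0 : ZMod (Nat.card G) ≃+ ZMod (q * p) := by rw [hcard]
    exact ⟨((zmodCyclicMulEquiv hcyc).symm.trans
      (AddEquiv.toMultiplicative (e0.trans (ZMod.chineseRemainder hcop).toAddEquiv))).trans
      (MulEquiv.prodMultiplicative (G := ZMod q) (H := ZMod p))⟩
  · exfalso
    push_neg at hQall
    obtain ⟨z, hzQ, hzc⟩ := hQall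
    have hz1 : z ≠ 1 := fun he => hzc (he ▸ Subgroup.one_mem _)
    by_cases hI : ∃ z', z' ∈ Q ∧ z' ∉ Subgroup.zpowers c ∧ c ∈ Subgroup.zpowers z'
    · -- Case I : P4 = (h, g, c, z')
      obtain ⟨z', h1, h2, h3⟩ := hI
      have hle : Subgroup.zpowers z' ≤ Q := Subgroup.zpowers_le.mpr h1
      refine hco (g ^ q) g (g ^ p) z' (aux_p4 hq hp (Ne.symm hpq) g z'
        (hg.trans (Nat.mul_comm p q)) h3 ?_ ?_ ?_)
      · intro hmem; exact hhQ (hle hmem)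
      · intro hmem; exact h2 (L1 z' hmem h1)
      · intro hmem; exact hgQ (hle hmem)
    · by_cases hfix : ∀ v ∈ Q, Commute v h → v ∈ Subgroup.zpowers c
      · -- Case III
        obtain ⟨u, huQ, huc, hcomm⟩ :
            ∃ u, u ∈ Q ∧ u ∉ Subgroup.zpowers c ∧ Commute u c := by
          have : Nontrivial Q := ⟨⟨⟨z, hzQ⟩, 1, by
            simp only [ne_eq, Subtype.ext_iff]
            exact hz1⟩⟩
          have : Nontrivial (Subgroup.center Q) := hQq.center_nontrivial
          obtain ⟨ζ, hζ1⟩ := exists_ne (1 : Subgroup.center Q)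
          have hζQ : ((ζ : Q) : G) ∈ Q := (ζ : Q).2
          have hζne : ((ζ : Q) : G) ≠ 1 := by
            intro he
            apply hζ1
            ext
            exact he
          have hζcomm : ∀ v ∈ Q, Commute ((ζ : Q) : G) v := by
            intro v hv
            have := (Subgroup.mem_center_iff.mp ζ.2) ⟨v, hv⟩
            have h2 : v * ((ζ : Q) : G) = ((ζ : Q) : G) * v := congrArg Subtype.val this
            exact h2.symm
          by_cases hζc : ((ζ : Q) : G) ∈ Subgroup.zpowers c
          · have hcz : c ∈ Subgroup.zpowers ((ζ : Q) : G) := aux_gen hq oc hζc hζne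
            obtain ⟨k, hk⟩ := Subgroup.mem_zpowers_iff.mp hcz
            have hcomm : Commute z c := by
              rw [← hk]
              exact ((hζcomm z hzQ).symm.zpow_right k)
            exact ⟨z, hzQ, hzc, hcomm⟩
          · exact ⟨_, hζQ, hζc, hζcomm c hcQ⟩
        -- key : conjugating h by an element of Q into a power of h forces commuting
        have key : ∀ v ∈ Q, ∀ k : ℕ, v * h * v⁻¹ = h ^ k → Commute v h := by
          intro v hv k hk
          set t := v * h * v⁻¹ * h⁻¹ with ht
          have htQ : t ∈ Q := by
            have h2 : h * v⁻¹ * h⁻¹ ∈ Q := by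
              have := hQn.conj_mem v⁻¹ (Q.inv_mem hv) h
              simpa [mul_assoc] using this
            have := Q.mul_mem hv h2
            simpa [ht, mul_assoc] using this
          have htzp : t ∈ Subgroup.zpowers h := by
            rw [ht, hk]
            exact Subgroup.mul_mem _ (Subgroup.mem_zpowers_iff.mpr ⟨(k : ℤ), by rw [zpow_natCast]⟩)
              (Subgroup.inv_mem _ (Subgroup.mem_zpowers h))
          have ht1 : t = 1 := by
            by_contra ht1
            have hto : orderOf t ∣ p := by rw [← oh]; exact orderOf_dvd_of_mem_zpowers htzp
            have : orderOf t ≠ 1 := fun he => ht1 (orderOf_eq_one_iff.mp he)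
            have hop : orderOf t = p := ((Nat.dvd_prime hp).mp hto).resolve_left this
            exact hpq (orderQ t htQ p hp (by rw [hop]))
          have h2 : v * h * v⁻¹ = h := by
            rw [ht, mul_inv_eq_one] at ht1
            exact ht1
          show v * h = h * v
          calc v * h = v * h * v⁻¹ * v := by group
            _ = h * v := by rw [h2]
        set x := u * g * u⁻¹ with hx
        have conjpow : ∀ k : ℕ, x ^ k = u * g ^ k * u⁻¹ := by
          intro k
          rw [hx]
          have := map_pow (MulAut.conj u) g k
          simpa [MulAut.conj_apply] using this.symm
        have hxp : x ^ p = c := by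
          rw [conjpow p, ← hc]
          have huc' : u * c = c * u := hcomm
          rw [huc']
          group
        have hcx : c ∈ Subgroup.zpowers x :=
          Subgroup.mem_zpowers_iff.mpr ⟨(p : ℤ), by rw [zpow_natCast, hxp]⟩
        have hcontra : ∀ v ∈ Q, v ∉ Subgroup.zpowers c → ¬ Commute v h := by
          intro v hv hvc hcm
          exact hvc (hfix v hv hcm)
        have hAx : h ∉ Subgroup.zpowers x := by
          intro hmem
          obtain ⟨k, hk⟩ := aux_mem_powers hmem
          rw [conjpow k] at hk
          -- u * g^k * u⁻¹ = h
          have hgk : g ^ k = u⁻¹ * h * u := by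
            rw [← hk]; group
          have hkp : (g ^ k) ^ p = 1 := by
            rw [hgk]
            have hp1 : h ^ p = 1 := by rw [← oh]; exact pow_orderOf_eq_one h
            calc (u⁻¹ * h * u) ^ p = u⁻¹ * h ^ p * u := by
                  have := map_pow (MulAut.conj u⁻¹) h p
                  simpa [MulAut.conj_apply] using this.symm
              _ = 1 := by rw [hp1]; group
          have hdvd : p * q ∣ k * p := by
            rw [← hg]; rw [← pow_mul] at hkp; exact orderOf_dvd_iff_pow_eq_one.mpr hkp
          have hqk : q ∣ k := by
            have : q * p ∣ k * p := by rwa [Nat.mul_comm q p]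
            exact (Nat.mul_dvd_mul_iff_right hp.pos).mp this
          obtain ⟨k', rfl⟩ := hqk
          have hgk2 : h ^ k' = u⁻¹ * h * u := by
            rw [← hgk, hh, pow_mul]
          have : u⁻¹ * h * (u⁻¹)⁻¹ = h ^ k' := by rw [inv_inv, ← hgk2]
          have hcm : Commute u⁻¹ h := key u⁻¹ (Q.inv_mem huQ) k' this
          have hcm2 : Commute u h := by
            have := hcm.inv_left
            rwa [inv_inv] at this
          exact hcontra u huQ huc hcm2
        have hxg : x ∉ Subgroup.zpowers g := by
          intro hmem
          obtain ⟨k, hk⟩ := aux_mem_powers hmem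
          -- g ^ k = x
          have h1 : x ^ q = u * h * u⁻¹ := by rw [conjpow q, ← hh]
          have h2 : x ^ q = h ^ k := by
            rw [← hk, ← pow_mul, Nat.mul_comm, pow_mul, ← hh]
          have := key u huQ k (by rw [← h1, h2])
          exact hcontra u huQ huc this
        have hgx : g ∉ Subgroup.zpowers x := by
          intro hmem
          obtain ⟨k, hk⟩ := aux_mem_powers hmem
          rw [conjpow k] at hk
          -- u * g^k * u⁻¹ = g
          have h1 : u * (g ^ k) ^ q * u⁻¹ = h := by
            rw [hh]
            have := map_pow (MulAut.conj u) (g ^ k) q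
            simp only [MulAut.conj_apply] at this
            rw [this, hk]
          have h2 : (g ^ k) ^ q = h ^ k := by
            rw [← pow_mul, Nat.mul_comm, pow_mul, ← hh]
          rw [h2] at h1
          have h3' : u⁻¹ * h * u = h ^ k := by
            have := congrArg (fun t => u⁻¹ * t * u) h1
            simpa [mul_assoc] using this.symm
          have h3 : u⁻¹ * h * (u⁻¹)⁻¹ = h ^ k := by rw [inv_inv]; exact h3'
          have hcm : Commute u⁻¹ h := key u⁻¹ (Q.inv_mem huQ) k h3
          have hcm2 : Commute u h := by
            have := hcm.inv_left
            rwa [inv_inv] at this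
          exact hcontra u huQ huc hcm2
        exact hco (g ^ q) g (g ^ p) x
          (aux_p4 hq hp (Ne.symm hpq) g x (hg.trans (Nat.mul_comm p q)) hcx hAx hxg hgx)
      · -- Case II
        push_neg at hfix
        obtain ⟨w₀, hw₀Q, hw₀comm, hw₀c⟩ := hfix
        have hw₀1 : w₀ ≠ 1 := fun he => hw₀c (he ▸ Subgroup.one_mem _)
        have hqd : q ∣ orderOf w₀ := by
          have hne : orderOf w₀ ≠ 1 := fun he => hw₀1 (orderOf_eq_one_iff.mp he)
          obtain ⟨r, hr, hrd⟩ := Nat.exists_prime_and_dvd hne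
          have := orderQ w₀ hw₀Q r hr hrd
          rwa [← this]
        have hd0 : orderOf w₀ ≠ 0 := by
          have : IsOfFinOrder w₀ := isOfFinOrder_of_finite w₀
          exact this.orderOf_pos.ne'
        set w := w₀ ^ (orderOf w₀ / q) with hw
        have hdq0 : orderOf w₀ / q ≠ 0 := by
          have hle : q ≤ orderOf w₀ := Nat.le_of_dvd (Nat.pos_of_ne_zero hd0) hqd
          exact Nat.div_ne_zero_iff.mpr ⟨hq0, hle⟩
        have ow : orderOf w = q := by
          rw [hw, orderOf_pow' w₀ hdq0]
          have hdvd : orderOf w₀ / q ∣ orderOf w₀ := Nat.div_dvd_of_dvd hqd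
          rw [Nat.gcd_eq_right hdvd]
          exact Nat.div_div_self hqd hd0
        have hwQ : w ∈ Q := Q.pow_mem hw₀Q _
        have hwh : Commute w h := hw₀comm.pow_left _
        have hw1 : w ≠ 1 := by
          intro he; rw [he, orderOf_one] at ow; exact hq.one_lt.ne' ow.symm
        have hwzw₀ : w ∈ Subgroup.zpowers w₀ :=
          Subgroup.mem_zpowers_iff.mpr ⟨((orderOf w₀ / q : ℕ) : ℤ), by rw [zpow_natCast, hw]⟩
        have hwc : w ∉ Subgroup.zpowers c := by
          intro hmem
          have hcw' : c ∈ Subgroup.zpowers w := aux_gen hq oc hmem hw1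
          have : c ∈ Subgroup.zpowers w₀ := (Subgroup.zpowers_le.mpr hwzw₀) hcw'
          exact hI ⟨w₀, hw₀Q, hw₀c, this⟩
        have hcw : c ∉ Subgroup.zpowers w := fun hmem => hI ⟨w, hwQ, hwc, hmem⟩
        set x := w * h with hxdef
        have hcop : Nat.Coprime q p := (Nat.coprime_primes hq hp).mpr (Ne.symm hpq)
        have ox : orderOf x = q * p := by
          rw [hxdef, hwh.orderOf_mul_eq_mul_orderOf_of_coprime (by rw [ow, oh]; exact hcop),
            ow, oh]
        have hxp : x ^ p = w ^ p := by
          rw [hxdef, hwh.mul_pow]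
          have : h ^ p = 1 := by rw [← oh]; exact pow_orderOf_eq_one h
          rw [this, mul_one]
        have hxq : x ^ q = h ^ q := by
          rw [hxdef, hwh.mul_pow]
          have : w ^ q = 1 := by rw [← ow]; exact pow_orderOf_eq_one w
          rw [this, one_mul]
        have hBx : h ∈ Subgroup.zpowers x := by
          obtain ⟨e, he⟩ := exists_pow_eq_self_of_coprime (x := h) (n := q)
            (by rw [oh]; exact hcop)
          exact Subgroup.mem_zpowers_iff.mpr ⟨((q * e : ℕ) : ℤ), by rw [zpow_natCast, pow_mul, hxq, he]⟩
        have hAx : c ∉ Subgroup.zpowers x := by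
          intro hmem
          obtain ⟨k, hk⟩ := aux_mem_powers hmem
          have hcq1 : x ^ (k * q) = 1 := by
            rw [pow_mul, hk, ← oc]; exact pow_orderOf_eq_one c
          have hdvd : q * p ∣ k * q := by rw [← ox]; exact orderOf_dvd_iff_pow_eq_one.mpr hcq1
          have hpk : p ∣ k := by
            have : p * q ∣ k * q := by rwa [Nat.mul_comm q p] at hdvd
            exact (Nat.mul_dvd_mul_iff_right hq.pos).mp this
          obtain ⟨k', rfl⟩ := hpk
          have : c = w ^ (p * k') := by
            rw [← hk, pow_mul, hxp, ← pow_mul]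
          exact hcw (Subgroup.mem_zpowers_iff.mpr ⟨((p * k' : ℕ) : ℤ), by rw [zpow_natCast, ← this]⟩)
        have hxg : x ∉ Subgroup.zpowers g := by
          intro hmem
          have h1 : x ^ p ∈ Subgroup.zpowers g := Subgroup.pow_mem _ hmem p
          rw [hxp] at h1
          have h2 : w ^ p ∈ Q := Q.pow_mem hwQ p
          have h3 : w ^ p ∈ Subgroup.zpowers c := L1 _ h1 h2
          obtain ⟨e, he⟩ := exists_pow_eq_self_of_coprime (x := w) (n := p)
            (by rw [ow]; exact (Nat.coprime_primes hp hq).mpr hpq)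
          have : w ∈ Subgroup.zpowers c := by
            rw [← he]
            exact Subgroup.pow_mem _ h3 e
          exact hwc this
        have hgx : g ∉ Subgroup.zpowers x := by
          intro hmem
          obtain ⟨k, hk⟩ := aux_mem_powers hmem
          have : c = w ^ (p * k) := by
            rw [hc, ← hk, ← pow_mul, Nat.mul_comm k p, pow_mul, hxp, ← pow_mul]
          exact hcw (Subgroup.mem_zpowers_iff.mpr ⟨((p * k : ℕ) : ℤ), by rw [zpow_natCast, ← this]⟩)
        exact hco (g ^ p) g (g ^ q) x (aux_p4 hp hq hpq g x hg hBx hAx hxg hgx)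
end

section
/- Let G be a finite group whose power graph is a cograph, and let K be a connected component of the prime graph π(G). Then K is a star graph whose center is the smallest prime in K: every edge of π(G) within K contains the smallest prime of K as an endpoint. -/
set_option linter.unusedSectionVars false
set_option maxHeartbeats 1000000

namespace PGStar
open Subgroup Pointwise

variable {G : Type*} [Group G] [Finite G]

lemma mem_zpowers_pow_coprime (g : G) (n : ℕ) (h : Nat.Coprime n (orderOf g)) :
    g ∈ zpowers (g ^ n) := by
  set M := orderOf g with hM
  have h1 : (1 : ℤ) = n * Nat.gcdA n M + M * Nat.gcdB n M := by
    rw [← Nat.gcd_eq_gcd_ab]; exact_mod_cast (show Nat.gcd n M = 1 from h).symm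
  refine mem_zpowers_iff.mpr ⟨Nat.gcdA n M, ?_⟩
  have hzM : (g : G) ^ (M * Nat.gcdB n M : ℤ) = 1 := by
    rw [zpow_mul, zpow_natCast, pow_orderOf_eq_one, one_zpow]
  calc (g ^ n) ^ (Nat.gcdA n M) = g ^ (n * Nat.gcdA n M : ℤ) := by
        rw [zpow_mul, zpow_natCast]
    _ = g ^ (n * Nat.gcdA n M : ℤ) * g ^ (M * Nat.gcdB n M : ℤ) := by rw [hzM, mul_one]
    _ = g ^ ((1 : ℤ)) := by rw [← zpow_add, ← h1]
    _ = g := zpow_one g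

lemma mem_zpowers_trans {a b c : G} (h1 : a ∈ zpowers b) (h2 : b ∈ zpowers c) :
    a ∈ zpowers c := (zpowers_le.mpr h2) h1

lemma mem_zpowers_symm {a b : G} (h : a ∈ zpowers b) (he : orderOf a = orderOf b) :
    b ∈ zpowers a := by
  have hle : zpowers a ≤ zpowers b := zpowers_le.mpr h
  have heq : zpowers a = zpowers b :=
    Subgroup.eq_of_le_of_card_ge hle (by rw [Nat.card_zpowers, Nat.card_zpowers, he])
  rw [heq]; exact mem_zpowers b

lemma not_adj_orders {g h : G} (h1 : ¬ orderOf h ∣ orderOf g) (h2 : ¬ orderOf g ∣ orderOf h) :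
    ¬ (powerGraph G).Adj g h := by
  rintro ⟨-, hm | hm⟩
  · exact h1 (orderOf_dvd_of_mem_zpowers hm)
  · exact h2 (orderOf_dvd_of_mem_zpowers hm)

lemma ne_orders {g h : G} (hne : orderOf g ≠ orderOf h) : g ≠ h :=
  fun e => hne (by rw [e])

lemma prime_not_dvd {p q : ℕ} (hp : p.Prime) (hq : q.Prime) (h : p ≠ q) : ¬ p ∣ q :=
  fun hd => h ((Nat.prime_dvd_prime_iff_eq hp hq).mp hd)

lemma prime_not_dvd_mul {p a b : ℕ} (hp : p.Prime) (ha : a.Prime) (hb : b.Prime)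
    (h1 : p ≠ a) (h2 : p ≠ b) : ¬ p ∣ a * b := by
  intro hd
  rcases (Nat.Prime.dvd_mul hp).mp hd with h | h
  · exact prime_not_dvd hp ha h1 h
  · exact prime_not_dvd hp hb h2 h

lemma mul_not_dvd_left {p q a b : ℕ} (hp : p.Prime) (ha : a.Prime) (hb : b.Prime)
    (h1 : p ≠ a) (h2 : p ≠ b) : ¬ p * q ∣ a * b := fun hd =>
  prime_not_dvd_mul hp ha hb h1 h2 ((dvd_mul_right p q).trans hd)

/-- main membership computation: if `d = u^j * (u*e)^i` and `d^p` determines `d`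
then `d ∈ zpowers e`. -/
lemma key_mem {p q : ℕ} (hp : p.Prime) (hq : q.Prime) (hpq : p ≠ q)
    {u e d : G} (hu : orderOf u = p) (hue : Commute u e) (hd : orderOf d = q)
    (hex : ∃ j i : ℤ, u ^ j * (u * e) ^ i = d) : d ∈ zpowers e := by
  obtain ⟨j, i, hji⟩ := hex
  have hup : u ^ (p : ℤ) = 1 := by rw [zpow_natCast, ← hu, pow_orderOf_eq_one]
  have hbig : Commute (u ^ j) ((u * e) ^ i) :=
    (((Commute.refl u).mul_right hue).zpow_zpow j i)
  have hdp : d ^ (p : ℕ) = e ^ (i * p : ℤ) := by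
    rw [← hji]
    calc (u ^ j * (u * e) ^ i) ^ (p : ℕ)
        = (u ^ j * (u * e) ^ i) ^ ((p : ℤ)) := by rw [zpow_natCast]
      _ = (u ^ j) ^ (p : ℤ) * ((u * e) ^ i) ^ (p : ℤ) := hbig.mul_zpow _
      _ = u ^ (j * p : ℤ) * (u * e) ^ (i * p : ℤ) := by rw [← zpow_mul, ← zpow_mul]
      _ = u ^ (j * p : ℤ) * (u ^ (i * p : ℤ) * e ^ (i * p : ℤ)) := by
            rw [hue.mul_zpow]
      _ = (u ^ (p : ℤ)) ^ j * ((u ^ (p : ℤ)) ^ i * e ^ (i * p : ℤ)) := by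
            rw [← zpow_mul, ← zpow_mul, mul_comm j (p : ℤ), mul_comm i (p : ℤ)]
      _ = e ^ (i * p : ℤ) := by rw [hup, one_zpow, one_zpow, one_mul, one_mul]
  have h1 : d ^ (p : ℕ) ∈ zpowers e := mem_zpowers_iff.mpr ⟨i * p, hdp.symm⟩
  have h2 : d ∈ zpowers (d ^ (p : ℕ)) :=
    mem_zpowers_pow_coprime d p (by rw [hd]; exact (Nat.coprime_primes hp hq).mpr hpq)
  exact mem_zpowers_trans h2 h1

/-- Lemma A': u order p, b c order q both commuting with u, different subgroups: P4. -/
lemma P4A {p q : ℕ} (hp : p.Prime) (hq : q.Prime) (hpq : p ≠ q)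
    {u b c : G} (hu : orderOf u = p) (hb : orderOf b = q) (hc : orderOf c = q)
    (hub : Commute u b) (huc : Commute u c) (hbc : b ∉ zpowers c) :
    InducedP4 (powerGraph G) b (u * b) u (u * c) := by
  have hq1 : q ≠ 1 := hq.ne_one
  have hp1 : p ≠ 1 := hp.ne_one
  have hup : u ^ p = 1 := by rw [← hu, pow_orderOf_eq_one]
  have hbq : b ^ q = 1 := by rw [← hb, pow_orderOf_eq_one]
  have hcq : c ^ q = 1 := by rw [← hc, pow_orderOf_eq_one]
  have hndq : ¬ p ∣ q := prime_not_dvd hp hq hpq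
  have hubq : (u * b) ^ q = u ^ q := by rw [hub.mul_pow, hbq, mul_one]
  have hucq : (u * c) ^ q = u ^ q := by rw [huc.mul_pow, hcq, mul_one]
  have huqne : u ^ q ≠ 1 := by
    intro h0; exact hndq (by rw [← hu]; exact orderOf_dvd_of_pow_eq_one h0)
  refine ⟨?_, ?_, ?_, ?_, ?_, ?_, ?_, ?_, ?_⟩
  · exact ne_orders (by rw [hb, hu]; exact fun e => hpq e.symm)
  · intro h; apply huqne; rw [← hucq, ← h, hbq]
  · intro h; exact hbc (by rw [mul_left_cancel h]; exact mem_zpowers c)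
  · -- Adj b (u*b)
    refine ⟨?_, Or.inr ?_⟩
    · intro h
      have : u = 1 := by
        have := h.symm;
        calc u = u * b * b⁻¹ := by group
          _ = b * b⁻¹ := by rw [← h]
          _ = 1 := by group
      rw [this, orderOf_one] at hu; exact hp1 hu.symm
    · have h1 : b ^ p ∈ zpowers (u * b) := mem_zpowers_iff.mpr ⟨(p : ℤ), by
        rw [zpow_natCast, hub.mul_pow, hup, one_mul]⟩
      exact mem_zpowers_trans (mem_zpowers_pow_coprime b p
        (by rw [hb]; exact (Nat.coprime_primes hp hq).mpr hpq)) h1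
  · -- Adj (u*b) u
    refine ⟨?_, Or.inl ?_⟩
    · intro h
      have hb1 : b = 1 := by
        calc b = u⁻¹ * (u * b) := by group
          _ = u⁻¹ * u := by rw [h]
          _ = 1 := by group
      rw [hb1, orderOf_one] at hb; exact hq1 hb.symm
    · have h1 : u ^ q ∈ zpowers (u * b) := mem_zpowers_iff.mpr ⟨(q : ℤ), by rw [zpow_natCast, hubq]⟩
      exact mem_zpowers_trans (mem_zpowers_pow_coprime u q
        (by rw [hu]; exact (Nat.coprime_primes hq hp).mpr (fun e => hpq e.symm))) h1
  · -- Adj u (u*c)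
    refine ⟨?_, Or.inr ?_⟩
    · intro h
      have hc1 : c = 1 := by
        calc c = u⁻¹ * (u * c) := by group
          _ = u⁻¹ * u := by rw [← h]
          _ = 1 := by group
      rw [hc1, orderOf_one] at hc; exact hq1 hc.symm
    · have h1 : u ^ q ∈ zpowers (u * c) := mem_zpowers_iff.mpr ⟨(q : ℤ), by rw [zpow_natCast, hucq]⟩
      exact mem_zpowers_trans (mem_zpowers_pow_coprime u q
        (by rw [hu]; exact (Nat.coprime_primes hq hp).mpr (fun e => hpq e.symm))) h1
  · -- ¬ Adj b u
    exact not_adj_orders (by rw [hu, hb]; exact prime_not_dvd hp hq hpq)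
      (by rw [hu, hb]; exact prime_not_dvd hq hp (fun e => hpq e.symm))
  · -- ¬ Adj b (u*c)
    rintro ⟨-, hm | hm⟩
    · -- u*c ∈ zpowers b
      have : orderOf (u * c) ∣ q := by rw [← hb]; exact orderOf_dvd_of_mem_zpowers hm
      exact huqne (by rw [← hucq]; exact orderOf_dvd_iff_pow_eq_one.mp this)
    · obtain ⟨i, hi⟩ := mem_zpowers_iff.mp hm
      exact hbc (key_mem hp hq hpq hu huc hb ⟨0, i, by rw [zpow_zero, one_mul]; exact hi⟩)
  · -- ¬ Adj (u*b) (u*c)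
    rintro ⟨-, hm | hm⟩
    · -- u*c ∈ zpowers (u*b)
      obtain ⟨i, hi⟩ := mem_zpowers_iff.mp hm
      have hcin : c ∈ zpowers b := key_mem hp hq hpq hu hub hc
        ⟨-1, i, by rw [zpow_neg_one, hi]; group⟩
      exact hbc (mem_zpowers_symm hcin (by rw [hc, hb]))
    · obtain ⟨i, hi⟩ := mem_zpowers_iff.mp hm
      exact hbc (key_mem hp hq hpq hu huc hb
        ⟨-1, i, by rw [zpow_neg_one, hi]; group⟩)


lemma mul_not_dvd_of_left {a b m : ℕ} (h : ¬ a ∣ m) : ¬ a * b ∣ m :=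
  fun hd => h ((dvd_mul_right a b).trans hd)

lemma mul_not_dvd_of_right {a b m : ℕ} (h : ¬ b ∣ m) : ¬ a * b ∣ m :=
  fun hd => h ((dvd_mul_left b a).trans hd)

lemma ne_mul_right {a b : ℕ} (ha : 0 < a) (hb : b ≠ 1) : a ≠ a * b := by
  intro e
  exact hb (Nat.eq_of_mul_eq_mul_left ha (by rw [Nat.mul_one, ← e])).symm

lemma ne_mul_left {a b : ℕ} (hb : 0 < b) (ha : a ≠ 1) : b ≠ a * b := by
  intro e; rw [mul_comm] at e
  exact ha (Nat.eq_of_mul_eq_mul_left hb (by rw [Nat.mul_one, ← e])).symm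

lemma order_pow_part_right {p q : ℕ} (hq0 : 0 < q) {x : G} (hx : orderOf x = p * q) :
    orderOf (x ^ q) = p := by
  rw [orderOf_pow, hx, Nat.gcd_eq_right (dvd_mul_left q p), Nat.mul_div_cancel _ hq0]

lemma order_pow_part_left {p q : ℕ} (hp0 : 0 < p) {x : G} (hx : orderOf x = p * q) :
    orderOf (x ^ p) = q := by
  rw [orderOf_pow, hx, Nat.gcd_eq_right (dvd_mul_right p q), Nat.mul_div_cancel_left _ hp0]

/-- Lemma B: `x` of order `pq`, `w` of order `q²` with `x^p ∈ ⟨w⟩` gives a `P4`. -/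
lemma P4B {p q : ℕ} (hp : p.Prime) (hq : q.Prime) (hpq : p ≠ q)
    {x w : G} (hx : orderOf x = p * q) (hw : orderOf w = q * q)
    (hmem : x ^ p ∈ zpowers w) :
    InducedP4 (powerGraph G) (x ^ q) x (x ^ p) w := by
  have hou : orderOf (x ^ q) = p := order_pow_part_right hq.pos hx
  have hoz : orderOf (x ^ p) = q := order_pow_part_left hp.pos hx
  have hqp : q ≠ p := fun e => hpq e.symm
  have hqq_nd_p : ¬ q * q ∣ p := mul_not_dvd_of_left (prime_not_dvd hq hp hqp)
  refine ⟨?_, ?_, ?_, ?_, ?_, ?_, ?_, ?_, ?_⟩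
  · exact ne_orders (by rw [hou, hoz]; exact hpq)
  · exact ne_orders (by rw [hou, hw]; intro e; exact hqq_nd_p (e ▸ dvd_refl _))
  · exact ne_orders (by
      rw [hx, hw]
      intro e; exact hpq (Nat.eq_of_mul_eq_mul_right hq.pos e))
  · exact ⟨ne_orders (by rw [hou, hx]; exact ne_mul_right hp.pos hq.ne_one),
      Or.inr (mem_zpowers_iff.mpr ⟨(q : ℤ), zpow_natCast x q⟩)⟩
  · exact ⟨ne_orders (by rw [hx, hoz]; exact (ne_mul_left hq.pos hp.ne_one).symm),
      Or.inl (mem_zpowers_iff.mpr ⟨(p : ℤ), zpow_natCast x p⟩)⟩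
  · exact ⟨ne_orders (by rw [hoz, hw]; exact ne_mul_right hq.pos hq.ne_one),
      Or.inr hmem⟩
  · exact not_adj_orders (by rw [hou, hoz]; exact prime_not_dvd hq hp hqp)
      (by rw [hou, hoz]; exact prime_not_dvd hp hq hpq)
  · exact not_adj_orders (by rw [hou, hw]; exact hqq_nd_p)
      (by rw [hou, hw]; exact prime_not_dvd_mul hp hq hq hpq hpq)
  · refine not_adj_orders ?_ ?_
    · rw [hx, hw]; intro h
      exact hqp ((Nat.prime_dvd_prime_iff_eq hq hp).mp
        ((Nat.mul_dvd_mul_iff_right hq.pos).mp h))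
    · rw [hx, hw]
      exact mul_not_dvd_of_left (prime_not_dvd_mul hp hq hq hpq hpq)

/-- Lemma C: `x` of order `pq`, `y` of order `qr` with `x^p ∈ ⟨y⟩` gives a `P4`. -/
lemma P4C {p q r : ℕ} (hp : p.Prime) (hq : q.Prime) (hr : r.Prime)
    (hpq : p ≠ q) (hqr : q ≠ r) (hpr : p ≠ r)
    {x y : G} (hx : orderOf x = p * q) (hy : orderOf y = q * r)
    (hmem : x ^ p ∈ zpowers y) :
    InducedP4 (powerGraph G) x (x ^ p) y (y ^ q) := by
  have hoz : orderOf (x ^ p) = q := order_pow_part_left hp.pos hx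
  have hoyq : orderOf (y ^ q) = r := order_pow_part_left hq.pos hy
  have hrp : r ≠ p := fun e => hpr e.symm
  have hrq : r ≠ q := fun e => hqr e.symm
  refine ⟨?_, ?_, ?_, ?_, ?_, ?_, ?_, ?_, ?_⟩
  · exact ne_orders (by
      rw [hx, hy]; intro e
      exact hpr (Nat.eq_of_mul_eq_mul_right hq.pos (by rw [e, mul_comm])))
  · exact ne_orders (by
      rw [hx, hoyq]; intro e
      exact hqr ((Nat.prime_dvd_prime_iff_eq hq hr).mp (e ▸ dvd_mul_left q p)))
  · exact ne_orders (by rw [hoz, hoyq]; exact hqr)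
  · exact ⟨ne_orders (by rw [hx, hoz]; exact (ne_mul_left hq.pos hp.ne_one).symm),
      Or.inl (mem_zpowers_iff.mpr ⟨(p : ℤ), zpow_natCast x p⟩)⟩
  · exact ⟨ne_orders (by rw [hoz, hy]; exact ne_mul_right hq.pos hr.ne_one),
      Or.inr hmem⟩
  · exact ⟨ne_orders (by rw [hy, hoyq]; exact (ne_mul_left hr.pos hq.ne_one).symm),
      Or.inl (mem_zpowers_iff.mpr ⟨(q : ℤ), zpow_natCast y q⟩)⟩
  · exact not_adj_orders
      (by rw [hx, hy]; exact mul_not_dvd_of_right (prime_not_dvd_mul hr hp hq hrp hrq))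
      (by rw [hx, hy]; exact mul_not_dvd_of_left (prime_not_dvd_mul hp hq hr hpq hpr))
  · exact not_adj_orders
      (by rw [hx, hoyq]; exact prime_not_dvd_mul hr hp hq hrp hrq)
      (by rw [hx, hoyq]; exact mul_not_dvd_of_left (prime_not_dvd hp hr hpr))
  · exact not_adj_orders (by rw [hoz, hoyq]; exact prime_not_dvd hr hq hrq)
      (by rw [hoz, hoyq]; exact prime_not_dvd hq hr hqr)


lemma conj_commute_of_small {p q : ℕ} (hp : p.Prime) (hq : q.Prime) (hlt : p < q)
    {u c : G} (hu : orderOf u = p) (hc : orderOf c = q)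
    (h : c⁻¹ * u * c ∈ zpowers u) : Commute u c := by
  haveI : Fact p.Prime := ⟨hp⟩
  obtain ⟨i, hi⟩ := mem_zpowers_iff.mp h
  have hp0 : (0 : ℤ) < (p : ℤ) := by exact_mod_cast hp.pos
  set k : ℕ := (i % (p : ℤ)).toNat with hkdef
  have hik : u ^ k = c⁻¹ * u * c := by
    have htn : ((k : ℕ) : ℤ) = i % (p : ℤ) :=
      Int.toNat_of_nonneg (Int.emod_nonneg i hp0.ne')
    calc u ^ k = u ^ ((k : ℕ) : ℤ) := (zpow_natCast u k).symm
      _ = u ^ (i % (p : ℤ)) := by rw [htn]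
      _ = u ^ (i % ((orderOf u : ℕ) : ℤ)) := by rw [hu]
      _ = u ^ i := zpow_mod_orderOf u i
      _ = c⁻¹ * u * c := hi
  have conjp : ∀ (g a : G) (n : ℕ), (g⁻¹ * a * g) ^ n = g⁻¹ * a ^ n * g := by
    intro g a n
    simpa [inv_inv] using (conj_pow (i := n) (a := g⁻¹) (b := a))
  have hiter : ∀ n : ℕ, (c ^ n)⁻¹ * u * c ^ n = u ^ (k ^ n) := by
    intro n; induction n with
    | zero => simp
    | succ n ih =>
      have e2 : c ^ (n + 1) = c * c ^ n := pow_succ' c n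
      rw [e2, mul_inv_rev]
      calc (c ^ n)⁻¹ * c⁻¹ * u * (c * c ^ n)
          = (c ^ n)⁻¹ * (c⁻¹ * u * c) * c ^ n := by group
        _ = (c ^ n)⁻¹ * u ^ k * c ^ n := by rw [← hik]
        _ = ((c ^ n)⁻¹ * u * c ^ n) ^ k := (conjp (c ^ n) u k).symm
        _ = (u ^ (k ^ n)) ^ k := by rw [ih]
        _ = u ^ (k ^ n * k) := (pow_mul u (k ^ n) k).symm
        _ = u ^ (k ^ (n + 1)) := by rw [← pow_succ]
  have hcq : c ^ q = 1 := by rw [← hc, pow_orderOf_eq_one]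
  have hiterq := hiter q
  rw [hcq, inv_one, one_mul, mul_one] at hiterq
  -- hiterq : u = u ^ (k ^ q)
  have hmod : k ^ q ≡ 1 [MOD p] := by
    have h1 : u ^ (k ^ q) = u ^ 1 := by rw [← hiterq, pow_one]
    have h2 := pow_eq_pow_iff_modEq.mp h1
    rwa [hu] at h2
  have hz : ((k : ZMod p)) ^ q = 1 := by
    have h1 := (ZMod.natCast_eq_natCast_iff (k ^ q) 1 p).mpr hmod
    push_cast at h1; exact h1
  have hk0 : (k : ZMod p) ≠ 0 := by
    intro h0
    have hdvd : p ∣ k := (ZMod.natCast_eq_zero_iff k p).mp h0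
    have h1 : u ^ k = 1 := orderOf_dvd_iff_pow_eq_one.mp (hu ▸ hdvd)
    have h2 : u = 1 := by
      have := hik
      rw [h1] at this
      calc u = c * (c⁻¹ * u * c) * c⁻¹ := by group
        _ = c * 1 * c⁻¹ := by rw [← this]
        _ = 1 := by group
    rw [h2, orderOf_one] at hu
    exact hp.ne_one hu.symm
  have hord1 : orderOf ((k : ZMod p)) ∣ q := orderOf_dvd_of_pow_eq_one hz
  have hord2 : orderOf ((k : ZMod p)) ∣ p - 1 :=
    orderOf_dvd_of_pow_eq_one (ZMod.pow_card_sub_one_eq_one hk0)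
  have hord : orderOf ((k : ZMod p)) = 1 := by
    rcases hq.eq_one_or_self_of_dvd _ hord1 with h1 | h1
    · exact h1
    · exfalso
      rw [h1] at hord2
      have h2 : q ≤ p - 1 := Nat.le_of_dvd (by have := hp.two_le; omega) hord2
      have := hp.two_le; omega
  have hk1 : (k : ZMod p) = 1 := orderOf_eq_one_iff.mp hord
  have hmod1 : k ≡ 1 [MOD p] := by
    have h1 : ((k : ℕ) : ZMod p) = ((1 : ℕ) : ZMod p) := by rw [hk1]; push_cast; rfl
    exact (ZMod.natCast_eq_natCast_iff k 1 p).mp h1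
  have huk : u ^ k = u := by
    have h1 : u ^ k = u ^ 1 := pow_eq_pow_iff_modEq.mpr (by rw [hu]; exact hmod1)
    rwa [pow_one] at h1
  have hfix : c⁻¹ * u * c = u := by rw [← hik, huk]
  show u * c = c * u
  calc u * c = c * (c⁻¹ * u * c) := by group
    _ = c * u := by rw [hfix]

/-- all elements of order `p` commuting with `z` lie in a single cyclic subgroup (given one). -/
lemma unique_small {p q : ℕ} (hp : p.Prime) (hq : q.Prime) (hpq : p ≠ q)
    (hco : IsCograph (powerGraph G))
    {u z s : G} (hu : orderOf u = p) (hz : orderOf z = q) (hs : orderOf s = p)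
    (hcuz : Commute u z) (hcsz : Commute s z) : s ∈ zpowers u := by
  by_contra hns
  refine hco _ _ _ _ (P4A hq hp (fun e => hpq e.symm) hz hu hs hcuz.symm hcsz.symm ?_)
  intro hmem
  exact hns (mem_zpowers_symm hmem (by rw [hu, hs]))


/-- The key group-theoretic lemma: a cograph group has no elements of order `pq` and `qr`
with `p < q` and `p, q, r` distinct primes. -/
lemma Lmain {p q r : ℕ} (hp : p.Prime) (hq : q.Prime) (hr : r.Prime)
    (hpq : p ≠ q) (hqr : q ≠ r) (hpr : p ≠ r) (hlt : p < q)
    (hco : IsCograph (powerGraph G))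
    {x y : G} (hx : orderOf x = p * q) (hy : orderOf y = q * r) : False := by
  classical
  haveI : Fact q.Prime := ⟨hq⟩
  set u := x ^ q with hudef
  set z1 := x ^ p with hz1def
  have hu : orderOf u = p := order_pow_part_right hq.pos hx
  have hz1 : orderOf z1 = q := order_pow_part_left hp.pos hx
  have hcuz : Commute u z1 := Commute.pow_pow_self x q p
  -- killing commuting elements of order q outside ⟨z1⟩
  have hkill : ∀ c : G, orderOf c = q → Commute c z1 → c ∉ zpowers z1 → False := by
    intro c hc hccz hcnot
    have hsj : SemiconjBy c⁻¹ u (c⁻¹ * u * c) := by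
      show c⁻¹ * u = (c⁻¹ * u * c) * c⁻¹; group
    have hconj_ord : orderOf (c⁻¹ * u * c) = p := by
      rw [← hsj.orderOf_eq, hu]
    have hcinv : Commute c⁻¹ z1 := hccz.inv_left
    have hconj_commz : Commute (c⁻¹ * u * c) z1 := by
      show (c⁻¹ * u * c) * z1 = z1 * (c⁻¹ * u * c)
      calc c⁻¹ * u * c * z1 = c⁻¹ * u * (c * z1) := by group
        _ = c⁻¹ * u * (z1 * c) := by rw [hccz]
        _ = c⁻¹ * (u * z1) * c := by group
        _ = c⁻¹ * (z1 * u) * c := by rw [hcuz]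
        _ = (c⁻¹ * z1) * u * c := by group
        _ = (z1 * c⁻¹) * u * c := by rw [hcinv]
        _ = z1 * (c⁻¹ * u * c) := by group
    have hmem : c⁻¹ * u * c ∈ zpowers u :=
      unique_small hp hq hpq hco hu hz1 hconj_ord hcuz hconj_commz
    have hcommu : Commute u c := conj_commute_of_small hp hq hlt hu hc hmem
    refine hco _ _ _ _ (P4A hp hq hpq hu hz1 hc hcuz hcommu ?_)
    intro hmemz
    exact hcnot (mem_zpowers_symm hmemz (by rw [hc, hz1]))
  -- killing commuting q-elements outside ⟨z1⟩
  have hkill2 : ∀ h : G, (∃ k, orderOf h = q ^ k) → Commute h z1 →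
      h ∉ zpowers z1 → False := by
    rintro h ⟨k, hk⟩ hcom hnot
    have hne1 : h ≠ 1 := fun e => hnot (e ▸ (zpowers z1).one_mem)
    have hk1 : k ≠ 0 := by
      intro e; rw [e, pow_zero] at hk; exact hne1 (orderOf_eq_one_iff.mp hk)
    have hqpow : q ^ k = q ^ (k - 1) * q := by
      rw [← pow_succ]; congr 1; omega
    have hoc : orderOf (h ^ (q ^ (k - 1))) = q := by
      rw [orderOf_pow, hk, Nat.gcd_eq_right (pow_dvd_pow q (Nat.sub_le k 1)), hqpow,
        Nat.mul_div_cancel_left _ (pow_pos hq.pos _)]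
    have hccom : Commute (h ^ (q ^ (k - 1))) z1 := hcom.pow_left _
    by_cases hcz : h ^ (q ^ (k - 1)) ∈ zpowers z1
    · have hk2 : 2 ≤ k := by
        by_contra h2
        have hke : k = 1 := by omega
        rw [hke] at hcz
        norm_num at hcz
        exact hnot hcz
      have hqpow2 : q ^ k = q ^ (k - 2) * (q * q) := by
        rw [← pow_two, ← pow_add]; congr 1; omega
      have how : orderOf (h ^ (q ^ (k - 2))) = q * q := by
        rw [orderOf_pow, hk, Nat.gcd_eq_right (pow_dvd_pow q (by omega : k - 2 ≤ k)),
          hqpow2, Nat.mul_div_cancel_left _ (pow_pos hq.pos _)]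
      have hcw : h ^ (q ^ (k - 1)) = (h ^ (q ^ (k - 2))) ^ q := by
        rw [← pow_mul, ← pow_succ]; congr 2; omega
      have hz1w : z1 ∈ zpowers (h ^ (q ^ (k - 2))) := by
        have h1 : z1 ∈ zpowers (h ^ (q ^ (k - 1))) :=
          mem_zpowers_symm hcz (by rw [hz1, hoc])
        refine mem_zpowers_trans h1 ?_
        rw [hcw]
        exact mem_zpowers_iff.mpr ⟨(q : ℤ), zpow_natCast _ q⟩
      exact hco _ _ _ _ (P4B hp hq hpq hx how hz1w)
    · exact hkill _ hoc hccom hcz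
  -- Sylow argument
  set z2 := y ^ r with hz2def
  have hz2 : orderOf z2 = q := order_pow_part_right hr.pos hy
  haveI : Finite (Sylow q G) := by infer_instance
  obtain ⟨Q, hQle⟩ := (IsPGroup.of_card
    (by rw [Nat.card_zpowers, hz1, pow_one]) : IsPGroup q (zpowers z1)).exists_le_sylow
  obtain ⟨Q2, hQ2le⟩ := (IsPGroup.of_card
    (by rw [Nat.card_zpowers, hz2, pow_one]) : IsPGroup q (zpowers z2)).exists_le_sylow
  obtain ⟨g, hg⟩ := MulAction.exists_smul_eq G Q2 Q
  have hh0Q : g * z2 * g⁻¹ ∈ (Q : Subgroup G) := by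
    rw [← hg]
    have h1 : z2 ∈ (Q2 : Subgroup G) := hQ2le (mem_zpowers z2)
    have h2 : MulAut.conj g • z2 ∈ MulAut.conj g • (Q2 : Subgroup G) :=
      Subgroup.smul_mem_pointwise_smul _ _ _ h1
    rw [Sylow.coe_subgroup_smul]
    simpa [MulAut.conj_apply] using h2
  have hsj0 : SemiconjBy g z2 (g * z2 * g⁻¹) := by
    show g * z2 = (g * z2 * g⁻¹) * g; group
  have hh0ord : orderOf (g * z2 * g⁻¹) = q := by rw [← hsj0.orderOf_eq, hz2]
  have hz1Q : z1 ∈ (Q : Subgroup G) := hQle (mem_zpowers z1)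
  by_cases hcase : g * z2 * g⁻¹ ∈ zpowers z1
  · -- shared subgroup: use P4C with the conjugate of y
    have hsjy : SemiconjBy g y (g * y * g⁻¹) := by
      show g * y = (g * y * g⁻¹) * g; group
    have hy' : orderOf (g * y * g⁻¹) = q * r := by rw [← hsjy.orderOf_eq, hy]
    have hyr : (g * y * g⁻¹) ^ r = g * z2 * g⁻¹ := by
      rw [conj_pow, hz2def]
    have hmem : z1 ∈ zpowers (g * y * g⁻¹) := by
      refine mem_zpowers_trans (mem_zpowers_symm hcase (by rw [hh0ord, hz1])) ?_
      rw [← hyr]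
      exact mem_zpowers_iff.mpr ⟨(r : ℤ), zpow_natCast _ r⟩
    exact hco _ _ _ _ (P4C hp hq hr hpq hqr hpr hx hy' hmem)
  · -- center argument inside Q
    haveI hnt : Nontrivial ↥(Q : Subgroup G) := by
      refine ⟨⟨⟨z1, hz1Q⟩, 1, ?_⟩⟩
      intro e
      have he : z1 = 1 := congrArg Subtype.val e
      rw [he, orderOf_one] at hz1; exact hq.ne_one hz1.symm
    haveI := IsPGroup.center_nontrivial Q.isPGroup'
    obtain ⟨ζ, hζ⟩ := exists_ne (1 : Subgroup.center ↥(Q : Subgroup G))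
    have hw0Q : ((ζ : ↥(Q : Subgroup G)) : G) ∈ (Q : Subgroup G) :=
      (ζ : ↥(Q : Subgroup G)).2
    have hw0ne : ((ζ : ↥(Q : Subgroup G)) : G) ≠ 1 := by
      intro e
      exact hζ (Subtype.ext (Subtype.ext e))
    have hw0comm : ∀ a : G, a ∈ (Q : Subgroup G) →
        Commute ((ζ : ↥(Q : Subgroup G)) : G) a := by
      intro a ha
      have h1 := Subgroup.mem_center_iff.mp ζ.2 ⟨a, ha⟩
      have h2 := congrArg Subtype.val h1
      exact (show a * _ = _ * a from h2).symm
    have hw0pow : ∃ k, orderOf ((ζ : ↥(Q : Subgroup G)) : G) = q ^ k := by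
      obtain ⟨k, hk⟩ := Q.isPGroup' (ζ : ↥(Q : Subgroup G))
      have h1 : ((ζ : ↥(Q : Subgroup G)) : G) ^ (q ^ k) = 1 := by
        exact_mod_cast congrArg Subtype.val hk
      obtain ⟨j, _, he⟩ := (Nat.dvd_prime_pow hq).mp (orderOf_dvd_of_pow_eq_one h1)
      exact ⟨j, he⟩
    by_cases hwz : ((ζ : ↥(Q : Subgroup G)) : G) ∈ zpowers z1
    · -- z1 is central in Q; kill the conjugate of z2
      have how0 : orderOf ((ζ : ↥(Q : Subgroup G)) : G) = q := by
        have hdvd : orderOf ((ζ : ↥(Q : Subgroup G)) : G) ∣ q := by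
          have h1 := orderOf_dvd_of_mem_zpowers hwz
          rwa [hz1] at h1
        rcases hq.eq_one_or_self_of_dvd _ hdvd with h1 | h1
        · exact absurd (orderOf_eq_one_iff.mp h1) hw0ne
        · exact h1
      have hz1w0 : z1 ∈ zpowers ((ζ : ↥(Q : Subgroup G)) : G) :=
        mem_zpowers_symm hwz (by rw [hz1, how0])
      have hcomm_h0_z1 : Commute (g * z2 * g⁻¹) z1 := by
        obtain ⟨iz, hiz⟩ := mem_zpowers_iff.mp hz1w0
        exact hiz ▸ ((hw0comm _ hh0Q).symm.zpow_right iz)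
      exact hkill _ hh0ord hcomm_h0_z1 hcase
    · exact hkill2 _ hw0pow (hw0comm z1 hz1Q) hwz


lemma prime_adj_def {a b : ℕ} :
    (primeGraph G).Adj a b ↔ a ≠ b ∧ a.Prime ∧ b.Prime ∧ ∃ g : G, orderOf g = a * b :=
  Iff.rfl

end PGStar


theorem prime_graph_component_is_star
    {G : Type*} [Group G] [Finite G]
    (hco : IsCograph (powerGraph G))
    {a b m : ℕ} (hadj : (primeGraph G).Adj a b)
    (hm : m.Prime) (hmG : m ∣ Nat.card G)
    (hreach : (primeGraph G).Reachable m a)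
    (hmin : ∀ r : ℕ, r.Prime → (primeGraph G).Reachable m r → m ≤ r) :
    a = m ∨ b = m := by
  classical
  have L : ∀ p q r : ℕ, p.Prime → q.Prime → r.Prime → p ≠ q → q ≠ r → p ≠ r → p < q →
      (∃ x : G, orderOf x = p * q) → (∃ y : G, orderOf y = q * r) → False := by
    rintro p q r hp hq hr h1 h2 h3 h4 ⟨x, hx⟩ ⟨y, hy⟩
    exact PGStar.Lmain hp hq hr h1 h2 h3 h4 hco hx hy
  have claim : ∀ c : ℕ, (primeGraph G).Reachable m c →
      c = m ∨ (primeGraph G).Adj m c := by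
    intro c hreach'
    obtain ⟨w⟩ := hreach'
    have main : ∀ {s t : ℕ} (_ : (primeGraph G).Walk s t),
        (s = m ∨ (primeGraph G).Adj m s) → (t = m ∨ (primeGraph G).Adj m t) := by
      intro s t w
      induction w with
      | nil => exact id
      | @cons s v t hadj' w' ih =>
        intro hs
        apply ih
        rcases hs with rfl | hms
        · exact Or.inr hadj'
        · by_cases hvm : v = m
          · exact Or.inl hvm
          · exfalso
            obtain ⟨hsm_ne, hmp, hsp, hgms⟩ := PGStar.prime_adj_def.mp hms
            obtain ⟨hsv_ne, -, hvp, hgsv⟩ := PGStar.prime_adj_def.mp hadj'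
            have hlt : m < s := lt_of_le_of_ne (hmin s hsp hms.reachable) hsm_ne
            exact L m s v hmp hsp hvp hsm_ne hsv_ne (fun e => hvm e.symm) hlt hgms hgsv
    exact main w (Or.inl rfl)
  rcases claim a hreach with h | hma
  · exact Or.inl h
  · by_cases hbm : b = m
    · exact Or.inr hbm
    · exfalso
      obtain ⟨hab_ne, hap, hbp, hgab⟩ := PGStar.prime_adj_def.mp hadj
      obtain ⟨ham_ne, hmp, hap', hgma⟩ := PGStar.prime_adj_def.mp hma
      have hlt : m < a := lt_of_le_of_ne (hmin a hap' hreach) ham_ne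
      exact L m a b hmp hap' hbp ham_ne hab_ne (fun e => hbm e.symm) hlt hgma hgab
end
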